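/- arXiv:2511.01835 — 9 statements merged into one kernel-verified Lean document; each statement's English description precedes it below -/
import Mathlib

section
/- For every graph G, there exists a 3-edge-coloring c: E(G) → {1,2,3} such that every vertex v is incident to at most ⌈d(v)/2⌉ edges of each color. -/
open Finset

variable {V : Type*} [Fintype V] [DecidableEq V]

/-- A (not necessarily proper) `k`-edge-coloring: a symmetric map giving each edge a color
in `{1, ..., k}`. -/
def EdgeColoring (G : SimpleGraph V) [DecidableRel G.Adj] (k : ℕ) (c : V → V → ℕ) : Prop :=
  (∀ u v, c u v = c v u) ∧ ∀ u v, G.Adj u v → 1 ≤ c u v ∧ c u v ≤ k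

/-- The sum of colors of edges incident to `v`. -/
def sigmaSum (G : SimpleGraph V) [DecidableRel G.Adj] (c : V → V → ℕ) (v : V) : ℕ :=
  ∑ u ∈ G.neighborFinset v, c v u

/-- The number of edges of color `α` incident to `v`. -/
def colorCount (G : SimpleGraph V) [DecidableRel G.Adj] (c : V → V → ℕ) (v : V) (α : ℕ) : ℕ :=
  ((G.neighborFinset v).filter fun u => c v u = α).card

/-- Quasi-majority: each vertex `v` is incident to at most `⌈d(v)/2⌉` edges of each color. -/
def QuasiMajority (G : SimpleGraph V) [DecidableRel G.Adj] (c : V → V → ℕ) : Prop :=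
  ∀ v α, colorCount G c v α ≤ (G.degree v + 1) / 2

/-- Majority: each vertex `v` is incident to at most `d(v)/2` edges of each color. -/
def Majority (G : SimpleGraph V) [DecidableRel G.Adj] (c : V → V → ℕ) : Prop :=
  ∀ v α, 2 * colorCount G c v α ≤ G.degree v

/-- Neighbor sum distinguishing: adjacent vertices get different color sums. -/
def NSD (G : SimpleGraph V) [DecidableRel G.Adj] (c : V → V → ℕ) : Prop :=
  ∀ u v, G.Adj u v → sigmaSum G c u ≠ sigmaSum G c v

/-- A graph is nice if no connected component is isomorphic to `K₂`, equivalently there is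
no edge both of whose endpoints have degree 1. -/
def Nice (G : SimpleGraph V) [DecidableRel G.Adj] : Prop :=
  ¬ ∃ u v, G.Adj u v ∧ G.degree u = 1 ∧ G.degree v = 1

/-- two distinct colors can't both occupy more than half the edges at a vertex -/
lemma bad_card_le_one (G : SimpleGraph V) [DecidableRel G.Adj] (c : V → V → ℕ) (w : V) :
    (({1,2,3} : Finset ℕ).filter fun β => G.degree w < 2 * colorCount G c w β).card ≤ 1 := by
  rw [Finset.card_le_one]
  intro a ha b hb
  by_contra hab
  simp only [mem_filter] at ha hb
  have hdisj : Disjoint ((G.neighborFinset w).filter fun u => c w u = a)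
      ((G.neighborFinset w).filter fun u => c w u = b) := by
    apply Finset.disjoint_filter_filter'
    exact Set.disjoint_left.mpr (fun x hxa hxb => hab (hxa ▸ hxb ▸ rfl))
  have hsub : ((G.neighborFinset w).filter fun u => c w u = a) ∪
      ((G.neighborFinset w).filter fun u => c w u = b) ⊆ G.neighborFinset w := by
    apply Finset.union_subset <;> exact Finset.filter_subset _ _
  have := Finset.card_le_card hsub
  rw [Finset.card_union_of_disjoint hdisj] at this
  rw [SimpleGraph.degree] at *
  unfold colorCount at ha hb
  omega

lemma key : ∀ (n : ℕ) (G : SimpleGraph V) [DecidableRel G.Adj], G.edgeFinset.card = n →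
    ∃ c : V → V → ℕ, EdgeColoring G 3 c ∧ QuasiMajority G c := by
  intro n
  induction n with
  | zero =>
    intro G _ h
    have hbot : G = ⊥ := SimpleGraph.edgeFinset_eq_empty.mp (Finset.card_eq_zero.mp h)
    refine ⟨fun _ _ => 1, ⟨fun _ _ => rfl, fun u v huv => absurd (hbot ▸ huv) (by simp)⟩, ?_⟩
    intro v α
    have : G.neighborFinset v = ∅ := by
      ext x; simp [hbot]
    simp [colorCount, this]
  | succ n ih =>
    intro G _ h
    have hne : G.edgeFinset.Nonempty := Finset.card_pos.mp (by omega)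
    obtain ⟨e, he⟩ := hne
    induction e using Sym2.ind with
    | _ u v =>
    rw [SimpleGraph.mem_edgeFinset, SimpleGraph.mem_edgeSet] at he
    have huv : u ≠ v := he.ne
    -- the graph with edge uv removed
    set G' : SimpleGraph V :=
      { Adj := fun x y => G.Adj x y ∧ ¬((x = u ∧ y = v) ∨ (x = v ∧ y = u)),
        symm := ⟨fun x y ⟨hxy, hn⟩ => ⟨hxy.symm, fun h' => hn (h'.imp And.symm And.symm).symm⟩⟩,
        loopless := ⟨fun x ⟨hxx, _⟩ => G.loopless.irrefl x hxx⟩ } with hG'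
    have hG'adj : ∀ x y, G'.Adj x y ↔ G.Adj x y ∧ ¬((x = u ∧ y = v) ∨ (x = v ∧ y = u)) :=
      fun x y => Iff.rfl
    haveI : DecidableRel G'.Adj := fun x y => by
      rw [hG'adj]; infer_instance
    have hef : G'.edgeFinset = G.edgeFinset.erase s(u, v) := by
      ext e
      induction e using Sym2.ind with
      | _ x y =>
        simp only [SimpleGraph.mem_edgeFinset, SimpleGraph.mem_edgeSet, Finset.mem_erase,
          hG'adj, Sym2.eq_iff, ne_eq]
        tauto
    have hcard : G'.edgeFinset.card = n := by
      rw [hef, Finset.card_erase_of_mem (by simpa using he), h]; rfl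
    obtain ⟨c', hc', hq'⟩ := ih G' hcard
    -- neighbor finsets
    have hnbr_other : ∀ w, w ≠ u → w ≠ v → G'.neighborFinset w = G.neighborFinset w := by
      intro w hwu hwv
      ext x
      simp only [SimpleGraph.mem_neighborFinset, hG'adj]
      constructor
      · exact fun h => h.1
      · intro h; exact ⟨h, by tauto⟩
    have hnbr_u : G'.neighborFinset u = (G.neighborFinset u).erase v := by
      ext x
      simp only [SimpleGraph.mem_neighborFinset, hG'adj, Finset.mem_erase, ne_eq]
      constructor
      · intro ⟨h1, h2⟩; exact ⟨by tauto, h1⟩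
      · intro ⟨h1, h2⟩
        refine ⟨h2, ?_⟩
        rintro (⟨_, rfl⟩ | ⟨rfl, _⟩)
        · exact h1 rfl
        · exact huv rfl
    have hnbr_v : G'.neighborFinset v = (G.neighborFinset v).erase u := by
      ext x
      simp only [SimpleGraph.mem_neighborFinset, hG'adj, Finset.mem_erase, ne_eq]
      constructor
      · intro ⟨h1, h2⟩; exact ⟨by tauto, h1⟩
      · intro ⟨h1, h2⟩
        refine ⟨h2, ?_⟩
        rintro (⟨rfl, _⟩ | ⟨_, rfl⟩)
        · exact huv rfl
        · exact h1 rfl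
    have hdeg_u : G.degree u = G'.degree u + 1 := by
      unfold SimpleGraph.degree
      rw [hnbr_u, Finset.card_erase_of_mem (by simpa using he)]
      have : 0 < (G.neighborFinset u).card := Finset.card_pos.mpr ⟨v, by simpa using he⟩
      omega
    have hdeg_v : G.degree v = G'.degree v + 1 := by
      unfold SimpleGraph.degree
      rw [hnbr_v, Finset.card_erase_of_mem (by simpa using he.symm)]
      have : 0 < (G.neighborFinset v).card := Finset.card_pos.mpr ⟨u, by simpa using he.symm⟩
      omega
    -- choose a good color α
    have hbadu := bad_card_le_one G' c' u
    have hbadv := bad_card_le_one G' c' v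
    set Bu := ({1,2,3} : Finset ℕ).filter fun β => G'.degree u < 2 * colorCount G' c' u β
    set Bv := ({1,2,3} : Finset ℕ).filter fun β => G'.degree v < 2 * colorCount G' c' v β
    have hex : (({1,2,3} : Finset ℕ) \ (Bu ∪ Bv)).Nonempty := by
      rw [← Finset.card_pos]
      have h1 : (Bu ∪ Bv).card ≤ 2 := le_trans (Finset.card_union_le _ _) (by omega)
      have h2 : ({1,2,3} : Finset ℕ).card = 3 := by decide
      have h3 : (({1,2,3} : Finset ℕ) \ (Bu ∪ Bv)).card ≥
          ({1,2,3} : Finset ℕ).card - (Bu ∪ Bv).card := Finset.le_card_sdiff _ _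
      omega
    obtain ⟨α, hα⟩ := hex
    rw [Finset.mem_sdiff, Finset.mem_union, not_or] at hα
    obtain ⟨hα3, hαu, hαv⟩ := hα
    have hαu' : 2 * colorCount G' c' u α ≤ G'.degree u := by
      by_contra hc; exact hαu (Finset.mem_filter.mpr ⟨hα3, by omega⟩)
    have hαv' : 2 * colorCount G' c' v α ≤ G'.degree v := by
      by_contra hc; exact hαv (Finset.mem_filter.mpr ⟨hα3, by omega⟩)
    have hα1 : 1 ≤ α ∧ α ≤ 3 := by
      simp only [Finset.mem_insert, Finset.mem_singleton] at hα3
      omega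
    -- new coloring
    refine ⟨fun x y => if (x = u ∧ y = v) ∨ (x = v ∧ y = u) then α else c' x y, ⟨?_, ?_⟩, ?_⟩
    · intro x y
      by_cases hxy : (x = u ∧ y = v) ∨ (x = v ∧ y = u)
      · simp only [if_pos hxy, if_pos (show (y = u ∧ x = v) ∨ (y = v ∧ x = u) by tauto)]
      · simp only [if_neg hxy, if_neg (show ¬((y = u ∧ x = v) ∨ (y = v ∧ x = u)) by tauto)]
        exact hc'.1 x y
    · intro x y hxy
      by_cases hs : (x = u ∧ y = v) ∨ (x = v ∧ y = u)
      · simp only [if_pos hs]; exact hα1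
      · simp only [if_neg hs]; exact hc'.2 x y ((hG'adj x y).mpr ⟨hxy, hs⟩)
    · intro w β
      by_cases hwu : u = w
      · subst hwu
        have hcnt : colorCount G
            (fun x y => if (x = u ∧ y = v) ∨ (x = v ∧ y = u) then α else c' x y) u β
            = colorCount G' c' u β + (if β = α then 1 else 0) := by
          unfold colorCount
          have hins : G.neighborFinset u = insert v (G'.neighborFinset u) := by
            rw [hnbr_u, Finset.insert_erase (by simpa using he)]
          rw [hins]
          show (Finset.filter (fun x => (if (u = u ∧ x = v) ∨ (u = v ∧ x = u) then α else c' u x) = β)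
              (insert v (G'.neighborFinset u))).card
              = colorCount G' c' u β + (if β = α then 1 else 0)
          rw [Finset.filter_insert]
          have hrest : ∀ x ∈ G'.neighborFinset u,
              (if (u = u ∧ x = v) ∨ (u = v ∧ x = u) then α else c' u x) = c' u x := by
            intro x hx
            rw [hnbr_u, Finset.mem_erase] at hx
            rw [if_neg (by tauto)]
          rw [Finset.filter_congr (fun x hx => by rw [hrest x hx])]
          have hvval : (if (u = u ∧ v = v) ∨ (u = v ∧ v = u) then α else c' u v) = α := by
            rw [if_pos (Or.inl ⟨rfl, rfl⟩)]
          rw [hvval]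
          by_cases hβ : α = β
          · rw [if_pos hβ, if_pos hβ.symm,
              Finset.card_insert_of_notMem (fun hm => by
                have := Finset.mem_of_mem_filter v hm
                rw [hnbr_u, Finset.mem_erase] at this
                exact this.1 rfl)]
            rfl
          · rw [if_neg hβ, if_neg (fun h => hβ h.symm), Nat.add_zero]
            rfl
        rw [hcnt, hdeg_u]
        by_cases hβ : β = α
        · rw [if_pos hβ]
          subst hβ
          omega
        · rw [if_neg hβ]
          have := hq' u β
          omega
      · by_cases hwv : v = w
        · subst hwv
          have hcnt : colorCount G
              (fun x y => if (x = u ∧ y = v) ∨ (x = v ∧ y = u) then α else c' x y) v β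
              = colorCount G' c' v β + (if β = α then 1 else 0) := by
            unfold colorCount
            have hins : G.neighborFinset v = insert u (G'.neighborFinset v) := by
              rw [hnbr_v, Finset.insert_erase (by simpa using he.symm)]
            rw [hins]
            show (Finset.filter (fun x => (if (v = u ∧ x = v) ∨ (v = v ∧ x = u) then α else c' v x) = β)
                (insert u (G'.neighborFinset v))).card
                = colorCount G' c' v β + (if β = α then 1 else 0)
            rw [Finset.filter_insert]
            have hrest : ∀ x ∈ G'.neighborFinset v,
                (if (v = u ∧ x = v) ∨ (v = v ∧ x = u) then α else c' v x) = c' v x := by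
              intro x hx
              rw [hnbr_v, Finset.mem_erase] at hx
              rw [if_neg (by tauto)]
            rw [Finset.filter_congr (fun x hx => by rw [hrest x hx])]
            have hvval : (if (v = u ∧ u = v) ∨ (v = v ∧ u = u) then α else c' v u) = α := by
              rw [if_pos (Or.inr ⟨rfl, rfl⟩)]
            rw [hvval]
            by_cases hβ : α = β
            · rw [if_pos hβ, if_pos hβ.symm,
                Finset.card_insert_of_notMem (fun hm => by
                  have := Finset.mem_of_mem_filter u hm
                  rw [hnbr_v, Finset.mem_erase] at this
                  exact this.1 rfl)]
              rfl
            · rw [if_neg hβ, if_neg (fun h => hβ h.symm), Nat.add_zero]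
              rfl
          rw [hcnt, hdeg_v]
          by_cases hβ : β = α
          · rw [if_pos hβ]
            subst hβ
            omega
          · rw [if_neg hβ]
            have := hq' v β
            omega
        · have hcnt : colorCount G
              (fun x y => if (x = u ∧ y = v) ∨ (x = v ∧ y = u) then α else c' x y) w β
              = colorCount G' c' w β := by
            unfold colorCount
            rw [hnbr_other w (fun h => hwu h.symm) (fun h => hwv h.symm)]
            refine congrArg Finset.card (Finset.filter_congr fun x hx => ?_)
            have hne : ¬((w = u ∧ x = v) ∨ (w = v ∧ x = u)) := by
              rintro (⟨rfl, -⟩ | ⟨rfl, -⟩)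
              · exact hwu rfl
              · exact hwv rfl
            simp only [if_neg hne]
          have hdeg : G.degree w = G'.degree w := by
            unfold SimpleGraph.degree
            rw [hnbr_other w (fun h => hwu h.symm) (fun h => hwv h.symm)]
          rw [hcnt, hdeg]
          exact hq' w β

theorem quasi_majority_three_coloring (G : SimpleGraph V) [DecidableRel G.Adj] :
    ∃ c : V → V → ℕ, EdgeColoring G 3 c ∧ QuasiMajority G c :=
  key G.edgeFinset.card G rfl
end

section
/- Every bipartite graph G with maximum degree at least 2 admits a quasi-majority 2-edge-coloring, and hence its quasi-majority index equals 2. -/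
open Finset

variable {V : Type*} [Fintype V] [DecidableEq V]

namespace QMaux


lemma fin2_aux : ∀ a b c : Fin 2, a ≠ b → (a = c ↔ ¬ b = c) := by decide

lemma even_pred_iff {t : ℕ} (ht : 1 ≤ t) : Even (t-1) ↔ ¬ Even t := by
  rw [Nat.even_sub ht]
  simp

open scoped Classical in
/-- one step of a non-backtracking walk -/
noncomputable def nbStep (G : SimpleGraph V) (prev cur : V) : V :=
  if h : ∃ w, G.Adj cur w ∧ w ≠ prev then h.choose else prev

lemma nbStep_spec {G : SimpleGraph V} {prev cur : V} (h : ∃ w, G.Adj cur w ∧ w ≠ prev) :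
    G.Adj cur (nbStep G prev cur) ∧ nbStep G prev cur ≠ prev := by
  classical
  rw [nbStep, dif_pos h]
  exact h.choose_spec

noncomputable def nbWalkAux (G : SimpleGraph V) (v0 v1 : V) : ℕ → V × V
  | 0 => (v0, v1)
  | (k+1) => ((nbWalkAux G v0 v1 k).2, nbStep G (nbWalkAux G v0 v1 k).1 (nbWalkAux G v0 v1 k).2)

noncomputable def nbWalk (G : SimpleGraph V) (v0 v1 : V) (k : ℕ) : V :=
  (nbWalkAux G v0 v1 k).1

lemma nbWalk_zero (G : SimpleGraph V) (v0 v1 : V) : nbWalk G v0 v1 0 = v0 := rfl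

lemma nbWalk_one (G : SimpleGraph V) (v0 v1 : V) : nbWalk G v0 v1 1 = v1 := rfl

lemma nbWalk_step (G : SimpleGraph V) (v0 v1 : V) (k : ℕ) :
    nbWalk G v0 v1 (k+2) = nbStep G (nbWalk G v0 v1 k) (nbWalk G v0 v1 (k+1)) := by
  show (nbWalkAux G v0 v1 (k+2)).1 = _
  rw [nbWalkAux]
  rfl


lemma exists_good_walk (G : SimpleGraph V) [DecidableRel G.Adj] (hbip : G.Colorable 2)
    (a0 b0 : V) (hab : G.Adj a0 b0) :
    ∃ (n : ℕ) (q : ℕ → V), 1 ≤ n ∧ (∀ k, k < n → G.Adj (q k) (q (k+1))) ∧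
      (∀ k l, k < l → l < n → s(q k, q (k+1)) ≠ s(q l, q (l+1))) ∧
      ((q n = q 0 ∧ Even n ∧ 3 ≤ n ∧ ∀ a b, a < b → b < n → q a ≠ q b) ∨
       (G.degree (q 0) = 1 ∧ G.degree (q n) = 1 ∧ ∀ a b, a < b → b ≤ n → q a ≠ q b)) := by
  classical
  obtain ⟨v0, hv0adj, hstart⟩ :
      ∃ v0, (∃ w, G.Adj v0 w) ∧ ((∃ v, G.degree v = 1) → G.degree v0 = 1) := by
    by_cases h1 : ∃ v, G.degree v = 1
    · obtain ⟨v, hv⟩ := h1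
      refine ⟨v, ?_, fun _ => hv⟩
      rw [← SimpleGraph.degree_pos_iff_exists_adj]
      omega
    · exact ⟨a0, ⟨b0, hab⟩, fun h => absurd h h1⟩
  obtain ⟨v1, hv01⟩ := hv0adj
  set p : ℕ → V := nbWalk G v0 v1 with hpdef
  have hp0 : p 0 = v0 := rfl
  have hp1 : p 1 = v1 := rfl
  have keystep : ∀ k, G.Adj (p k) (p (k+1)) → G.degree (p (k+1)) ≠ 1 →
      G.Adj (p (k+1)) (p (k+2)) ∧ p (k+2) ≠ p k := by
    intro k hadj hdeg
    have hex : ∃ w, G.Adj (p (k+1)) w ∧ w ≠ p k := by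
      have h1 : 0 < G.degree (p (k+1)) :=
        (SimpleGraph.degree_pos_iff_exists_adj _ _).mpr ⟨p k, hadj.symm⟩
      have h2 : 2 ≤ G.degree (p (k+1)) := by omega
      have h3 : ((G.neighborFinset (p (k+1))).erase (p k)).Nonempty := by
        rw [← Finset.card_pos]
        have h4 := Finset.pred_card_le_card_erase (s := G.neighborFinset (p (k+1))) (a := p k)
        rw [SimpleGraph.card_neighborFinset_eq_degree] at h4
        omega
      obtain ⟨w, hw⟩ := h3
      rw [Finset.mem_erase, SimpleGraph.mem_neighborFinset] at hw
      exact ⟨w, hw.2, hw.1⟩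
    have hspec := nbStep_spec hex
    rw [hpdef, nbWalk_step]
    exact hspec
  have chain : ∀ k, (∀ j, 1 ≤ j → j ≤ k → G.degree (p j) ≠ 1) →
      (∀ j, j ≤ k → G.Adj (p j) (p (j+1))) ∧ (∀ j, 1 ≤ j → j ≤ k → p (j+1) ≠ p (j-1)) := by
    intro k
    induction k with
    | zero =>
      intro _
      refine ⟨fun j hj => ?_, fun j h1 h0 => by omega⟩
      have : j = 0 := by omega
      subst this
      rw [hp0, hp1]
      exact hv01
    | succ k ih =>
      intro hdeg
      obtain ⟨ihadj, ihnb⟩ := ih (fun j h1 h2 => hdeg j h1 (h2.trans (Nat.le_succ k)))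
      have hstep := keystep k (ihadj k le_rfl) (hdeg (k+1) (by omega) le_rfl)
      constructor
      · intro j hj
        rcases Nat.lt_or_ge j (k+1) with h | h
        · exact ihadj j (by omega)
        · have : j = k + 1 := by omega
          subst this
          exact hstep.1
      · intro j h1 hj
        rcases Nat.lt_or_ge j (k+1) with h | h
        · exact ihnb j h1 (by omega)
        · have : j = k + 1 := by omega
          subst this
          have : k + 1 - 1 = k := by omega
          rw [this]
          exact hstep.2
  have hstopex : ∃ m, 1 ≤ m ∧ (G.degree (p m) = 1 ∨ ∃ i, i < m ∧ p i = p m) := by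
    obtain ⟨a, b, hne, heq⟩ := Fintype.exists_ne_map_eq_of_card_lt
      (fun i : Fin (Fintype.card V + 1) => p i) (by simp)
    have hne' : (a : ℕ) ≠ (b : ℕ) := fun h => hne (Fin.ext h)
    rcases Nat.lt_or_ge (a : ℕ) (b : ℕ) with h | h
    · exact ⟨b, by omega, Or.inr ⟨a, h, heq⟩⟩
    · exact ⟨a, by omega, Or.inr ⟨b, by omega, heq.symm⟩⟩
  set m := Nat.find hstopex with hmdef
  have hm := Nat.find_spec hstopex
  have hmin : ∀ j, j < m → ¬(1 ≤ j ∧ (G.degree (p j) = 1 ∨ ∃ i, i < j ∧ p i = p j)) :=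
    fun j hj => Nat.find_min hstopex hj
  have hm1 : 1 ≤ m := hm.1
  have hnodeg : ∀ j, 1 ≤ j → j < m → G.degree (p j) ≠ 1 :=
    fun j h1 hj hd => hmin j hj ⟨h1, Or.inl hd⟩
  have hnorep : ∀ i j, i < j → j < m → p i ≠ p j := by
    intro i j hij hj heq
    exact hmin j hj ⟨by omega, Or.inr ⟨i, hij, heq⟩⟩
  obtain ⟨hadjA, hnbA⟩ := chain (m-1) (fun j h1 h2 => hnodeg j h1 (by omega))
  have hadj' : ∀ j, j < m → G.Adj (p j) (p (j+1)) := fun j hj => hadjA j (by omega)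
  have hnb' : ∀ j, 1 ≤ j → j < m → p (j+1) ≠ p (j-1) := fun j h1 hj => hnbA j h1 (by omega)
  by_cases hrep : ∃ i, i < m ∧ p i = p m
  · -- closed case
    obtain ⟨i, him, heq⟩ := hrep
    set n := m - i with hndef
    have hn1 : 1 ≤ n := by omega
    have hne1 : n ≠ 1 := by
      intro h
      have hadji := hadj' i (by omega)
      have : i + 1 = m := by omega
      rw [this, ← heq] at hadji
      exact G.irrefl hadji
    have hne2 : n ≠ 2 := by
      intro h
      refine hnb' (i+1) (by omega) (by omega) ?_
      have h1 : i + 1 + 1 = m := by omega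
      have h2 : i + 1 - 1 = i := by omega
      rw [h1, h2]
      exact heq.symm
    have hn3 : 3 ≤ n := by omega
    have hqadj : ∀ k, k < n → G.Adj (p (i+k)) (p (i+k+1)) := fun k hk => hadj' (i+k) (by omega)
    have hqinj : ∀ a b, a < b → b < n → p (i+a) ≠ p (i+b) :=
      fun a b hab hb => hnorep (i+a) (i+b) (by omega) (by omega)
    have hq0 : p (i + n) = p (i + 0) := by
      have : i + n = m := by omega
      rw [this, Nat.add_zero]
      exact heq.symm
    have hqinj' : ∀ a b, a < n → b < n → p (i+a) = p (i+b) → a = b := by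
      intro a b ha hb h
      rcases lt_trichotomy a b with h' | h' | h'
      · exact absurd h (hqinj a b h' hb)
      · exact h'
      · exact absurd h.symm (hqinj b a h' ha)
    have heven : Even n := by
      obtain ⟨φ⟩ := hbip
      have alt : ∀ k, k ≤ n → (φ (p (i+k)) = φ (p (i+0)) ↔ Even k) := by
        intro k
        induction k with
        | zero => simp
        | succ k ih =>
          intro hk
          have h1 := ih (by omega)
          have h2 : φ (p (i+(k+1))) ≠ φ (p (i+k)) := by
            have := φ.valid (hqadj k (by omega))
            rw [show i + k + 1 = i + (k+1) from by omega] at this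
            exact this.symm
          rw [Nat.even_add_one, ← h1]
          exact fin2_aux _ _ _ h2
      have := (alt n le_rfl).mp (by rw [hq0])
      exact this
    have hdist : ∀ k l, k < l → l < n →
        s(p (i+k), p (i+k+1)) ≠ s(p (i+l), p (i+l+1)) := by
      intro k l hkl hln heq'
      rw [Sym2.eq_iff] at heq'
      have hred : ∀ j, j ≤ n → ∃ j', j' < n ∧ p (i+j) = p (i+j') := by
        intro j hj
        rcases Nat.lt_or_ge j n with h | h
        · exact ⟨j, h, rfl⟩
        · have : j = n := by omega
          subst this
          exact ⟨0, by omega, hq0⟩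
      rcases heq' with ⟨hv, hu⟩ | ⟨hv, hu⟩
      · -- p(i+k) = p(i+l), k < l < n
        have hkl' : k + 1 ≤ n := by omega
        exact absurd hv (hqinj k l hkl hln)
      · -- p(i+k) = p(i+l+1) and p(i+k+1) = p(i+l)
        have h1 : k + 1 < n := by omega
        have h2 : k + 1 = l := by
          apply hqinj' (k+1) l h1 hln
          rw [show i + (k+1) = i + k + 1 from by omega]
          exact hu
        rcases Nat.lt_or_ge (l+1) n with h3 | h3
        · have : k = l + 1 := by
            apply hqinj' k (l+1) (by omega) h3
            rw [show i + (l+1) = i + l + 1 from by omega]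
            exact hv
          omega
        · have h4 : l + 1 = n := by omega
          have : k = 0 := by
            apply hqinj' k 0 (by omega) (by omega)
            rw [hv, show i + l + 1 = i + (l+1) from by omega, h4, hq0]
          omega
    refine ⟨n, fun k => p (i + k), hn1, ?_, ?_, Or.inl ⟨hq0, heven, hn3, hqinj⟩⟩
    · intro k hk
      have := hqadj k hk
      rwa [show i + k + 1 = i + (k+1) from by omega] at this
    · intro k l hkl hln h
      refine hdist k l hkl hln ?_
      rwa [show i + k + 1 = i + (k+1) from by omega,
        show i + l + 1 = i + (l+1) from by omega]
  · -- open case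
    push_neg at hrep
    have hdegm : G.degree (p m) = 1 := by
      rcases hm.2 with h | ⟨i, hi, h⟩
      · exact h
      · exact absurd h (hrep i hi)
    have hinj : ∀ a b, a < b → b ≤ m → p a ≠ p b := by
      intro a b hab hb
      rcases Nat.lt_or_ge b m with h | h
      · exact hnorep a b hab h
      · have : b = m := by omega
        subst this
        exact hrep a hab
    have hdeg0 : G.degree (p 0) = 1 := by
      rw [hp0]
      exact hstart ⟨p m, hdegm⟩
    refine ⟨m, p, hm1, hadj', ?_, Or.inr ⟨hdeg0, hdegm, hinj⟩⟩
    intro k l hkl hln heq'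
    rw [Sym2.eq_iff] at heq'
    rcases heq' with ⟨hv, hu⟩ | ⟨hv, hu⟩
    · exact hinj k l hkl (by omega) hv
    · exact hinj k (l+1) (by omega) (by omega) hv

lemma colorCount_def (G : SimpleGraph V) [DecidableRel G.Adj] (c : V → V → ℕ) (v : V) (α : ℕ) :
    colorCount G c v α = ((G.neighborFinset v).filter fun u => c v u = α).card := rfl

lemma bal : ∀ (N : ℕ) (G : SimpleGraph V) [inst : DecidableRel G.Adj],
    G.edgeFinset.card ≤ N → G.Colorable 2 →
    ∃ c : V → V → ℕ, (∀ u v, c u v = c v u) ∧ (∀ u v, G.Adj u v → c u v = 1 ∨ c u v = 2) ∧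
      ∀ v, colorCount G c v 1 ≤ (G.degree v + 1) / 2 ∧
        colorCount G c v 2 ≤ (G.degree v + 1) / 2 := by
  intro N
  induction N with
  | zero =>
    intro G inst hcard _
    refine ⟨fun _ _ => 1, fun _ _ => rfl, fun _ _ _ => Or.inl rfl, fun v => ?_⟩
    have hno : G.neighborFinset v = ∅ := by
      ext u
      simp only [SimpleGraph.mem_neighborFinset, Finset.notMem_empty, iff_false]
      intro hadj
      have : s(v, u) ∈ G.edgeFinset := SimpleGraph.mem_edgeFinset.mpr hadj
      have h0 : G.edgeFinset = ∅ := Finset.card_eq_zero.mp (by omega)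
      rw [h0] at this
      exact absurd this (Finset.notMem_empty _)
    constructor <;> · rw [colorCount_def, hno]; simp
  | succ N ih =>
    intro G inst hcard hbip
    classical
    by_cases hE : ∃ x y, G.Adj x y
    swap
    · push_neg at hE
      refine ⟨fun _ _ => 1, fun _ _ => rfl, fun _ _ _ => Or.inl rfl, fun v => ?_⟩
      have hno : G.neighborFinset v = ∅ := by
        ext u
        simp only [SimpleGraph.mem_neighborFinset, Finset.notMem_empty, iff_false]
        exact hE v u
      constructor <;> · rw [colorCount_def, hno]; simp
    obtain ⟨x0, y0, hxy⟩ := hE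
    obtain ⟨n, q, hn1, hadj, hdist, hcase⟩ := exists_good_walk G hbip x0 y0 hxy
    set S : Finset (Sym2 V) := (Finset.range n).image (fun k => s(q k, q (k+1))) with hSdef
    set G' : SimpleGraph V := G.deleteEdges ↑S with hG'def
    have hG'adj : ∀ x y, G'.Adj x y ↔ (G.Adj x y ∧ s(x,y) ∉ S) := by
      intro x y
      rw [hG'def, SimpleGraph.deleteEdges_adj]
      simp
    haveI instG' : DecidableRel G'.Adj :=
      fun x y => decidable_of_iff (G.Adj x y ∧ s(x,y) ∉ S) (hG'adj x y).symm
    have hG'le : G' ≤ G := G.deleteEdges_le _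
    have hbip' : G'.Colorable 2 := hbip.mono_left hG'le
    have hSedge : ∀ e, e ∈ S → e ∈ G.edgeSet := by
      intro e he
      rw [hSdef, Finset.mem_image] at he
      obtain ⟨k, hk, rfl⟩ := he
      exact hadj k (Finset.mem_range.mp hk)
    have hcard' : G'.edgeFinset.card ≤ N := by
      have hsub : G'.edgeFinset ⊆ G.edgeFinset :=
        SimpleGraph.edgeFinset_subset_edgeFinset.mpr hG'le
      have hmem0 : s(q 0, q 1) ∈ G.edgeFinset := SimpleGraph.mem_edgeFinset.mpr (hadj 0 hn1)
      have hnmem0 : s(q 0, q 1) ∉ G'.edgeFinset := by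
        rw [SimpleGraph.mem_edgeFinset, SimpleGraph.mem_edgeSet, hG'adj]
        rintro ⟨-, hS⟩
        exact hS (Finset.mem_image.mpr ⟨0, Finset.mem_range.mpr hn1, rfl⟩)
      have : G'.edgeFinset.card < G.edgeFinset.card :=
        Finset.card_lt_card ⟨hsub, fun h2 => hnmem0 (h2 hmem0)⟩
      omega
    obtain ⟨c', hsym', hmem', hcnt'⟩ := ih G' hcard' hbip'
    set c : V → V → ℕ := fun x y =>
      if ∃ k, k < n ∧ Even k ∧ s(x, y) = s(q k, q (k+1)) then 1
      else if ∃ k, k < n ∧ ¬ Even k ∧ s(x, y) = s(q k, q (k+1)) then 2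
      else c' x y with hcdef
    have hsym : ∀ u v, c u v = c v u := by
      intro u v
      simp only [hcdef]
      rw [Sym2.eq_swap (a := u) (b := v)]
      exact (hsym' u v) ▸ rfl
    have colE : ∀ j, j < n → ∀ x y, s(x,y) = s(q j, q (j+1)) →
        c x y = if Even j then 1 else 2 := by
      intro j hj x y hxy
      by_cases hje : Even j
      · simp only [hcdef]
        rw [if_pos ⟨j, hj, hje, hxy⟩, if_pos hje]
      · have h1 : ¬ ∃ k, k < n ∧ Even k ∧ s(x,y) = s(q k, q (k+1)) := by
          rintro ⟨k, hk, hke, hxy'⟩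
          have heq2 : s(q k, q (k+1)) = s(q j, q (j+1)) := hxy'.symm.trans hxy
          have hkj : k ≠ j := fun h => hje (h ▸ hke)
          rcases Nat.lt_or_ge k j with h | h
          · exact hdist k j h hj heq2
          · exact hdist j k (by omega) hk heq2.symm
        simp only [hcdef]
        rw [if_neg h1, if_pos ⟨j, hj, hje, hxy⟩, if_neg hje]
    have cnotS : ∀ x y, s(x,y) ∉ S → c x y = c' x y := by
      intro x y hxS
      simp only [hcdef]
      rw [if_neg, if_neg]
      · rintro ⟨k, hk, -, hxy⟩
        exact hxS (by rw [hSdef, Finset.mem_image]; exact ⟨k, Finset.mem_range.mpr hk, hxy.symm⟩)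
      · rintro ⟨k, hk, -, hxy⟩
        exact hxS (by rw [hSdef, Finset.mem_image]; exact ⟨k, Finset.mem_range.mpr hk, hxy.symm⟩)
    have hSmem : ∀ x y, s(x,y) ∈ S ↔ ∃ k, k < n ∧ s(x,y) = s(q k, q (k+1)) := by
      intro x y
      rw [hSdef, Finset.mem_image]
      constructor
      · rintro ⟨k, hk, h⟩
        exact ⟨k, Finset.mem_range.mp hk, h.symm⟩
      · rintro ⟨k, hk, h⟩
        exact ⟨k, Finset.mem_range.mpr hk, h.symm⟩
    have hmem2 : ∀ u v, G.Adj u v → c u v = 1 ∨ c u v = 2 := by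
      intro u v huv
      by_cases hS : s(u,v) ∈ S
      · obtain ⟨k, hk, he⟩ := (hSmem u v).mp hS
        rw [colE k hk u v he]
        by_cases hek : Even k
        · left; rw [if_pos hek]
        · right; rw [if_neg hek]
      · rw [cnotS u v hS]
        exact hmem' u v ((hG'adj u v).mpr ⟨huv, hS⟩)
    have hNB' : ∀ v, G'.neighborFinset v =
        (G.neighborFinset v).filter (fun u => s(v,u) ∉ S) := by
      intro v
      ext u
      simp only [SimpleGraph.mem_neighborFinset, Finset.mem_filter, hG'adj]
    have hsplit : ∀ v α, colorCount G c v α = colorCount G' c' v α +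
        (((G.neighborFinset v).filter (fun u => s(v,u) ∈ S)).filter (fun u => c v u = α)).card := by
      intro v α
      rw [colorCount_def, colorCount_def]
      have h1 : colorCount G' c' v α -- dummy
          = 0 ∨ True := Or.inr trivial
      have hpart : G.neighborFinset v =
          (G.neighborFinset v).filter (fun u => s(v,u) ∈ S) ∪
          (G.neighborFinset v).filter (fun u => ¬ s(v,u) ∈ S) :=
        (Finset.filter_union_filter_not_eq _ _).symm
      conv_lhs => rw [hpart]
      rw [Finset.filter_union, Finset.card_union_of_disjoint]
      · have h2 : ((G.neighborFinset v).filter (fun u => ¬ s(v,u) ∈ S)).filter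
            (fun u => c v u = α) = (G'.neighborFinset v).filter (fun u => c' v u = α) := by
          rw [hNB' v]
          apply Finset.filter_congr
          intro u hu
          rw [Finset.mem_filter] at hu
          rw [cnotS v u hu.2]
        rw [h2]
        omega
      · exact Finset.disjoint_filter_filter (Finset.disjoint_filter_filter_not _ _ _)
    have hdegsplit : ∀ v, G.degree v = G'.degree v +
        ((G.neighborFinset v).filter (fun u => s(v,u) ∈ S)).card := by
      intro v
      rw [← SimpleGraph.card_neighborFinset_eq_degree, ← SimpleGraph.card_neighborFinset_eq_degree,
        hNB' v]
      have := Finset.card_filter_add_card_filter_not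
        (s := G.neighborFinset v) (p := fun u => s(v,u) ∈ S)
      omega
    refine ⟨c, hsym, hmem2, ?_⟩
    intro v
    set T := (G.neighborFinset v).filter (fun u => s(v,u) ∈ S) with hTdef
    have hTmem : ∀ u, u ∈ T ↔ G.Adj v u ∧ ∃ k, k < n ∧ s(v,u) = s(q k, q (k+1)) := by
      intro u
      rw [hTdef, Finset.mem_filter, SimpleGraph.mem_neighborFinset, hSmem]
    -- helper closing out the arithmetic once we know T and the filtered cards
    have finish : (T.filter (fun u => c v u = 1)).card ≤ 1 →
        (T.filter (fun u => c v u = 2)).card ≤ 1 → T.card = 2 →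
        colorCount G c v 1 ≤ (G.degree v + 1) / 2 ∧
        colorCount G c v 2 ≤ (G.degree v + 1) / 2 := by
      intro hf1 hf2 hT2
      have e1 := hsplit v 1
      have e2 := hsplit v 2
      have ed := hdegsplit v
      have b1 := (hcnt' v).1
      have b2 := (hcnt' v).2
      rw [← hTdef] at e1 e2 ed
      omega
    -- generic fact: if T = {x, y} with different colors, filters are small
    have pairfilter : ∀ (x y : V), c v x ≠ c v y → ∀ α,
        (({x, y} : Finset V).filter (fun u => c v u = α)).card ≤ 1 := by
      intro x y hne α
      by_cases hxy : x = y
      · rw [hxy]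
        have : ({y, y} : Finset V) = {y} := by ext u; simp
        rw [this, Finset.filter_singleton]
        split_ifs <;> simp
      · rw [Finset.filter_insert, Finset.filter_singleton]
        split_ifs with h1 h2 h2
        · exact absurd (h1.trans h2.symm) hne
        · simp [hxy]
        · simp
        · simp
    by_cases hvq : ∃ t, t ≤ n ∧ q t = v
    · obtain ⟨t0, ht0n, ht0q⟩ := hvq
      rcases hcase with ⟨hclosed, heven, hn3, hinj⟩ | ⟨hd0, hdn, hinj⟩
      · -- closed walk case
        obtain ⟨t, htn, htq⟩ : ∃ t, t < n ∧ q t = v := by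
          rcases Nat.lt_or_ge t0 n with h | h
          · exact ⟨t0, h, ht0q⟩
          · have hh : t0 = n := by omega
            exact ⟨0, by omega, by rw [← hclosed, ← hh]; exact ht0q⟩
        have hqinj' : ∀ a b, a < n → b < n → q a = q b → a = b := by
          intro a b ha hb h
          rcases lt_trichotomy a b with h' | h' | h'
          · exact absurd h (hinj a b h' hb)
          · exact h'
          · exact absurd h.symm (hinj b a h' ha)
        set t' := if t = 0 then n - 1 else t - 1 with ht'def
        have ht'n : t' < n := by rw [ht'def]; split_ifs <;> omega
        have hedge2 : s(v, q t') = s(q t', q (t'+1)) := by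
          rw [ht'def]
          split_ifs with h0
          · rw [show n - 1 + 1 = n from by omega, hclosed]
            have hq0v : q 0 = v := by rw [← h0]; exact htq
            rw [hq0v]
            exact Sym2.eq_swap
          · rw [show t - 1 + 1 = t from by omega, htq]
            exact Sym2.eq_swap
        have hadjv : G.Adj v (q (t+1)) := by rw [← htq]; exact hadj t htn
        have hadjv' : G.Adj v (q t') := by
          have h := hadj t' ht'n
          rw [← SimpleGraph.mem_edgeSet] at h ⊢
          rw [hedge2]
          exact h
        have hTeq : T = {q (t+1), q t'} := by
          ext u
          rw [hTmem, Finset.mem_insert, Finset.mem_singleton]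
          constructor
          · rintro ⟨hadjvu, k, hk, hsy⟩
            rw [Sym2.eq_iff] at hsy
            rcases hsy with ⟨hv1, hu1⟩ | ⟨hv1, hu1⟩
            · left
              have hh : k = t := hqinj' k t hk htn (hv1.symm.trans htq.symm)
              rw [hu1, hh]
            · right
              by_cases hk1 : k + 1 < n
              · have hkt : k + 1 = t := hqinj' (k+1) t hk1 htn (hv1.symm.trans htq.symm)
                rw [hu1, ht'def, if_neg (by omega)]
                congr 1
                omega
              · have hk1' : k + 1 = n := by omega
                have hv0 : q 0 = v := by rw [← hclosed, ← hk1']; exact hv1.symm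
                have htt : t = 0 := hqinj' t 0 htn (by omega) (htq.trans hv0.symm)
                rw [hu1, ht'def, if_pos htt]
                congr 1
                omega
          · intro hu
            rcases hu with hu | hu
            · refine ⟨hu ▸ hadjv, t, htn, ?_⟩
              rw [hu, ← htq]
            · refine ⟨hu ▸ hadjv', t', ht'n, ?_⟩
              rw [hu]
              exact hedge2
        have hne12 : q (t+1) ≠ q t' := by
          intro h
          by_cases h1 : t + 1 < n
          · have hh := hqinj' (t+1) t' h1 ht'n h
            rw [ht'def] at hh
            split_ifs at hh <;> omega
          · have h1' : t + 1 = n := by omega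
            have h2 : q 0 = q t' := by rw [← hclosed, ← h1']; exact h
            have hh := hqinj' 0 t' (by omega) ht'n h2
            rw [ht'def] at hh
            split_ifs at hh <;> omega
        have hc1 : c v (q (t+1)) = if Even t then 1 else 2 :=
          colE t htn v _ (by rw [← htq])
        have hc2 : c v (q t') = if Even t' then 1 else 2 := colE t' ht'n v _ hedge2
        have hpar : Even t' ↔ ¬ Even t := by
          rw [ht'def]
          split_ifs with h0
          · rw [even_pred_iff (by omega)]
            simp [heven, h0]
          · exact even_pred_iff (by omega)
        have hcne : c v (q (t+1)) ≠ c v (q t') := by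
          rw [hc1, hc2]
          by_cases he : Even t
          · rw [if_pos he, if_neg (by simp [hpar, he])]
            omega
          · rw [if_neg he, if_pos (hpar.mpr he)]
            omega
        have hT2 : T.card = 2 := by
          rw [hTeq, Finset.card_insert_of_notMem (by simp [hne12]), Finset.card_singleton]
        refine finish ?_ ?_ hT2
        · rw [hTeq]; exact pairfilter _ _ hcne 1
        · rw [hTeq]; exact pairfilter _ _ hcne 2
      · -- open walk case
        have hqinj' : ∀ a b, a ≤ n → b ≤ n → q a = q b → a = b := by
          intro a b ha hb h
          rcases lt_trichotomy a b with h' | h' | h'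
          · exact absurd h (hinj a b h' hb)
          · exact h'
          · exact absurd h.symm (hinj b a h' ha)
        by_cases hend : t0 = 0 ∨ t0 = n
        · have hdv : G.degree v = 1 := by
            rcases hend with h | h
            · rw [← ht0q, h]; exact hd0
            · rw [← ht0q, h]; exact hdn
          have hb : ∀ α, colorCount G c v α ≤ 1 := by
            intro α
            rw [colorCount_def]
            calc ((G.neighborFinset v).filter fun u => c v u = α).card
                ≤ (G.neighborFinset v).card := Finset.card_filter_le _ _
              _ = 1 := by rw [SimpleGraph.card_neighborFinset_eq_degree, hdv]
          exact ⟨by have := hb 1; omega, by have := hb 2; omega⟩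
        · push_neg at hend
          have ht1 : 1 ≤ t0 ∧ t0 < n := by
            constructor
            · omega
            · rcases Nat.lt_or_ge t0 n with h | h
              · exact h
              · exact absurd (by omega : t0 = n) hend.2
          have hedge2 : s(v, q (t0-1)) = s(q (t0-1), q (t0-1+1)) := by
            rw [show t0 - 1 + 1 = t0 from by omega, ht0q]
            exact Sym2.eq_swap
          have hadjv : G.Adj v (q (t0+1)) := by rw [← ht0q]; exact hadj t0 (by omega)
          have hadjv' : G.Adj v (q (t0-1)) := by
            have h := hadj (t0-1) (by omega)
            rw [← SimpleGraph.mem_edgeSet] at h ⊢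
            rw [hedge2]
            exact h
          have hTeq : T = {q (t0+1), q (t0-1)} := by
            ext u
            rw [hTmem, Finset.mem_insert, Finset.mem_singleton]
            constructor
            · rintro ⟨hadjvu, k, hk, hsy⟩
              rw [Sym2.eq_iff] at hsy
              rcases hsy with ⟨hv1, hu1⟩ | ⟨hv1, hu1⟩
              · left
                have hh : k = t0 := hqinj' k t0 (by omega) (by omega) (hv1.symm.trans ht0q.symm)
                rw [hu1, hh]
              · right
                have hh : k + 1 = t0 := hqinj' (k+1) t0 (by omega) (by omega)
                  (hv1.symm.trans ht0q.symm)
                rw [hu1]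
                congr 1
                omega
            · intro hu
              rcases hu with hu | hu
              · refine ⟨hu ▸ hadjv, t0, by omega, ?_⟩
                rw [hu, ← ht0q]
              · refine ⟨hu ▸ hadjv', t0 - 1, by omega, ?_⟩
                rw [hu]
                exact hedge2
          have hne12 : q (t0+1) ≠ q (t0-1) := fun h => by
            have hh := hqinj' (t0+1) (t0-1) (by omega) (by omega) h
            omega
          have hc1 : c v (q (t0+1)) = if Even t0 then 1 else 2 :=
            colE t0 (by omega) v _ (by rw [← ht0q])
          have hc2 : c v (q (t0-1)) = if Even (t0-1) then 1 else 2 :=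
            colE (t0-1) (by omega) v _ hedge2
          have hcne : c v (q (t0+1)) ≠ c v (q (t0-1)) := by
            rw [hc1, hc2]
            by_cases he : Even t0
            · rw [if_pos he, if_neg (by simp [even_pred_iff (show 1 ≤ t0 by omega), he])]
              omega
            · rw [if_neg he, if_pos ((even_pred_iff (show 1 ≤ t0 by omega)).mpr he)]
              omega
          have hT2 : T.card = 2 := by
            rw [hTeq, Finset.card_insert_of_notMem (by simp [hne12]), Finset.card_singleton]
          refine finish ?_ ?_ hT2
          · rw [hTeq]; exact pairfilter _ _ hcne 1
          · rw [hTeq]; exact pairfilter _ _ hcne 2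
    · -- v not on the walk
      have hT0 : T = ∅ := by
        rw [Finset.eq_empty_iff_forall_notMem]
        intro u hu
        rw [hTmem] at hu
        obtain ⟨-, k, hk, hsy⟩ := hu
        rw [Sym2.eq_iff] at hsy
        rcases hsy with ⟨hv1, -⟩ | ⟨hv1, -⟩
        · exact hvq ⟨k, by omega, hv1.symm⟩
        · exact hvq ⟨k+1, by omega, hv1.symm⟩
      have e1 := hsplit v 1
      have e2 := hsplit v 2
      have ed := hdegsplit v
      rw [← hTdef] at e1 e2 ed
      have hf1 : (T.filter (fun u => c v u = 1)).card = 0 := by rw [hT0]; simp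
      have hf2 : (T.filter (fun u => c v u = 2)).card = 0 := by rw [hT0]; simp
      have hc0 : T.card = 0 := by rw [hT0]; exact Finset.card_empty
      have b1 := (hcnt' v).1
      have b2 := (hcnt' v).2
      constructor <;> omega

end QMaux

theorem bipartite_qm_index_two (G : SimpleGraph V) [DecidableRel G.Adj]
    (hbip : G.Colorable 2) (hdeg : 2 ≤ G.maxDegree) :
    IsLeast {k : ℕ | ∃ c : V → V → ℕ, EdgeColoring G k c ∧ QuasiMajority G c} 2 := by
  constructor
  · obtain ⟨c, hsym, hmem, hcnt⟩ := QMaux.bal G.edgeFinset.card G le_rfl hbip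
    refine ⟨c, ⟨hsym, fun u v huv => ?_⟩, fun v α => ?_⟩
    · rcases hmem u v huv with h | h <;> omega
    · by_cases hα : α = 1
      · subst hα; exact (hcnt v).1
      by_cases hα2 : α = 2
      · subst hα2; exact (hcnt v).2
      have h0 : colorCount G c v α = 0 := by
        rw [QMaux.colorCount_def, Finset.card_eq_zero, Finset.eq_empty_iff_forall_notMem]
        intro u hu
        rw [Finset.mem_filter, SimpleGraph.mem_neighborFinset] at hu
        rcases hmem v u hu.1 with h | h
        · exact hα (hu.2.symm.trans h)
        · exact hα2 (hu.2.symm.trans h)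
      rw [h0]
      exact Nat.zero_le _
  · rintro k ⟨c, ⟨hsym, hmem⟩, hqm⟩
    by_contra hlt
    push_neg at hlt
    have hne : Nonempty V := by
      by_contra h
      rw [not_nonempty_iff] at h
      have h0 : G.maxDegree = 0 := by
        simp [SimpleGraph.maxDegree]
      omega
    obtain ⟨v, hv⟩ := G.exists_maximal_degree_vertex
    rw [hv] at hdeg
    have hdv : 0 < G.degree v := by omega
    obtain ⟨u, hu⟩ := (SimpleGraph.degree_pos_iff_exists_adj _ _).mp hdv
    have h1 := hmem v u hu
    have hk1 : k = 1 := by omega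
    have hall : ∀ w ∈ G.neighborFinset v, c v w = 1 := by
      intro w hw
      have := hmem v w ((SimpleGraph.mem_neighborFinset _ _ _).mp hw)
      omega
    have hcc : colorCount G c v 1 = G.degree v := by
      rw [QMaux.colorCount_def, Finset.filter_true_of_mem hall,
        SimpleGraph.card_neighborFinset_eq_degree]
    have := hqm v 1
    omega
end

section
/- Let G be a nice graph (no connected component isomorphic to K_2) with no two adjacent vertices of the same degree. If G admits a quasi-majority 2-edge-coloring, then G admits a quasi-majority neighbor sum distinguishing 2-edge-coloring. -/
open Finset

variable {V : Type*} [Fintype V] [DecidableEq V]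

lemma sigma_eq (G : SimpleGraph V) [DecidableRel G.Adj] (c : V → V → ℕ)
    (hc : EdgeColoring G 2 c) (v : V) :
    sigmaSum G c v = G.degree v + colorCount G c v 2 := by
  unfold sigmaSum colorCount
  rw [← SimpleGraph.card_neighborFinset_eq_degree, Finset.card_filter, Finset.card_eq_sum_ones,
    ← Finset.sum_add_distrib]
  apply Finset.sum_congr rfl
  intro u hu
  rw [SimpleGraph.mem_neighborFinset] at hu
  have h1 := (hc.2 v u hu).1
  have h2 := (hc.2 v u hu).2
  by_cases h : c v u = 2 <;> simp [h] <;> omega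

lemma count_sum (G : SimpleGraph V) [DecidableRel G.Adj] (c : V → V → ℕ)
    (hc : EdgeColoring G 2 c) (v : V) :
    colorCount G c v 1 + colorCount G c v 2 = G.degree v := by
  unfold colorCount
  rw [← SimpleGraph.card_neighborFinset_eq_degree]
  rw [← Finset.card_union_of_disjoint]
  · congr 1
    rw [← Finset.filter_or]
    apply Finset.filter_true_of_mem
    intro u hu
    rw [SimpleGraph.mem_neighborFinset] at hu
    have := hc.2 v u hu
    omega
  · rw [Finset.disjoint_filter]
    intro u _ h1
    omega

theorem qm_two_coloring_to_qmnsd (G : SimpleGraph V) [DecidableRel G.Adj]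
    (hnice : Nice G) (hdeg : ∀ u v, G.Adj u v → G.degree u ≠ G.degree v)
    (h : ∃ c : V → V → ℕ, EdgeColoring G 2 c ∧ QuasiMajority G c) :
    ∃ c : V → V → ℕ, EdgeColoring G 2 c ∧ QuasiMajority G c ∧ NSD G c := by
  obtain ⟨c, hc, hqm⟩ := h
  refine ⟨c, hc, hqm, ?_⟩
  intro u v huv
  have hd := hdeg u v huv
  have hsu := sigma_eq G c hc u
  have hsv := sigma_eq G c hc v
  have h2u := hqm u 2
  have h2v := hqm v 2
  have h1u := hqm u 1
  have h1v := hqm v 1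
  have hcu := count_sum G c hc u
  have hcv := count_sum G c hc v
  omega
end

section
/- Let G be a nice graph with no two adjacent vertices of the same degree. If G admits an interval edge-coloring (a proper edge-coloring in which the colors at each vertex form a set of consecutive integers), then G admits a quasi-majority neighbor sum distinguishing 2-edge-coloring. -/
open Finset

variable {V : Type*} [Fintype V] [DecidableEq V]

/-- An interval coloring: a symmetric edge-coloring with positive integers which is proper
at every vertex and whose colors at each vertex form an interval of consecutive integers. -/
def IntervalColoring (G : SimpleGraph V) [DecidableRel G.Adj] (c : V → V → ℕ) : Prop :=
  (∀ u v, c u v = c v u) ∧ (∀ u v, G.Adj u v → 1 ≤ c u v) ∧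
    (∀ v u w, G.Adj v u → G.Adj v w → c v u = c v w → u = w) ∧
    ∀ v, G.degree v ≠ 0 →
      ∃ a, (G.neighborFinset v).image (fun u => c v u) = Finset.Icc a (a + G.degree v - 1)


def evenDeg (G : SimpleGraph V) [DecidableRel G.Adj] (φ : V → V → ℕ) (v : V) : ℕ :=
  ((G.neighborFinset v).filter (fun u => φ v u % 2 = 0)).card

lemma evenCount_Ico (a d : ℕ) :
    ((Finset.Ico a (a+d)).filter (fun n => n % 2 = 0)).card = (a+d+1)/2 - (a+1)/2 := by
  induction d with
  | zero => simp
  | succ d ih =>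
    have h1 : a + (d+1) = (a+d) + 1 := by omega
    rw [h1, Nat.Ico_succ_right_eq_insert_Ico (by omega), Finset.filter_insert]
    by_cases h : (a+d) % 2 = 0
    · rw [if_pos h, Finset.card_insert_of_notMem (by simp), ih]; omega
    · rw [if_neg h, ih]; omega

theorem interval_coloring_to_qmnsd (G : SimpleGraph V) [DecidableRel G.Adj]
    (hnice : Nice G) (hdeg : ∀ u v, G.Adj u v → G.degree u ≠ G.degree v)
    (h : ∃ c : V → V → ℕ, IntervalColoring G c) :
    ∃ c : V → V → ℕ, EdgeColoring G 2 c ∧ QuasiMajority G c ∧ NSD G c := by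
  obtain ⟨φ, hsym, hpos, hinj, hint⟩ := h
  set c : V → V → ℕ := fun u v => if φ u v % 2 = 0 then 2 else 1 with hc
  -- bounds on evenDeg
  have hEb : ∀ v, G.degree v / 2 ≤ evenDeg G φ v ∧ evenDeg G φ v ≤ (G.degree v + 1) / 2 := by
    intro v
    by_cases hd : G.degree v = 0
    · have hS : G.neighborFinset v = ∅ := by
        rw [← Finset.card_eq_zero, G.card_neighborFinset_eq_degree, hd]
      simp [evenDeg, hS, hd]
    · obtain ⟨a, himg⟩ := hint v hd
      have hIcc : Finset.Icc a (a + G.degree v - 1) = Finset.Ico a (a + G.degree v) := by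
        rw [← Finset.Ico_add_one_right_eq_Icc]
        congr 1
        omega
      have hinjOn : Set.InjOn (fun u => φ v u) (G.neighborFinset v) := by
        intro x hx y hy hxy
        exact hinj v x y (by simpa using hx) (by simpa using hy) hxy
      have hcard : evenDeg G φ v
          = ((Finset.Ico a (a + G.degree v)).filter (fun n => n % 2 = 0)).card := by
        rw [evenDeg, ← hIcc, ← himg, Finset.filter_image,
          Finset.card_image_of_injOn (hinjOn.mono (Finset.filter_subset _ _))]
      rw [hcard, evenCount_Ico]
      omega
  -- sigma sum formula
  have hsig : ∀ v, sigmaSum G c v = G.degree v + evenDeg G φ v := by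
    intro v
    have hh : ∀ u ∈ G.neighborFinset v, c v u = 1 + (if φ v u % 2 = 0 then 1 else 0) := by
      intro u _
      simp only [hc]
      split <;> rfl
    rw [sigmaSum, Finset.sum_congr rfl hh, Finset.sum_add_distrib, Finset.sum_const,
      smul_eq_mul, mul_one, G.card_neighborFinset_eq_degree, ← Finset.card_filter, evenDeg]
  refine ⟨c, ⟨fun u v => by simp only [hc, hsym u v], fun u v _ => by
    simp only [hc]; split <;> omega⟩, ?_, ?_⟩
  · -- quasi-majority
    intro v α
    have h2 : colorCount G c v 2 = evenDeg G φ v := by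
      unfold colorCount evenDeg
      congr 1
      apply Finset.filter_congr
      intro u _
      simp only [hc]
      split <;> simp_all
    have h1 : colorCount G c v 1 + evenDeg G φ v = G.degree v := by
      have hpart := Finset.card_filter_add_card_filter_not
        (s := G.neighborFinset v) (p := fun u => φ v u % 2 = 0)
      rw [G.card_neighborFinset_eq_degree] at hpart
      have hh : colorCount G c v 1 =
          ((G.neighborFinset v).filter (fun u => ¬ φ v u % 2 = 0)).card := by
        unfold colorCount
        congr 1
        apply Finset.filter_congr
        intro u _
        simp only [hc]
        split <;> simp_all
      rw [hh, evenDeg]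
      omega
    rcases eq_or_ne α 1 with rfl | hα1
    · have := hEb v; omega
    rcases eq_or_ne α 2 with rfl | hα2
    · have := hEb v; omega
    · have hz : colorCount G c v α = 0 := by
        unfold colorCount
        rw [Finset.card_eq_zero, Finset.filter_eq_empty_iff]
        intro u _
        simp only [hc]
        split <;> omega
      omega
  · -- NSD
    intro u v huv
    rw [hsig, hsig]
    have hdu := hEb u
    have hdv := hEb v
    have hne := hdeg u v huv
    omega
end

section
/- For every odd integer n = 2k+1 ≥ 3, the complete graph K_{2k+1} admits a quasi-majority neighbor sum distinguishing 3-edge-coloring in which exactly k vertices are incident to k−1 edges of color 2 and exactly k+1 vertices are incident to k edges of color 2. -/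
open Finset

variable {V : Type*} [Fintype V] [DecidableEq V]

section Aux

lemma count_Ico_mod2 (r a : ℕ) (hr : r < 2) :
    ∀ b, a ≤ b → ((Finset.Ico a b).filter (fun j => j % 2 = r)).card
      = (b + 1 - r) / 2 - (a + 1 - r) / 2 := by
  intro b hab
  induction b, hab using Nat.le_induction with
  | base => rw [Finset.Ico_self]; simp
  | succ b hab ih =>
    rw [Nat.Ico_succ_right_eq_insert_Ico hab, Finset.filter_insert]
    by_cases h : b % 2 = r
    · rw [if_pos h, Finset.card_insert_of_notMem (by simp), ih]
      omega
    · rw [if_neg h, ih]; omega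

lemma count_range_mod2 (r b : ℕ) (hr : r < 2) :
    ((Finset.range b).filter (fun j => j % 2 = r)).card = (b + 1 - r) / 2 := by
  rw [Finset.range_eq_Ico, count_Ico_mod2 r 0 hr b (Nat.zero_le b)]
  omega

lemma count_range_mod2_ge (r a b : ℕ) (hr : r < 2) (hab : a ≤ b) :
    ((Finset.range b).filter (fun j => j % 2 = r ∧ a ≤ j)).card
      = (b + 1 - r) / 2 - (a + 1 - r) / 2 := by
  rw [← count_Ico_mod2 r a hr b hab]
  congr 1
  ext j
  simp only [Finset.mem_filter, Finset.mem_range, Finset.mem_Ico]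
  omega

lemma card_filter_fin (n : ℕ) (Q : ℕ → Prop) [DecidablePred Q] :
    ((Finset.univ : Finset (Fin n)).filter (fun v => Q v.val)).card
      = ((Finset.range n).filter Q).card := by
  rw [Finset.card_filter, Finset.card_filter,
    ← Fin.sum_univ_eq_sum_range (fun j => if Q j then 1 else 0) n]

lemma sum_of_three {α : Type*} [DecidableEq α] (s : Finset α) (g : α → ℕ)
    (hg : ∀ a ∈ s, 1 ≤ g a ∧ g a ≤ 3) :
    ∑ a ∈ s, g a = (s.filter (fun a => g a = 1)).card
      + 2 * (s.filter (fun a => g a = 2)).card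
      + 3 * (s.filter (fun a => g a = 3)).card := by
  induction s using Finset.induction_on with
  | empty => simp
  | insert _ _ ha _ =>
    rename_i a s ih
    have hga : 1 ≤ g a ∧ g a ≤ 3 := hg a (Finset.mem_insert_self a s)
    have ih' := ih (fun x hx => hg x (Finset.mem_insert_of_mem hx))
    rw [Finset.sum_insert ha, ih', Finset.filter_insert, Finset.filter_insert,
      Finset.filter_insert]
    have hna : ∀ (p : α → Prop) [DecidablePred p], a ∉ s.filter p :=
      fun p _ h => ha (Finset.mem_filter.1 h).1
    split_ifs <;> (try simp only [Finset.card_insert_of_notMem (hna _)]) <;> omega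

end Aux

section Main

/-- the coloring -/
def ccol (k : ℕ) : Fin (2*k+1) → Fin (2*k+1) → ℕ := fun u v =>
  if (u.val + v.val) % 2 = 1 then (if 2*k+1 ≤ u.val + v.val then 3 else 1) else 2

variable (k : ℕ)

lemma nbhd_filter (v : Fin (2*k+1)) (p : Fin (2*k+1) → Prop) [DecidablePred p] :
    ((⊤ : SimpleGraph (Fin (2*k+1))).neighborFinset v).filter p
      = Finset.univ.filter (fun u => v.val ≠ u.val ∧ p u) := by
  rw [SimpleGraph.neighborFinset_eq_filter, Finset.filter_filter]
  apply Finset.filter_congr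
  intro u _
  simp [SimpleGraph.top_adj, Fin.ext_iff]

lemma colorCount_formula (v : Fin (2*k+1)) (α : ℕ) :
    colorCount (⊤ : SimpleGraph (Fin (2*k+1))) (ccol k) v α =
      ((Finset.range (2*k+1)).filter
        (fun j => v.val ≠ j ∧
          (if (v.val + j) % 2 = 1 then (if 2*k+1 ≤ v.val + j then 3 else 1) else 2) = α)).card := by
  rw [colorCount, nbhd_filter]
  exact card_filter_fin (2*k+1) (fun j => v.val ≠ j ∧
    (if (v.val + j) % 2 = 1 then (if 2*k+1 ≤ v.val + j then 3 else 1) else 2) = α)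

lemma colorCount3 (v : Fin (2*k+1)) :
    colorCount (⊤ : SimpleGraph (Fin (2*k+1))) (ccol k) v 3 = (v.val + 1) / 2 := by
  rw [colorCount_formula]
  set i := v.val with hi
  have hiv : i ≤ 2*k := by have := v.isLt; omega
  set r := (i+1) % 2 with hr
  have h1 : ((Finset.range (2*k+1)).filter
      (fun j => i ≠ j ∧
        (if (i + j) % 2 = 1 then (if 2*k+1 ≤ i + j then 3 else 1) else 2) = 3)).card
      = ((Finset.range (2*k+1)).filter (fun j => j % 2 = r ∧ 2*k+1-i ≤ j)).card := by
    congr 1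
    apply Finset.filter_congr
    intro j _
    constructor
    · rintro ⟨hne, hcol⟩
      split_ifs at hcol with h2 h3 <;> omega
    · rintro ⟨hp, hge⟩
      have hodd : (i + j) % 2 = 1 := by omega
      have hge' : 2*k+1 ≤ i + j := by omega
      refine ⟨by omega, ?_⟩
      rw [if_pos hodd, if_pos hge']
  rw [h1, count_range_mod2_ge r (2*k+1-i) (2*k+1) (by omega) (by omega)]
  omega

lemma colorCount1 (v : Fin (2*k+1)) :
    colorCount (⊤ : SimpleGraph (Fin (2*k+1))) (ccol k) v 1 = k - v.val / 2 := by
  rw [colorCount_formula]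
  set i := v.val with hi
  have hiv : i ≤ 2*k := by have := v.isLt; omega
  set r := (i+1) % 2 with hr
  have key : ((Finset.range (2*k+1)).filter
        (fun j => i ≠ j ∧
          (if (i + j) % 2 = 1 then (if 2*k+1 ≤ i + j then 3 else 1) else 2) = 1)).card
      + ((Finset.range (2*k+1)).filter (fun j => j % 2 = r ∧ 2*k+1-i ≤ j)).card
      = ((Finset.range (2*k+1)).filter (fun j => j % 2 = r)).card := by
    have e1 : ((Finset.range (2*k+1)).filter
        (fun j => i ≠ j ∧
          (if (i + j) % 2 = 1 then (if 2*k+1 ≤ i + j then 3 else 1) else 2) = 1)).card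
        = ((Finset.range (2*k+1)).filter (fun j => j % 2 = r ∧ ¬ (2*k+1-i ≤ j))).card := by
      congr 1
      apply Finset.filter_congr
      intro j _
      constructor
      · rintro ⟨hne, hcol⟩
        split_ifs at hcol with h2 h3 <;> omega
      · rintro ⟨hp, hlt⟩
        have hodd : (i + j) % 2 = 1 := by omega
        have hlt' : ¬ 2*k+1 ≤ i + j := by omega
        refine ⟨by omega, ?_⟩
        rw [if_pos hodd, if_neg hlt']
    have e2 : ((Finset.range (2*k+1)).filter (fun j => j % 2 = r ∧ ¬ (2*k+1-i ≤ j))).card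
        + ((Finset.range (2*k+1)).filter (fun j => j % 2 = r ∧ 2*k+1-i ≤ j)).card
        = ((Finset.range (2*k+1)).filter (fun j => j % 2 = r)).card := by
      rw [← Finset.filter_filter, ← Finset.filter_filter, Nat.add_comm]
      exact Finset.card_filter_add_card_filter_not (p := fun j => 2*k+1-i ≤ j)
    rw [e1]; exact e2
  rw [count_range_mod2 r (2*k+1) (by omega),
      count_range_mod2_ge r (2*k+1-i) (2*k+1) (by omega) (by omega)] at key
  omega



lemma colorCount2' (v : Fin (2*k+1)) :
    colorCount (⊤ : SimpleGraph (Fin (2*k+1))) (ccol k) v 2 = k - v.val % 2 := by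
  rw [colorCount_formula]
  set i := v.val with hi
  have hiv : i ≤ 2*k := by have := v.isLt; omega
  have h1 : ((Finset.range (2*k+1)).filter
      (fun j => i ≠ j ∧
        (if (i + j) % 2 = 1 then (if 2*k+1 ≤ i + j then 3 else 1) else 2) = 2)).card
      = ((Finset.range (2*k+1)).filter (fun j => i ≠ j ∧ j % 2 = i % 2)).card := by
    congr 1
    apply Finset.filter_congr
    intro j _
    constructor
    · rintro ⟨hne, hcol⟩
      split_ifs at hcol with h2 h3 <;> omega
    · rintro ⟨hne, hp⟩
      have heven : ¬ (i + j) % 2 = 1 := by omega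
      exact ⟨hne, by rw [if_neg heven]⟩
  have h2 : ((Finset.range (2*k+1)).filter (fun j => i ≠ j ∧ j % 2 = i % 2)).card + 1
      = ((Finset.range (2*k+1)).filter (fun j => j % 2 = i % 2)).card := by
    have hins : (Finset.range (2*k+1)).filter (fun j => j % 2 = i % 2)
        = insert i ((Finset.range (2*k+1)).filter (fun j => i ≠ j ∧ j % 2 = i % 2)) := by
      ext j
      simp only [Finset.mem_insert, Finset.mem_filter, Finset.mem_range]
      constructor
      · rintro ⟨hj, hp⟩
        by_cases h : i = j
        · exact Or.inl h.symm
        · exact Or.inr ⟨hj, h, hp⟩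
      · rintro (h | ⟨hj, hne, hp⟩)
        · subst h; exact ⟨by omega, rfl⟩
        · exact ⟨hj, hp⟩
    rw [hins, Finset.card_insert_of_notMem (by simp)]
  rw [h1]
  rw [count_range_mod2 (i % 2) (2*k+1) (by omega)] at h2
  omega

lemma colorCount_other (v : Fin (2*k+1)) (α : ℕ) (hα : α ≠ 1 ∧ α ≠ 2 ∧ α ≠ 3) :
    colorCount (⊤ : SimpleGraph (Fin (2*k+1))) (ccol k) v α = 0 := by
  rw [colorCount_formula, Finset.card_eq_zero, Finset.filter_eq_empty_iff]
  intro j _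
  rintro ⟨hne, hcol⟩
  split_ifs at hcol <;> omega

lemma degree_top' (v : Fin (2*k+1)) :
    (⊤ : SimpleGraph (Fin (2*k+1))).degree v = 2*k := by
  have h : (⊤ : SimpleGraph (Fin (2*k+1))).degree v
      = (((⊤ : SimpleGraph (Fin (2*k+1))).neighborFinset v).filter (fun _ => True)).card := by
    rw [Finset.filter_true]
    rfl
  rw [h, nbhd_filter, card_filter_fin (2*k+1) (fun j => v.val ≠ j ∧ True)]
  have hers : (Finset.range (2*k+1)).filter (fun j => v.val ≠ j ∧ True)
      = (Finset.range (2*k+1)).erase v.val := by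
    ext j
    simp only [Finset.mem_filter, Finset.mem_range, Finset.mem_erase, and_true]
    constructor
    · rintro ⟨h1, h2⟩; exact ⟨fun h => h2 h.symm, h1⟩
    · rintro ⟨h1, h2⟩; exact ⟨h2, fun h => h1 h.symm⟩
  rw [hers, Finset.card_erase_of_mem (Finset.mem_range.2 v.isLt)]
  simp

lemma ccol_bounds (u v : Fin (2*k+1)) : 1 ≤ ccol k u v ∧ ccol k u v ≤ 3 := by
  unfold ccol; split_ifs <;> omega

lemma sigma_formula (v : Fin (2*k+1)) :
    sigmaSum (⊤ : SimpleGraph (Fin (2*k+1))) (ccol k) v = 3*k + v.val := by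
  have hsplit := sum_of_three ((⊤ : SimpleGraph (Fin (2*k+1))).neighborFinset v)
    (fun u => ccol k v u) (fun u _ => ccol_bounds k v u)
  have h1 := colorCount1 k v
  have h2 := colorCount2' k v
  have h3 := colorCount3 k v
  rw [colorCount] at h1 h2 h3
  rw [sigmaSum, hsplit, h1, h2, h3]
  have hiv : v.val ≤ 2*k := by have := v.isLt; omega
  omega

theorem complete_odd_qmnsd (k : ℕ) (hk : 1 ≤ k) :
    ∃ c : Fin (2 * k + 1) → Fin (2 * k + 1) → ℕ,
      EdgeColoring (⊤ : SimpleGraph (Fin (2 * k + 1))) 3 c ∧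
      QuasiMajority (⊤ : SimpleGraph (Fin (2 * k + 1))) c ∧
      NSD (⊤ : SimpleGraph (Fin (2 * k + 1))) c ∧
      (Finset.univ.filter fun v =>
        colorCount (⊤ : SimpleGraph (Fin (2 * k + 1))) c v 2 = k - 1).card = k ∧
      (Finset.univ.filter fun v =>
        colorCount (⊤ : SimpleGraph (Fin (2 * k + 1))) c v 2 = k).card = k + 1 := by
  refine ⟨ccol k, ⟨fun u v => by unfold ccol; rw [Nat.add_comm], fun u v _ => ccol_bounds k u v⟩,
    ?_, ?_, ?_, ?_⟩
  · -- QuasiMajority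
    intro v α
    rw [degree_top']
    have hb : (2*k+1)/2 = k := by omega
    have hiv : v.val ≤ 2*k := by have := v.isLt; omega
    by_cases h1 : α = 1
    · subst h1; rw [colorCount1]; omega
    by_cases h2 : α = 2
    · subst h2; rw [colorCount2']; omega
    by_cases h3 : α = 3
    · subst h3; rw [colorCount3]; omega
    rw [colorCount_other k v α ⟨h1, h2, h3⟩]; omega
  · -- NSD
    intro u v huv
    rw [sigma_formula, sigma_formula]
    have : u ≠ v := (SimpleGraph.top_adj u v).1 huv
    have : u.val ≠ v.val := fun h => this (Fin.ext h)
    omega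
  · -- k-1 count
    have he : (Finset.univ.filter fun v =>
        colorCount (⊤ : SimpleGraph (Fin (2 * k + 1))) (ccol k) v 2 = k - 1)
        = Finset.univ.filter (fun v : Fin (2*k+1) => v.val % 2 = 1) := by
      apply Finset.filter_congr
      intro v _
      rw [colorCount2']
      have : v.val % 2 ≤ 1 := by omega
      omega
    rw [he, card_filter_fin (2*k+1) (fun j => j % 2 = 1),
      count_range_mod2 1 (2*k+1) (by omega)]
    omega
  · -- k count
    have he : (Finset.univ.filter fun v =>
        colorCount (⊤ : SimpleGraph (Fin (2 * k + 1))) (ccol k) v 2 = k)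
        = Finset.univ.filter (fun v : Fin (2*k+1) => v.val % 2 = 0) := by
      apply Finset.filter_congr
      intro v _
      rw [colorCount2']
      have : v.val % 2 ≤ 1 := by omega
      omega
    rw [he, card_filter_fin (2*k+1) (fun j => j % 2 = 0),
      count_range_mod2 0 (2*k+1) (by omega)]
    omega

end Main
end

section
/- For every even integer n = 2k ≥ 4, the complete graph K_{2k} admits a quasi-majority neighbor sum distinguishing 3-edge-coloring in which at least k−1 vertices are incident to at most k−1 edges of color 2. -/
set_option linter.all false


open Finset

variable {V : Type*} [Fintype V] [DecidableEq V]

/-! ### Auxiliary construction -/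

/-- The color of the "sum position" `s`: positions below `2k` alternate 1 (odd) / 2 (even),
positions at least `2k` alternate 3 (even) / 2 (odd), with small corrections:
for odd `k` the positions `2k-2, 2k-1` are swapped to `1, 2` and position `3k` becomes 3;
for even `k` position `3k-1` becomes 3. -/
def gcol (k s : ℕ) : ℕ :=
  if s < 2*k then
    if k % 2 = 1 ∧ 2*k - 2 ≤ s then (if s % 2 = 0 then 1 else 2)
    else (if s % 2 = 1 then 1 else 2)
  else if s % 2 = 0 ∨ s = 3*k - 1 + k % 2 then 3 else 2

lemma gcol_mem (k s : ℕ) : gcol k s = 1 ∨ gcol k s = 2 ∨ gcol k s = 3 := by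
  unfold gcol; split_ifs <;> simp

/-- Prefix counting function for `gcol`. -/
def Fc (k α b : ℕ) : ℕ := ∑ s ∈ range b, if gcol k s = α then 1 else 0

lemma F1_closed (k : ℕ) (hk : 2 ≤ k) (b : ℕ) :
    Fc k 1 b = (min b (2*k - 2*(k%2)))/2 + (if k%2 = 1 ∧ 2*k-2 < b then 1 else 0) := by
  induction b with
  | zero => simp [Fc]
  | succ b ih =>
    rw [Fc, Finset.sum_range_succ, ← Fc, ih]
    unfold gcol
    split_ifs <;> omega

lemma F3_closed (k : ℕ) (hk : 2 ≤ k) (b : ℕ) :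
    Fc k 3 b = (b - min b (2*k) + 1)/2 + (if 3*k - 1 + k%2 < b then 1 else 0) := by
  induction b with
  | zero => simp [Fc]
  | succ b ih =>
    rw [Fc, Finset.sum_range_succ, ← Fc, ih]
    unfold gcol
    split_ifs <;> omega

lemma F_total (k : ℕ) (b : ℕ) : Fc k 1 b + Fc k 2 b + Fc k 3 b = b := by
  induction b with
  | zero => simp [Fc]
  | succ b ih =>
    rw [Fc, Fc, Fc, Finset.sum_range_succ, Finset.sum_range_succ, Finset.sum_range_succ,
      ← Fc, ← Fc, ← Fc]
    rcases gcol_mem k b with h | h | h <;> rw [h] <;> simp <;> omega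

lemma nbr_top (n : ℕ) (v : Fin n) :
    (⊤ : SimpleGraph (Fin n)).neighborFinset v = univ.erase v := by
  ext u
  simp [SimpleGraph.mem_neighborFinset, Finset.mem_erase, eq_comm]

lemma key_s6 (k : ℕ) (α : ℕ) (v : Fin (2*k)) :
    colorCount (⊤ : SimpleGraph (Fin (2*k))) (fun u w => gcol k (u.val + w.val)) v α
      + (if gcol k (v.val + v.val) = α then 1 else 0) + Fc k α v.val
      = Fc k α (v.val + 2*k) := by
  rw [colorCount, nbr_top, Finset.card_filter,
    Finset.sum_erase_add _ _ (Finset.mem_univ v)]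
  rw [show (∑ u : Fin (2*k), if gcol k (v.val + u.val) = α then 1 else 0)
      = ∑ u ∈ range (2*k), if gcol k (v.val + u) = α then 1 else 0 from
    Fin.sum_univ_eq_sum_range (fun u => if gcol k (v.val + u) = α then 1 else 0) (2*k)]
  simp only [Fc]
  rw [Finset.sum_range_add]
  exact Nat.add_comm _ _

lemma gcol_diag (k m : ℕ) (hk : 2 ≤ k) :
    gcol k (m + m) = if m + m < 2*k then (if k%2 = 1 ∧ m+m = 2*k-2 then 1 else 2) else 3 := by
  unfold gcol; split_ifs <;> omega

set_option maxHeartbeats 1000000 in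
lemma counts1 (k : ℕ) (hk : 2 ≤ k) (v : Fin (2*k)) :
    colorCount (⊤ : SimpleGraph (Fin (2*k))) (fun u w => gcol k (u.val + w.val)) v 1
      = k - v.val/2 - (if k%2 = 1 ∧ (v.val = k-1 ∨ v.val = 2*k-1) then 1 else 0) := by
  have hm : v.val < 2*k := v.isLt
  have K1 := key_s6 k 1 v
  rw [F1_closed k hk v.val, F1_closed k hk (v.val + 2*k), gcol_diag k v.val hk] at K1
  generalize hX : colorCount (⊤ : SimpleGraph (Fin (2*k))) (fun u w => gcol k (u.val + w.val)) v 1 = x at K1 ⊢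
  generalize hM : v.val = m at K1 hm ⊢
  split_ifs at K1 ⊢ <;> omega

set_option maxHeartbeats 1000000 in
lemma counts3 (k : ℕ) (hk : 2 ≤ k) (v : Fin (2*k)) :
    colorCount (⊤ : SimpleGraph (Fin (2*k))) (fun u w => gcol k (u.val + w.val)) v 3
      = (v.val+1)/2 - (if k%2 = 1 ∧ v.val = k then 1 else 0) := by
  have hm : v.val < 2*k := v.isLt
  have K3 := key_s6 k 3 v
  rw [F3_closed k hk v.val, F3_closed k hk (v.val + 2*k), gcol_diag k v.val hk] at K3
  generalize hX : colorCount (⊤ : SimpleGraph (Fin (2*k))) (fun u w => gcol k (u.val + w.val)) v 3 = x at K3 ⊢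
  generalize hM : v.val = m at K3 hm ⊢
  split_ifs at K3 ⊢ <;> omega

set_option maxHeartbeats 1000000 in
lemma cnt_total (k : ℕ) (hk : 2 ≤ k) (v : Fin (2*k)) :
    colorCount (⊤ : SimpleGraph (Fin (2*k))) (fun u w => gcol k (u.val + w.val)) v 1
      + colorCount (⊤ : SimpleGraph (Fin (2*k))) (fun u w => gcol k (u.val + w.val)) v 2
      + colorCount (⊤ : SimpleGraph (Fin (2*k))) (fun u w => gcol k (u.val + w.val)) v 3
      = 2*k - 1 := by
  have hm : v.val < 2*k := v.isLt
  have K1 := key_s6 k 1 v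
  have K2 := key_s6 k 2 v
  have K3 := key_s6 k 3 v
  have Ta := F_total k v.val
  have Tb := F_total k (v.val + 2*k)
  generalize hX1 : colorCount (⊤ : SimpleGraph (Fin (2*k))) (fun u w => gcol k (u.val + w.val)) v 1 = x1 at K1 ⊢
  generalize hX2 : colorCount (⊤ : SimpleGraph (Fin (2*k))) (fun u w => gcol k (u.val + w.val)) v 2 = x2 at K2 ⊢
  generalize hX3 : colorCount (⊤ : SimpleGraph (Fin (2*k))) (fun u w => gcol k (u.val + w.val)) v 3 = x3 at K3 ⊢
  rcases gcol_mem k (v.val + v.val) with h | h | h <;>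
    rw [h] at K1 K2 K3 <;> norm_num at K1 K2 K3 <;> omega

set_option maxHeartbeats 1000000 in
lemma counts2 (k : ℕ) (hk : 2 ≤ k) (v : Fin (2*k)) :
    colorCount (⊤ : SimpleGraph (Fin (2*k))) (fun u w => gcol k (u.val + w.val)) v 2
      = k - 1 - v.val % 2
        + (if k%2 = 1 ∧ (v.val = k-1 ∨ v.val = k ∨ v.val = 2*k-1) then 1 else 0) := by
  have hm : v.val < 2*k := v.isLt
  have h1 := counts1 k hk v
  have h3 := counts3 k hk v
  have ht := cnt_total k hk v
  generalize hX1 : colorCount (⊤ : SimpleGraph (Fin (2*k))) (fun u w => gcol k (u.val + w.val)) v 1 = x1 at h1 ht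
  generalize hX2 : colorCount (⊤ : SimpleGraph (Fin (2*k))) (fun u w => gcol k (u.val + w.val)) v 2 = x2 at ht ⊢
  generalize hX3 : colorCount (⊤ : SimpleGraph (Fin (2*k))) (fun u w => gcol k (u.val + w.val)) v 3 = x3 at h3 ht
  generalize hM : v.val = m at h1 h3 hm ⊢
  split_ifs at h1 h3 ⊢ <;> omega

/-- The value of `sigmaSum` at a vertex with value `m`. -/
def sigmaVal (k m : ℕ) : ℕ :=
  3*k - 2 + m + (if k%2 = 1 ∧ m = k-1 then 1 else 0) + (if k%2 = 1 ∧ m = 2*k-1 then 1 else 0)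
    - (if k%2 = 1 ∧ m = k then 1 else 0)

lemma sigma_decomp (k : ℕ) (v : Fin (2*k)) :
    sigmaSum (⊤ : SimpleGraph (Fin (2*k))) (fun u w => gcol k (u.val + w.val)) v
      = colorCount (⊤ : SimpleGraph (Fin (2*k))) (fun u w => gcol k (u.val + w.val)) v 1
        + 2 * colorCount (⊤ : SimpleGraph (Fin (2*k))) (fun u w => gcol k (u.val + w.val)) v 2
        + 3 * colorCount (⊤ : SimpleGraph (Fin (2*k))) (fun u w => gcol k (u.val + w.val)) v 3 := by
  rw [sigmaSum, colorCount, colorCount, colorCount, Finset.card_filter, Finset.card_filter,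
    Finset.card_filter, Finset.mul_sum, Finset.mul_sum, ← Finset.sum_add_distrib,
    ← Finset.sum_add_distrib]
  refine Finset.sum_congr rfl fun u _ => ?_
  rcases gcol_mem k (v.val + u.val) with h | h | h <;> simp [h]

set_option maxHeartbeats 1000000 in
lemma sigma_eq_s6 (k : ℕ) (hk : 2 ≤ k) (v : Fin (2*k)) :
    sigmaSum (⊤ : SimpleGraph (Fin (2*k))) (fun u w => gcol k (u.val + w.val)) v
      = sigmaVal k v.val := by
  have hm : v.val < 2*k := v.isLt
  have h1 := counts1 k hk v
  have h2 := counts2 k hk v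
  have h3 := counts3 k hk v
  rw [sigma_decomp, h1, h2, h3]
  unfold sigmaVal
  generalize hM : v.val = m at hm ⊢
  split_ifs <;> omega

set_option maxHeartbeats 2000000 in
theorem complete_even_qmnsd (k : ℕ) (hk : 2 ≤ k) :
    ∃ c : Fin (2 * k) → Fin (2 * k) → ℕ,
      EdgeColoring (⊤ : SimpleGraph (Fin (2 * k))) 3 c ∧
      QuasiMajority (⊤ : SimpleGraph (Fin (2 * k))) c ∧
      NSD (⊤ : SimpleGraph (Fin (2 * k))) c ∧
      k - 1 ≤ (Finset.univ.filter fun v =>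
        colorCount (⊤ : SimpleGraph (Fin (2 * k))) c v 2 ≤ k - 1).card := by
  refine ⟨fun u w => gcol k (u.val + w.val),
    ⟨fun u v => by show gcol k (u.val + v.val) = gcol k (v.val + u.val); rw [Nat.add_comm],
    fun u v _ => by
      show 1 ≤ gcol k (u.val + v.val) ∧ gcol k (u.val + v.val) ≤ 3
      rcases gcol_mem k (u.val + v.val) with h | h | h <;> omega⟩, ?_, ?_, ?_⟩
  · -- QuasiMajority
    intro v α
    have hdeg : ((⊤ : SimpleGraph (Fin (2*k))).degree v + 1) / 2 = k := by
      rw [SimpleGraph.complete_graph_degree, Fintype.card_fin]; omega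
    rw [hdeg]
    have h1 := counts1 k hk v
    have h2 := counts2 k hk v
    have h3 := counts3 k hk v
    have hm : v.val < 2*k := v.isLt
    generalize hX1 : colorCount (⊤ : SimpleGraph (Fin (2*k))) (fun u w => gcol k (u.val + w.val)) v 1 = x1 at h1
    generalize hX2 : colorCount (⊤ : SimpleGraph (Fin (2*k))) (fun u w => gcol k (u.val + w.val)) v 2 = x2 at h2
    generalize hX3 : colorCount (⊤ : SimpleGraph (Fin (2*k))) (fun u w => gcol k (u.val + w.val)) v 3 = x3 at h3
    by_cases e1 : α = 1
    · subst e1; rw [hX1]; split_ifs at h1 <;> omega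
    by_cases e2 : α = 2
    · subst e2; rw [hX2]; split_ifs at h2 <;> omega
    by_cases e3 : α = 3
    · subst e3; rw [hX3]; split_ifs at h3 <;> omega
    · have : colorCount (⊤ : SimpleGraph (Fin (2*k))) (fun u w => gcol k (u.val + w.val)) v α
          = 0 := by
        rw [colorCount, Finset.card_eq_zero, Finset.filter_eq_empty_iff]
        intro u _
        rcases gcol_mem k (v.val + u.val) with h | h | h <;> simp [h] <;> omega
      omega
  · -- NSD
    intro u v hadj
    rw [SimpleGraph.top_adj] at hadj
    rw [sigma_eq_s6 k hk u, sigma_eq_s6 k hk v]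
    intro h
    apply hadj
    apply Fin.ext
    have hu : u.val < 2*k := u.isLt
    have hv : v.val < 2*k := v.isLt
    unfold sigmaVal at h
    split_ifs at h <;> omega
  · -- many vertices with few color-2 edges
    have hw : k - 1 < 2*k := by omega
    have hsub : Finset.univ.erase (⟨k-1, hw⟩ : Fin (2*k)) ⊆ Finset.univ.filter fun v =>
        colorCount (⊤ : SimpleGraph (Fin (2*k))) (fun u w => gcol k (u.val + w.val)) v 2
          ≤ k - 1 := by
      intro u hu
      rw [Finset.mem_erase] at hu
      rw [Finset.mem_filter]
      refine ⟨Finset.mem_univ _, ?_⟩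
      have h2 := counts2 k hk u
      have hne : u.val ≠ k - 1 := by
        intro h
        exact hu.1 (Fin.ext h)
      have hm : u.val < 2*k := u.isLt
      generalize hX2 : colorCount (⊤ : SimpleGraph (Fin (2*k))) (fun u w => gcol k (u.val + w.val)) u 2 = x2 at h2 ⊢
      split_ifs at h2 <;> omega
    calc k - 1 ≤ (Finset.univ.erase (⟨k-1, hw⟩ : Fin (2*k))).card := by
          rw [Finset.card_erase_of_mem (Finset.mem_univ _), Finset.card_univ, Fintype.card_fin]
          omega
      _ ≤ _ := Finset.card_le_card hsub
end

section
/- For every n ≥ 3, the quasi-majority neighbor sum distinguishing index of the complete graph K_n equals 3; in particular, K_n has a quasi-majority NSD 3-edge-coloring but no quasi-majority NSD 2-edge-coloring. -/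
open Finset

variable {V : Type*} [Fintype V] [DecidableEq V]

namespace QMNSD

def gcol (m x : ℕ) : ℕ := if x % 2 = 0 then 2 else if x < m then 1 else 3
def hcol (n j : ℕ) : ℕ := if j + 2 ≤ n / 2 then 1 else if j ≤ n / 2 then 2 else 3
def ccol (n i j : ℕ) : ℕ :=
  if n % 2 = 1 then gcol n (i + j)
  else if i = n - 1 then hcol n j
  else if j = n - 1 then hcol n i
  else gcol (n - 1) (i + j)

lemma ccol_symm (n i j : ℕ) : ccol n i j = ccol n j i := by
  unfold ccol
  split_ifs <;> simp_all [Nat.add_comm]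

lemma ccol_range (n i j : ℕ) : 1 ≤ ccol n i j ∧ ccol n i j ≤ 3 := by
  unfold ccol gcol hcol; split_ifs <;> omega

def cB (n v α : ℕ) : ℕ := ((range n).filter (fun j => ccol n v j = α)).card

lemma count_step (k : ℕ) (p : ℕ → Prop) [DecidablePred p] :
    ((range (k+1)).filter p).card =
      ((range k).filter p).card + if p k then 1 else 0 := by
  rw [Finset.range_add_one, Finset.filter_insert]
  split_ifs with h
  · rw [Finset.card_insert_of_notMem (fun hm => by
      have := Finset.mem_range.mp (Finset.mem_of_mem_filter _ hm); omega)]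
  · simp

lemma count_lt (t : ℕ) : ∀ k, ((range k).filter (fun j => j < t)).card = min k t := by
  intro k
  induction k with
  | zero => simp
  | succ k ih => rw [count_step, ih]; split_ifs <;> omega

lemma count_band (a b : ℕ) : ∀ k, ((range k).filter (fun j => a ≤ j ∧ j < b)).card
    = min k b - min k a := by
  intro k
  induction k with
  | zero => simp
  | succ k ih => rw [count_step, ih]; split_ifs with h <;> omega

lemma count_ge (t : ℕ) : ∀ k, ((range k).filter (fun j => t ≤ j)).card = k - min k t := by
  intro k
  induction k with
  | zero => simp
  | succ k ih => rw [count_step, ih]; split_ifs with h <;> omega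

lemma count_even (a : ℕ) : ∀ k, ((range k).filter (fun j => (a + j) % 2 = 0)).card
    = (k + (a+1) % 2) / 2 := by
  intro k
  induction k with
  | zero => simp
  | succ k ih => rw [count_step, ih]; split_ifs with h <;> omega

lemma count_odd_ge (a t : ℕ) : ∀ k,
    ((range k).filter (fun j => (a + j) % 2 = 1 ∧ t ≤ a + j)).card
    = (k + a % 2) / 2 - (min k (t - a) + a % 2) / 2 := by
  intro k
  induction k with
  | zero => simp
  | succ k ih => rw [count_step, ih]; split_ifs with h <;> omega

lemma count_odd_lt (a t : ℕ) : ∀ k,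
    ((range k).filter (fun j => (a + j) % 2 = 1 ∧ a + j < t)).card
    = (min k (t - a) + a % 2) / 2 := by
  intro k
  induction k with
  | zero => simp
  | succ k ih => rw [count_step, ih]; split_ifs with h <;> omega

lemma ccol_odd (n : ℕ) (hn : n % 2 = 1) (i j : ℕ) : ccol n i j = gcol n (i + j) := by
  unfold ccol; rw [if_pos hn]

lemma gcol_eq_one (m x : ℕ) : gcol m x = 1 ↔ (x % 2 = 1 ∧ x < m) := by
  unfold gcol; split_ifs with h h' <;> simp <;> omega

lemma gcol_eq_two (m x : ℕ) : gcol m x = 2 ↔ x % 2 = 0 := by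
  unfold gcol; split_ifs with h h' <;> simp <;> omega

lemma gcol_eq_three (m x : ℕ) : gcol m x = 3 ↔ (x % 2 = 1 ∧ m ≤ x) := by
  unfold gcol; split_ifs with h h' <;> simp <;> omega

lemma cB_odd (n v : ℕ) (hn : n % 2 = 1) :
    cB n v 1 = (min n (n - v) + v % 2) / 2
    ∧ cB n v 2 = (n + (v+1) % 2) / 2
    ∧ cB n v 3 = (n + v % 2) / 2 - (min n (n - v) + v % 2) / 2 := by
  unfold cB
  refine ⟨?_, ?_, ?_⟩
  · rw [Finset.filter_congr (fun j _ => by rw [ccol_odd n hn, gcol_eq_one]),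
      count_odd_lt]
  · rw [Finset.filter_congr (fun j _ => by rw [ccol_odd n hn, gcol_eq_two]),
      count_even]
  · rw [Finset.filter_congr (fun j _ => by rw [ccol_odd n hn, gcol_eq_three]),
      count_odd_ge]

lemma ccol_even_core (m v j : ℕ) (hm : m % 2 = 1) (hv : v < m) (hj : j < m) :
    ccol (m+1) v j = gcol m (v + j) := by
  unfold ccol
  rw [if_neg (by omega), if_neg (by omega), if_neg (by omega), Nat.add_sub_cancel]

lemma ccol_even_last (m v : ℕ) (hm : m % 2 = 1) (hv : v < m) :
    ccol (m+1) v m = hcol (m+1) v := by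
  unfold ccol
  rw [if_neg (by omega), if_neg (by omega), if_pos (by omega)]

lemma ccol_even_new (m j : ℕ) (hm : m % 2 = 1) :
    ccol (m+1) m j = hcol (m+1) j := by
  unfold ccol
  rw [if_neg (by omega), if_pos (by omega)]

lemma cB_even_old (m v : ℕ) (hm : m % 2 = 1) (hv : v < m) :
    cB (m+1) v 1 = (min m (m - v) + v % 2) / 2 + (if hcol (m+1) v = 1 then 1 else 0)
    ∧ cB (m+1) v 2 = (m + (v+1) % 2) / 2 + (if hcol (m+1) v = 2 then 1 else 0)
    ∧ cB (m+1) v 3 = (m + v % 2) / 2 - (min m (m - v) + v % 2) / 2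
        + (if hcol (m+1) v = 3 then 1 else 0) := by
  unfold cB
  refine ⟨?_, ?_, ?_⟩ <;>
    rw [count_step, ccol_even_last m v hm hv] <;>
    [rw [Finset.filter_congr (fun j hj => by
        rw [ccol_even_core m v j hm hv (Finset.mem_range.mp hj), gcol_eq_one]),
      count_odd_lt];
     rw [Finset.filter_congr (fun j hj => by
        rw [ccol_even_core m v j hm hv (Finset.mem_range.mp hj), gcol_eq_two]),
      count_even];
     rw [Finset.filter_congr (fun j hj => by
        rw [ccol_even_core m v j hm hv (Finset.mem_range.mp hj), gcol_eq_three]),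
      count_odd_ge]]

lemma hcol_eq_one (n j : ℕ) : hcol n j = 1 ↔ j < n / 2 - 1 := by
  unfold hcol; split_ifs with h h' <;> simp <;> omega

lemma hcol_eq_two (n j : ℕ) : hcol n j = 2 ↔ (n / 2 - 1 ≤ j ∧ j < n / 2 + 1) := by
  unfold hcol; split_ifs with h h' <;> simp <;> omega

lemma hcol_eq_three (n j : ℕ) : hcol n j = 3 ↔ n / 2 + 1 ≤ j := by
  unfold hcol; split_ifs with h h' <;> simp <;> omega

lemma cB_even_new (m : ℕ) (hm : m % 2 = 1) :
    cB (m+1) m 1 = min (m+1) ((m+1) / 2 - 1)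
    ∧ cB (m+1) m 2 = min (m+1) ((m+1) / 2 + 1) - min (m+1) ((m+1) / 2 - 1)
    ∧ cB (m+1) m 3 = (m+1) - min (m+1) ((m+1) / 2 + 1) := by
  unfold cB
  refine ⟨?_, ?_, ?_⟩
  · rw [Finset.filter_congr (fun j _ => by rw [ccol_even_new m j hm, hcol_eq_one]),
      count_lt]
  · rw [Finset.filter_congr (fun j _ => by rw [ccol_even_new m j hm, hcol_eq_two]),
      count_band]
  · rw [Finset.filter_congr (fun j _ => by rw [ccol_even_new m j hm, hcol_eq_three]),
      count_ge]

lemma hcol_cases (n j : ℕ) :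
    (hcol n j = 1 ∧ j + 2 ≤ n / 2) ∨ (hcol n j = 2 ∧ n / 2 < j + 2 ∧ j ≤ n / 2)
    ∨ (hcol n j = 3 ∧ n / 2 < j) := by
  unfold hcol; split_ifs <;> simp <;> omega

lemma neighborFinset_top {n : ℕ} (v : Fin n) :
    (⊤ : SimpleGraph (Fin n)).neighborFinset v = Finset.univ.erase v := by
  ext u
  simp [SimpleGraph.mem_neighborFinset, Finset.mem_erase, ne_comm]

lemma degree_top {n : ℕ} (v : Fin n) : (⊤ : SimpleGraph (Fin n)).degree v = n - 1 := by
  show ((⊤ : SimpleGraph (Fin n)).neighborFinset v).card = n - 1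
  rw [neighborFinset_top, Finset.card_erase_of_mem (Finset.mem_univ v), Finset.card_univ,
    Fintype.card_fin]

lemma count_val {n : ℕ} (p : ℕ → Prop) [DecidablePred p] (v : Fin n) :
    ((Finset.univ.erase v).filter (fun u : Fin n => p u.val)).card
    = ((range n).filter p).card - (if p v.val then 1 else 0) := by
  rw [Finset.filter_erase]
  have huniv : ((Finset.univ : Finset (Fin n)).filter (fun u : Fin n => p u.val)).card
      = ((range n).filter p).card := by
    rw [Finset.card_filter, Finset.card_filter]
    exact Fin.sum_univ_eq_sum_range (fun j => if p j then 1 else 0) n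
  by_cases h : p v.val
  · rw [Finset.card_erase_of_mem (Finset.mem_filter.mpr ⟨Finset.mem_univ v, h⟩), huniv,
      if_pos h]
  · rw [Finset.erase_eq_of_notMem
        (fun hm => h (Finset.mem_filter.mp (hm : v ∈ Finset.univ.filter
          (fun u : Fin n => p u.val))).2), huniv, if_neg h, Nat.sub_zero]

lemma sum_three {β : Type*} [DecidableEq β] (s : Finset β) (f : β → ℕ)
    (h : ∀ x ∈ s, 1 ≤ f x ∧ f x ≤ 3) :
    ∑ x ∈ s, f x = ((s.filter fun x => f x = 1).card)
      + 2 * ((s.filter fun x => f x = 2).card) + 3 * ((s.filter fun x => f x = 3).card) := by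
  induction s using Finset.induction_on with
  | empty => simp
  | @insert a s ha ih =>
    have ha' := h a (Finset.mem_insert_self a s)
    rw [Finset.sum_insert ha, ih (fun x hx => h x (Finset.mem_insert_of_mem hx)),
      Finset.filter_insert, Finset.filter_insert, Finset.filter_insert]
    rcases (show f a = 1 ∨ f a = 2 ∨ f a = 3 by omega) with h1 | h1 | h1 <;>
      simp only [h1] <;> norm_num <;>
      rw [Finset.card_insert_of_notMem (fun hm => ha (Finset.mem_of_mem_filter _ hm))] <;>
      omega

lemma sum_two {β : Type*} [DecidableEq β] (s : Finset β) (f : β → ℕ)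
    (h : ∀ x ∈ s, 1 ≤ f x ∧ f x ≤ 2) :
    ∑ x ∈ s, f x = ((s.filter fun x => f x = 1).card)
      + 2 * ((s.filter fun x => f x = 2).card) := by
  induction s using Finset.induction_on with
  | empty => simp
  | @insert a s ha ih =>
    have ha' := h a (Finset.mem_insert_self a s)
    rw [Finset.sum_insert ha, ih (fun x hx => h x (Finset.mem_insert_of_mem hx)),
      Finset.filter_insert, Finset.filter_insert]
    rcases (show f a = 1 ∨ f a = 2 by omega) with h1 | h1 <;>
      simp only [h1] <;> norm_num <;>
      rw [Finset.card_insert_of_notMem (fun hm => ha (Finset.mem_of_mem_filter _ hm))] <;>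
      omega

lemma card_two {β : Type*} [DecidableEq β] (s : Finset β) (f : β → ℕ)
    (h : ∀ x ∈ s, 1 ≤ f x ∧ f x ≤ 2) :
    ((s.filter fun x => f x = 1).card) + ((s.filter fun x => f x = 2).card) = s.card := by
  have h2 : (s.filter fun x => f x = 2) = (s.filter fun x => ¬ (f x = 1)) :=
    Finset.filter_congr (fun x hx => by have := h x hx; constructor <;> intro <;> omega)
  rw [h2]
  exact Finset.card_filter_add_card_filter_not _

section Construction

variable (n : ℕ)

lemma colorCount_eq (v : Fin n) (α : ℕ) :
    colorCount (⊤ : SimpleGraph (Fin n)) (fun i j => ccol n i.val j.val) v α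
    = cB n v.val α - (if ccol n v.val v.val = α then 1 else 0) := by
  unfold colorCount
  rw [neighborFinset_top]
  exact count_val (fun j => ccol n v.val j = α) v

lemma sigma_decomp (v : Fin n) :
    sigmaSum (⊤ : SimpleGraph (Fin n)) (fun i j => ccol n i.val j.val) v
    = colorCount ⊤ (fun i j => ccol n i.val j.val) v 1
      + 2 * colorCount ⊤ (fun i j => ccol n i.val j.val) v 2
      + 3 * colorCount ⊤ (fun i j => ccol n i.val j.val) v 3 := by
  unfold sigmaSum colorCount
  exact sum_three _ _ (fun x _ => ccol_range n v.val x.val)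

end Construction

lemma counts_odd (n : ℕ) (hpar : n % 2 = 1) (v : Fin n) :
    colorCount ⊤ (fun i j : Fin n => ccol n i.val j.val) v 1 = (n - v.val) / 2
    ∧ colorCount ⊤ (fun i j : Fin n => ccol n i.val j.val) v 2
      = n / 2 + (v.val + 1) % 2 - 1
    ∧ colorCount ⊤ (fun i j : Fin n => ccol n i.val j.val) v 3 = (v.val + 1) / 2 := by
  obtain ⟨hA, hB, hC⟩ := cB_odd n v.val hpar
  have hd : ccol n v.val v.val = 2 := by rw [ccol_odd n hpar, gcol_eq_two]; omega
  have hv := v.isLt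
  refine ⟨?_, ?_, ?_⟩ <;> rw [colorCount_eq] <;> simp [hA, hB, hC, hd] <;> omega

lemma counts_even_old (m : ℕ) (hm : m % 2 = 1) (v : Fin (m+1)) (hv : v.val < m) :
    colorCount ⊤ (fun i j : Fin (m+1) => ccol (m+1) i.val j.val) v 1
      = (m - v.val) / 2 + min 1 ((m+1) / 2 - v.val - 1)
    ∧ colorCount ⊤ (fun i j : Fin (m+1) => ccol (m+1) i.val j.val) v 2
      = m / 2 + (v.val + 1) % 2
        + (1 - min 1 ((m+1) / 2 - v.val - 1) - min 1 (v.val - (m+1) / 2)) - 1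
    ∧ colorCount ⊤ (fun i j : Fin (m+1) => ccol (m+1) i.val j.val) v 3
      = (v.val + 1) / 2 + min 1 (v.val - (m+1) / 2) := by
  obtain ⟨hA, hB, hC⟩ := cB_even_old m v.val hm hv
  have hd : ccol (m+1) v.val v.val = 2 := by
    rw [ccol_even_core m v.val v.val hm hv hv, gcol_eq_two]; omega
  refine ⟨?_, ?_, ?_⟩ <;> rw [colorCount_eq] <;>
    rcases hcol_cases (m+1) v.val with ⟨hh, hb⟩ | ⟨hh, hb⟩ | ⟨hh, hb⟩ <;>
    simp [hA, hB, hC, hd, hh] <;> omega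

lemma counts_even_new (m : ℕ) (hm : m % 2 = 1) (hm3 : 3 ≤ m) (v : Fin (m+1))
    (hv : v.val = m) :
    colorCount ⊤ (fun i j : Fin (m+1) => ccol (m+1) i.val j.val) v 1 = (m+1) / 2 - 1
    ∧ colorCount ⊤ (fun i j : Fin (m+1) => ccol (m+1) i.val j.val) v 2 = 2
    ∧ colorCount ⊤ (fun i j : Fin (m+1) => ccol (m+1) i.val j.val) v 3
      = m - 1 - (m+1) / 2 := by
  obtain ⟨hA, hB, hC⟩ := cB_even_new m hm
  have hd : ccol (m+1) m m = 3 := by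
    rw [ccol_even_new m m hm, hcol_eq_three]; omega
  have hmin1 : min (m+1) ((m+1) / 2 - 1) = (m+1) / 2 - 1 := by omega
  have hmin2 : min (m+1) ((m+1) / 2 + 1) = (m+1) / 2 + 1 := by omega
  refine ⟨?_, ?_, ?_⟩ <;> rw [colorCount_eq, hv] <;>
    simp [hA, hB, hC, hd, hmin1, hmin2] <;> omega

lemma colorCount_other (n : ℕ) (v : Fin n) (α : ℕ) (hα : ¬(α = 1 ∨ α = 2 ∨ α = 3)) :
    colorCount ⊤ (fun i j : Fin n => ccol n i.val j.val) v α = 0 := by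
  apply Finset.card_eq_zero.mpr
  apply Finset.filter_eq_empty_iff.mpr
  intro u _
  show ¬ ccol n v.val u.val = α
  have := ccol_range n v.val u.val
  omega

lemma sigma_odd (n : ℕ) (hn : 3 ≤ n) (hpar : n % 2 = 1) (v : Fin n) :
    sigmaSum (⊤ : SimpleGraph (Fin n)) (fun i j => ccol n i.val j.val) v
      = v.val + n - 1 + n / 2 := by
  obtain ⟨e1, e2, e3⟩ := counts_odd n hpar v
  have hv := v.isLt
  rw [sigma_decomp, e1, e2, e3]
  omega

lemma sigma_even_old (m : ℕ) (hm : m % 2 = 1) (h3 : 3 ≤ m) (v : Fin (m+1))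
    (hv : v.val < m) :
    sigmaSum (⊤ : SimpleGraph (Fin (m+1))) (fun i j => ccol (m+1) i.val j.val) v
      = v.val + m - 1 + m / 2 + hcol (m+1) v.val := by
  obtain ⟨e1, e2, e3⟩ := counts_even_old m hm v hv
  rw [sigma_decomp, e1, e2, e3]
  rcases hcol_cases (m+1) v.val with ⟨hh, hb⟩ | ⟨hh, hb⟩ | ⟨hh, hb⟩ <;> rw [hh] <;> omega

lemma sigma_even_new (m : ℕ) (hm : m % 2 = 1) (h3 : 3 ≤ m) (v : Fin (m+1))
    (hv : v.val = m) :
    sigmaSum (⊤ : SimpleGraph (Fin (m+1))) (fun i j => ccol (m+1) i.val j.val) v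
      = 2 * m - 1 := by
  obtain ⟨e1, e2, e3⟩ := counts_even_new m hm h3 v hv
  rw [sigma_decomp, e1, e2, e3]
  omega

set_option maxHeartbeats 1000000 in
lemma mem_three (n : ℕ) (hn : 3 ≤ n) :
    ∃ c : Fin n → Fin n → ℕ,
      EdgeColoring (⊤ : SimpleGraph (Fin n)) 3 c ∧
      QuasiMajority (⊤ : SimpleGraph (Fin n)) c ∧
      NSD (⊤ : SimpleGraph (Fin n)) c := by
  refine ⟨fun i j => ccol n i.val j.val,
    ⟨fun u v => ccol_symm n u.val v.val, fun u v _ => ccol_range n u.val v.val⟩, ?_, ?_⟩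
  · -- QuasiMajority
    intro v α
    rw [degree_top]
    by_cases hα : α = 1 ∨ α = 2 ∨ α = 3
    · have hv := v.isLt
      by_cases hpar : n % 2 = 1
      · obtain ⟨e1, e2, e3⟩ := counts_odd n hpar v
        rcases hα with h1 | h1 | h1 <;> subst h1 <;>
          [rw [e1]; rw [e2]; rw [e3]] <;> omega
      · obtain ⟨m, rfl⟩ : ∃ m, n = m + 1 := ⟨n - 1, by omega⟩
        have hm : m % 2 = 1 := by omega
        by_cases hvm : v.val = m
        · obtain ⟨e1, e2, e3⟩ := counts_even_new m hm (by omega) v hvm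
          rcases hα with h1 | h1 | h1 <;> subst h1 <;>
            [rw [e1]; rw [e2]; rw [e3]] <;> omega
        · obtain ⟨e1, e2, e3⟩ := counts_even_old m hm v (by omega)
          rcases hα with h1 | h1 | h1 <;> subst h1 <;>
            [rw [e1]; rw [e2]; rw [e3]] <;> omega
    · rw [colorCount_other n v α hα]
      omega
  · -- NSD
    intro u v huv
    have hne : u.val ≠ v.val := fun h => (SimpleGraph.top_adj u v).mp huv (Fin.ext h)
    have hu := u.isLt
    have hv := v.isLt
    by_cases hpar : n % 2 = 1
    · rw [sigma_odd n hn hpar u, sigma_odd n hn hpar v]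
      omega
    · obtain ⟨m, rfl⟩ : ∃ m, n = m + 1 := ⟨n - 1, by omega⟩
      have hm : m % 2 = 1 := by omega
      have h3 : 3 ≤ m := by omega
      by_cases hum : u.val = m
      · have hvm : v.val < m := by omega
        rw [sigma_even_new m hm h3 u hum, sigma_even_old m hm h3 v hvm]
        rcases hcol_cases (m+1) v.val with ⟨hh, hb⟩ | ⟨hh, hb⟩ | ⟨hh, hb⟩ <;> rw [hh] <;>
          omega
      · by_cases hvm : v.val = m
        · have hum' : u.val < m := by omega
          rw [sigma_even_old m hm h3 u hum', sigma_even_new m hm h3 v hvm]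
          rcases hcol_cases (m+1) u.val with ⟨hh, hb⟩ | ⟨hh, hb⟩ | ⟨hh, hb⟩ <;> rw [hh] <;>
            omega
        · have hum' : u.val < m := by omega
          have hvm' : v.val < m := by omega
          rw [sigma_even_old m hm h3 u hum', sigma_even_old m hm h3 v hvm']
          rcases hcol_cases (m+1) u.val with ⟨hh, hb⟩ | ⟨hh, hb⟩ | ⟨hh, hb⟩ <;>
            rcases hcol_cases (m+1) v.val with ⟨hh', hb'⟩ | ⟨hh', hb'⟩ | ⟨hh', hb'⟩ <;>
            rw [hh, hh'] <;> omega

lemma lower_bound (n k : ℕ) (hn : 3 ≤ n)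
    (h : ∃ c : Fin n → Fin n → ℕ,
      EdgeColoring (⊤ : SimpleGraph (Fin n)) k c ∧
      QuasiMajority (⊤ : SimpleGraph (Fin n)) c ∧
      NSD (⊤ : SimpleGraph (Fin n)) c) : 3 ≤ k := by
  by_contra hk
  push_neg at hk
  obtain ⟨c, ⟨hsym, hrange⟩, hQM, hNSD⟩ := h
  have hcolor : ∀ (v : Fin n), ∀ u ∈ (⊤ : SimpleGraph (Fin n)).neighborFinset v,
      1 ≤ c v u ∧ c v u ≤ 2 := by
    intro v u hu
    have hadj := (SimpleGraph.mem_neighborFinset _ _ _).mp hu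
    have := hrange v u hadj
    omega
  have hσ : ∀ v : Fin n, sigmaSum ⊤ c v = (n - 1) + colorCount ⊤ c v 2 := by
    intro v
    unfold sigmaSum colorCount
    rw [sum_two _ _ (hcolor v)]
    have hcards := card_two ((⊤ : SimpleGraph (Fin n)).neighborFinset v) (c v) (hcolor v)
    have hdeg : ((⊤ : SimpleGraph (Fin n)).neighborFinset v).card = n - 1 := degree_top v
    omega
  have hsum : ∀ v : Fin n, colorCount ⊤ c v 1 + colorCount ⊤ c v 2 = n - 1 := by
    intro v
    unfold colorCount
    have hcards := card_two ((⊤ : SimpleGraph (Fin n)).neighborFinset v) (c v) (hcolor v)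
    have hdeg : ((⊤ : SimpleGraph (Fin n)).neighborFinset v).card = n - 1 := degree_top v
    omega
  have hmem : ∀ v : Fin n, colorCount ⊤ c v 2 ∈ Finset.Icc (n - 1 - n / 2) (n / 2) := by
    intro v
    have h2 := hQM v 2
    have h1 := hQM v 1
    rw [degree_top] at h1 h2
    have := hsum v
    rw [Finset.mem_Icc]
    omega
  have hinj : Set.InjOn (fun v : Fin n => colorCount ⊤ c v 2)
      ↑(Finset.univ : Finset (Fin n)) := by
    intro a _ b _ hab
    have hab' : colorCount ⊤ c a 2 = colorCount ⊤ c b 2 := hab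
    by_contra hne
    have hadj : (⊤ : SimpleGraph (Fin n)).Adj a b := (SimpleGraph.top_adj a b).mpr hne
    have hns := hNSD a b hadj
    rw [hσ a, hσ b] at hns
    exact hns (by omega)
  have hcard := Finset.card_le_card_of_injOn (fun v : Fin n => colorCount ⊤ c v 2)
    (fun v _ => hmem v) hinj
  rw [Finset.card_univ, Fintype.card_fin, Nat.card_Icc] at hcard
  omega

end QMNSD

theorem qmnsdi_complete (n : ℕ) (hn : 3 ≤ n) :
    IsLeast {k : ℕ | ∃ c : Fin n → Fin n → ℕ,
      EdgeColoring (⊤ : SimpleGraph (Fin n)) k c ∧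
      QuasiMajority (⊤ : SimpleGraph (Fin n)) c ∧
      NSD (⊤ : SimpleGraph (Fin n)) c} 3 :=
  ⟨QMNSD.mem_three n hn, fun k hk => QMNSD.lower_bound n k hn hk⟩
end

section
/- Every nice bipartite graph G satisfies qmnsdi(G) ≤ 6, i.e., G admits a quasi-majority neighbor sum distinguishing 6-edge-coloring. -/
open Finset

variable {V : Type*} [Fintype V] [DecidableEq V]

namespace QMNSD

def Nice' (G : SimpleGraph V) [DecidableRel G.Adj] : Prop :=
  ¬ ∃ u v, G.Adj u v ∧ G.degree u = 1 ∧ G.degree v = 1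


noncomputable def sgn (f : V → Fin 2) (v : V) : ZMod 3 := if f v = 0 then 1 else -1

lemma sgn_sq (f : V → Fin 2) (v : V) : sgn f v * sgn f v = 1 := by
  unfold sgn; split <;> decide

lemma sgn_add_eq_zero {f : V → Fin 2} {u v : V} (h : f u ≠ f v) : sgn f u + sgn f v = 0 := by
  unfold sgn
  have : ∀ a b : Fin 2, a ≠ b → ((if a = 0 then (1 : ZMod 3) else -1) + (if b = 0 then 1 else -1)) = 0 := by decide
  exact this _ _ h

lemma sgn_mul_eq_neg_one {f : V → Fin 2} {u v : V} (h : f u ≠ f v) :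
    sgn f u * sgn f v = -1 := by
  unfold sgn
  have : ∀ a b : Fin 2, a ≠ b → ((if a = 0 then (1 : ZMod 3) else -1) * (if b = 0 then 1 else -1)) = -1 := by decide
  exact this _ _ h

noncomputable def Comp (G : SimpleGraph V) (v : V) : Finset V :=
  @Finset.filter _ (fun w => G.Reachable v w) (Classical.decPred _) Finset.univ

lemma mem_Comp {G : SimpleGraph V} {v w : V} : w ∈ Comp G v ↔ G.Reachable v w := by
  simp [Comp]

lemma self_mem_Comp {G : SimpleGraph V} (v : V) : v ∈ Comp G v := mem_Comp.2 (by rfl)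

lemma Comp_congr {G : SimpleGraph V} {v w : V} (h : G.Reachable v w) :
    Comp G w = Comp G v := by
  ext z; simp only [mem_Comp]
  exact ⟨fun hz => h.trans hz, fun hz => h.symm.trans hz⟩

lemma Comp_mono {G G' : SimpleGraph V} (h : G' ≤ G) (v : V) : Comp G' v ⊆ Comp G v := by
  intro z hz; exact mem_Comp.2 ((mem_Comp.1 hz).mono h)

noncomputable def Nbr (G : SimpleGraph V) (v : V) : Finset V :=
  @Finset.filter _ (fun u => G.Adj v u) (Classical.decPred _) Finset.univ

lemma mem_Nbr {G : SimpleGraph V} {v u : V} : u ∈ Nbr G v ↔ G.Adj v u := by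
  simp [Nbr]

/-- reachability trichotomy after deleting one edge -/
lemma reach_delete {G : SimpleGraph V} {u₀ v₀ : V} :
    ∀ {y z : V}, G.Reachable y z →
      (G.deleteEdges {s(u₀, v₀)}).Reachable y z ∨
      ((G.deleteEdges {s(u₀, v₀)}).Reachable y u₀ ∧ (G.deleteEdges {s(u₀, v₀)}).Reachable v₀ z) ∨
      ((G.deleteEdges {s(u₀, v₀)}).Reachable y v₀ ∧ (G.deleteEdges {s(u₀, v₀)}).Reachable u₀ z) := by
  set G' := G.deleteEdges {s(u₀, v₀)} with hG'
  intro y z hr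
  obtain ⟨w⟩ := hr
  induction w with
  | nil => exact Or.inl (by rfl)
  | @cons y b z h p ih =>
    by_cases hcase : s(y, b) = s(u₀, v₀)
    · rw [Sym2.eq_iff] at hcase
      rcases hcase with ⟨hy, hb⟩ | ⟨hy, hb⟩
      · subst hy; subst hb
        rcases ih with h1 | ⟨h2a, h2b⟩ | ⟨h3a, h3b⟩
        · exact Or.inr (Or.inl ⟨by rfl, h1⟩)
        · exact Or.inl (h2a.symm.trans h2b)
        · exact Or.inl h3b
      · subst hy; subst hb
        rcases ih with h1 | ⟨h2a, h2b⟩ | ⟨h3a, h3b⟩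
        · exact Or.inr (Or.inr ⟨by rfl, h1⟩)
        · exact Or.inl h2b
        · exact Or.inl (h3a.symm.trans h3b)
    · have hadj' : G'.Adj y b := by
        rw [hG', SimpleGraph.deleteEdges_adj]
        exact ⟨h, by simpa using hcase⟩
      have hyb : G'.Reachable y b := hadj'.reachable
      rcases ih with h1 | ⟨h2a, h2b⟩ | ⟨h3a, h3b⟩
      · exact Or.inl (hyb.trans h1)
      · exact Or.inr (Or.inl ⟨hyb.trans h2a, h2b⟩)
      · exact Or.inr (Or.inr ⟨hyb.trans h3a, h3b⟩)

noncomputable def ESize (G : SimpleGraph V) : ℕ :=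
  (@Finset.filter _ (fun p : V × V => G.Adj p.1 p.2) (Classical.decPred _) Finset.univ).card

lemma lemA0 {G : SimpleGraph V} (f : V → Fin 2) (hno : ∀ u v : V, ¬ G.Adj u v)
    (t : V → ZMod 3) (ht : ∀ v, ∑ w ∈ Comp G v, sgn f w * t w = 0) :
    ∃ x : V → V → ZMod 3, (∀ u v, x u v = x v u) ∧
      ∀ v, ∑ u ∈ Nbr G v, x v u = t v := by
  have hcomp : ∀ v : V, Comp G v = {v} := by
    intro v
    ext z
    simp only [mem_Comp, Finset.mem_singleton]
    constructor
    · intro hr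
      obtain ⟨w⟩ := hr
      cases w with
      | nil => rfl
      | cons h _ => exact absurd h (hno _ _)
    · rintro rfl; rfl
  have ht0 : ∀ v, t v = 0 := by
    intro v
    have := ht v
    rw [hcomp v, Finset.sum_singleton] at this
    unfold sgn at this
    split at this
    · simpa using this
    · have : -(t v) = 0 := by linear_combination this
      simpa using this
  refine ⟨fun _ _ => 0, fun _ _ => rfl, fun v => ?_⟩
  rw [ht0 v]
  simp

lemma lemA (f : V → Fin 2) :
    ∀ (m : ℕ) (G : SimpleGraph V), ESize G ≤ m →
    (∀ u v, G.Adj u v → f u ≠ f v) →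
    ∀ t : V → ZMod 3,
    (∀ v, ∑ w ∈ Comp G v, sgn f w * t w = 0) →
    ∃ x : V → V → ZMod 3, (∀ u v, x u v = x v u) ∧
      ∀ v, ∑ u ∈ Nbr G v, x v u = t v := by
  intro m
  induction m with
  | zero =>
    intro G hm hf t ht
    refine lemA0 f (fun u v hadj => ?_) t ht
    have : (u, v) ∈ (@Finset.filter _ (fun p : V × V => G.Adj p.1 p.2) (Classical.decPred _) Finset.univ) := by
      simp [hadj]
    have hpos : 0 < ESize G := Finset.card_pos.2 ⟨_, this⟩
    omega
  | succ m ih =>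
    intro G hm hf t ht
    by_cases hedge : ∃ u v : V, G.Adj u v
    case neg =>
      push_neg at hedge
      exact lemA0 f hedge t ht
    obtain ⟨u₀, v₀, hadj⟩ := hedge
    set G' := G.deleteEdges {s(u₀, v₀)} with hG'def
    have hG'le : G' ≤ G := SimpleGraph.deleteEdges_le _
    have hG'adj : ∀ a b, G'.Adj a b ↔ (G.Adj a b ∧ s(a, b) ≠ s(u₀, v₀)) := by
      intro a b
      rw [hG'def, SimpleGraph.deleteEdges_adj]
      simp
    have hne : u₀ ≠ v₀ := hadj.ne
    have hnadj' : ¬ G'.Adj u₀ v₀ := by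
      rw [hG'adj]; rintro ⟨_, h⟩; exact h rfl
    -- size decreases
    have hsize : ESize G' ≤ m := by
      have hss : (@Finset.filter _ (fun p : V × V => G'.Adj p.1 p.2) (Classical.decPred _) Finset.univ) ⊂
          (@Finset.filter _ (fun p : V × V => G.Adj p.1 p.2) (Classical.decPred _) Finset.univ) := by
        constructor
        · intro p hp
          simp only [Finset.mem_filter, Finset.mem_univ, true_and] at hp ⊢
          exact hG'le hp
        · intro hsub
          have : (u₀, v₀) ∈ (@Finset.filter _ (fun p : V × V => G.Adj p.1 p.2) (Classical.decPred _) Finset.univ) := by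
            simp [hadj]
          have := hsub this
          simp only [Finset.mem_filter, Finset.mem_univ, true_and] at this
          exact hnadj' this
      have := Finset.card_lt_card hss
      unfold ESize at hm ⊢
      omega
    obtain ⟨a, ha⟩ : ∃ a : ZMod 3, a = sgn f u₀ * (∑ w ∈ Comp G' u₀, sgn f w * t w) := ⟨_, rfl⟩
    obtain ⟨t₂, ht₂def⟩ : ∃ t₂ : V → ZMod 3,
        t₂ = fun w => if w = u₀ then t u₀ - a else if w = v₀ then t v₀ - a else t w := ⟨_, rfl⟩
    have ht₂u : t₂ u₀ = t u₀ - a := by rw [ht₂def]; simp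
    have ht₂v : t₂ v₀ = t v₀ - a := by rw [ht₂def]; simp [hne.symm]
    have ht₂o : ∀ w, w ≠ u₀ → w ≠ v₀ → t₂ w = t w := by
      intro w h1 h2; rw [ht₂def]; simp [h1, h2]
    have hsplitsum : ∀ S : Finset V, ∑ w ∈ S, sgn f w * t₂ w =
        (∑ w ∈ S, sgn f w * t w) + (if u₀ ∈ S then -(sgn f u₀ * a) else 0)
          + (if v₀ ∈ S then -(sgn f v₀ * a) else 0) := by
      intro S
      have hpt : ∀ w, sgn f w * t₂ w = sgn f w * t w
          + ((if w = u₀ then -(sgn f u₀ * a) else 0) + (if w = v₀ then -(sgn f v₀ * a) else 0)) := by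
        intro w
        by_cases h1 : w = u₀
        · rw [if_pos h1, if_neg (by rw [h1]; exact hne), h1, ht₂u]
          ring
        · rw [if_neg h1]
          by_cases h2 : w = v₀
          · rw [if_pos h2, h2, ht₂v]
            ring
          · rw [if_neg h2, ht₂o w h1 h2]
            ring
      rw [Finset.sum_congr rfl (fun w _ => hpt w), Finset.sum_add_distrib, Finset.sum_add_distrib,
        Finset.sum_ite_eq' S u₀ (fun _ => -(sgn f u₀ * a)), Finset.sum_ite_eq' S v₀ (fun _ => -(sgn f v₀ * a))]
      ring
    -- the new component condition
    have ht₂comp : ∀ w, ∑ z ∈ Comp G' w, sgn f z * t₂ z = 0 := by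
      intro w
      by_cases hu : G'.Reachable w u₀ <;> by_cases hv : G'.Reachable w v₀
      · -- both reachable: component unchanged
        have hcomp : Comp G' w = Comp G w := by
          apply Finset.Subset.antisymm (Comp_mono hG'le w)
          intro z hz
          rcases reach_delete (mem_Comp.1 hz) with h1 | ⟨h2a, h2b⟩ | ⟨h3a, h3b⟩
          · exact mem_Comp.2 h1
          · exact mem_Comp.2 (hv.trans h2b)
          · exact mem_Comp.2 (hu.trans h3b)
        rw [hsplitsum]
        rw [if_pos (mem_Comp.2 hu), if_pos (mem_Comp.2 hv), hcomp]
        rw [ht w]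
        have hz : sgn f u₀ + sgn f v₀ = 0 := sgn_add_eq_zero (hf _ _ hadj)
        linear_combination -a * hz
      · -- only u₀
        have hcomp : Comp G' w = Comp G' u₀ := (Comp_congr hu).symm
        have hv₀ : v₀ ∉ Comp G' u₀ := by
          rw [mem_Comp]; exact fun h => hv (hu.trans h)
        rw [hsplitsum, if_pos (mem_Comp.2 hu), hcomp, if_neg hv₀]
        have hkey : sgn f u₀ * a = ∑ z ∈ Comp G' u₀, sgn f z * t z := by
          rw [ha, ← mul_assoc, sgn_sq, one_mul]
        linear_combination -hkey
      · -- only v₀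
        have hcomp : Comp G' w = Comp G' v₀ := (Comp_congr hv).symm
        have hnuv : ¬ G'.Reachable u₀ v₀ := fun h => hu (hv.trans h.symm)
        have hu₀ : u₀ ∉ Comp G' v₀ := by
          rw [mem_Comp]; exact fun h => hnuv h.symm
        have hunion : Comp G u₀ = Comp G' u₀ ∪ Comp G' v₀ := by
          ext z
          simp only [Finset.mem_union, mem_Comp]
          constructor
          · intro hz
            rcases reach_delete hz with h1 | ⟨h2a, h2b⟩ | ⟨h3a, h3b⟩
            · exact Or.inl h1
            · exact Or.inr h2b
            · exact absurd h3a hnuv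
          · rintro (h | h)
            · exact h.mono hG'le
            · exact hadj.reachable.trans (h.mono hG'le)
        have hdisj : Disjoint (Comp G' u₀) (Comp G' v₀) := by
          rw [Finset.disjoint_left]
          intro z hz1 hz2
          exact hnuv ((mem_Comp.1 hz1).trans (mem_Comp.1 hz2).symm)
        have hsum2 : ∑ z ∈ Comp G' u₀, sgn f z * t z + ∑ z ∈ Comp G' v₀, sgn f z * t z = 0 := by
          rw [← Finset.sum_union hdisj, ← hunion, ht u₀]
        rw [hsplitsum, hcomp, if_neg hu₀, if_pos (self_mem_Comp v₀)]
        have hv₀a : sgn f v₀ * a = - ∑ z ∈ Comp G' u₀, sgn f z * t z := by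
          rw [ha, ← mul_assoc]
          have hm1 : sgn f v₀ * sgn f u₀ = -1 := by
            rw [mul_comm]; exact sgn_mul_eq_neg_one (hf _ _ hadj)
          rw [hm1]; ring
        linear_combination hsum2 - hv₀a
      · -- neither
        have hcomp : Comp G' w = Comp G w := by
          apply Finset.Subset.antisymm (Comp_mono hG'le w)
          intro z hz
          rcases reach_delete (mem_Comp.1 hz) with h1 | ⟨h2a, h2b⟩ | ⟨h3a, h3b⟩
          · exact mem_Comp.2 h1
          · exact absurd h2a hu
          · exact absurd h3a hv
        have hu₀ : u₀ ∉ Comp G' w := by rw [mem_Comp]; exact hu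
        have hv₀ : v₀ ∉ Comp G' w := by rw [mem_Comp]; exact hv
        rw [hsplitsum, if_neg hu₀, if_neg hv₀, hcomp, ht w]
        ring
    obtain ⟨x', hx'symm, hx'sum⟩ := ih G' hsize (fun u v h => hf u v (hG'le h)) t₂ ht₂comp
    refine ⟨fun p q => if (p = u₀ ∧ q = v₀) ∨ (p = v₀ ∧ q = u₀) then a else x' p q, ?_, ?_⟩
    · intro p q
      dsimp only
      have hiff : ((p = u₀ ∧ q = v₀) ∨ (p = v₀ ∧ q = u₀)) ↔ ((q = u₀ ∧ p = v₀) ∨ (q = v₀ ∧ p = u₀)) := by tauto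
      by_cases h : (p = u₀ ∧ q = v₀) ∨ (p = v₀ ∧ q = u₀)
      · rw [if_pos h, if_pos (hiff.1 h)]
      · rw [if_neg h, if_neg (fun hh => h (hiff.2 hh))]
        exact hx'symm p q
    · intro v
      dsimp only
      by_cases hv1 : v = u₀
      · rw [hv1]
        have hins : Nbr G u₀ = insert v₀ (Nbr G' u₀) := by
          ext u
          simp only [mem_Nbr, Finset.mem_insert]
          constructor
          · intro h
            by_cases hc : s(u₀, u) = s(u₀, v₀)
            · left; exact (Sym2.congr_right.1 hc)
            · right; exact (hG'adj _ _).2 ⟨h, hc⟩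
          · rintro (rfl | h)
            · exact hadj
            · exact hG'le h
        have hnm : v₀ ∉ Nbr G' u₀ := by rw [mem_Nbr]; exact hnadj'
        rw [hins, Finset.sum_insert hnm]
        have h1 : (if (u₀ = u₀ ∧ v₀ = v₀) ∨ (u₀ = v₀ ∧ v₀ = u₀) then a else x' u₀ v₀) = a :=
          if_pos (Or.inl ⟨rfl, rfl⟩)
        rw [h1]
        have h2 : ∀ u ∈ Nbr G' u₀,
            (if (u₀ = u₀ ∧ u = v₀) ∨ (u₀ = v₀ ∧ u = u₀) then a else x' u₀ u) = x' u₀ u := by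
          intro u hu
          apply if_neg
          rintro (⟨_, rfl⟩ | ⟨h, _⟩)
          · exact hnadj' (mem_Nbr.1 hu)
          · exact hne h
        rw [Finset.sum_congr rfl h2, hx'sum u₀, ht₂u]
        ring
      · by_cases hv2 : v = v₀
        · rw [hv2]
          have hins : Nbr G v₀ = insert u₀ (Nbr G' v₀) := by
            ext u
            simp only [mem_Nbr, Finset.mem_insert]
            constructor
            · intro h
              by_cases hc : s(v₀, u) = s(u₀, v₀)
              · left
                rw [Sym2.eq_swap] at hc
                exact (Sym2.congr_left.1 hc)
              · right; exact (hG'adj _ _).2 ⟨h, hc⟩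
            · rintro (rfl | h)
              · exact hadj.symm
              · exact hG'le h
          have hnm : u₀ ∉ Nbr G' v₀ := by
            rw [mem_Nbr]
            intro h; exact hnadj' h.symm
          rw [hins, Finset.sum_insert hnm]
          have h1 : (if (v₀ = u₀ ∧ u₀ = v₀) ∨ (v₀ = v₀ ∧ u₀ = u₀) then a else x' v₀ u₀) = a :=
            if_pos (Or.inr ⟨rfl, rfl⟩)
          rw [h1]
          have h2 : ∀ u ∈ Nbr G' v₀,
              (if (v₀ = u₀ ∧ u = v₀) ∨ (v₀ = v₀ ∧ u = u₀) then a else x' v₀ u) = x' v₀ u := by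
            intro u hu
            apply if_neg
            rintro (⟨h, _⟩ | ⟨_, rfl⟩)
            · exact hne h.symm
            · exact hnadj' (mem_Nbr.1 hu).symm
          rw [Finset.sum_congr rfl h2, hx'sum v₀, ht₂v]
          ring
        · have heq : Nbr G v = Nbr G' v := by
            ext u
            simp only [mem_Nbr]
            constructor
            · intro h
              refine (hG'adj _ _).2 ⟨h, fun hc => ?_⟩
              rw [Sym2.eq_iff] at hc
              rcases hc with ⟨rfl, _⟩ | ⟨rfl, _⟩
              · exact hv1 rfl
              · exact hv2 rfl
            · exact fun h => hG'le h
          have h2 : ∀ u ∈ Nbr G' v,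
              (if (v = u₀ ∧ u = v₀) ∨ (v = v₀ ∧ u = u₀) then a else x' v u) = x' v u := by
            intro u hu
            apply if_neg
            rintro (⟨h, _⟩ | ⟨h, _⟩)
            · exact hv1 h
            · exact hv2 h
          rw [heq, Finset.sum_congr rfl h2, hx'sum v, ht₂o v hv1 hv2]


section Part2

variable (G : SimpleGraph V) [DecidableRel G.Adj] (f : V → Fin 2)

open Classical in
noncomputable def freeSet (sc : Finset V) : Finset V :=
  if (∃ w ∈ sc, 0 < G.degree w) then
    (if 2 ≤ (sc.filter (fun w => f w = 1)).card then sc.filter (fun w => f w = 1)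
     else sc.filter (fun w => f w = 0))
  else ∅

noncomputable def twoSet (sc : Finset V) : Finset V :=
  if h : (3 - (freeSet G f sc).card % 3) % 3 ≤ (freeSet G f sc).card then
    (Finset.exists_subset_card_eq h).choose
  else ∅

lemma twoSet_subset (sc : Finset V) : twoSet G f sc ⊆ freeSet G f sc := by
  unfold twoSet
  split
  · rename_i h
    exact (Finset.exists_subset_card_eq h).choose_spec.1
  · simp

lemma twoSet_card (sc : Finset V) (h : (3 - (freeSet G f sc).card % 3) % 3 ≤ (freeSet G f sc).card) :
    (twoSet G f sc).card = (3 - (freeSet G f sc).card % 3) % 3 := by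
  unfold twoSet
  rw [dif_pos h]
  exact (Finset.exists_subset_card_eq h).choose_spec.2

lemma freeSet_of_edge (sc : Finset V) (hedge : ∃ w ∈ sc, 0 < G.degree w) :
    ∃ i : Fin 2, freeSet G f sc = sc.filter (fun w => f w = i) := by
  unfold freeSet
  rw [if_pos hedge]
  split
  · exact ⟨1, rfl⟩
  · exact ⟨0, rfl⟩

lemma freeSet_of_no_edge (sc : Finset V) (hedge : ¬ ∃ w ∈ sc, 0 < G.degree w) :
    freeSet G f sc = ∅ := by
  unfold freeSet
  rw [if_neg hedge]

/-- In a nice graph, the free side of a component with an edge has at least 2 vertices. -/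
lemma freeSet_card_two (hf : ∀ u v, G.Adj u v → f u ≠ f v) (hnice : Nice' G) (v : V)
    (hedge : ∃ w ∈ Comp G v, 0 < G.degree w) :
    2 ≤ (freeSet G f (Comp G v)).card := by
  obtain ⟨w, hw, hdeg⟩ := hedge
  obtain ⟨u, hadj⟩ := (G.degree_pos_iff_exists_adj w).1 hdeg
  have hu : u ∈ Comp G v := mem_Comp.2 ((mem_Comp.1 hw).trans hadj.reachable)
  have hfin2 : ∀ i : Fin 2, i = 0 ∨ i = 1 := by decide
  have hnonempty : ∀ i : Fin 2, ((Comp G v).filter (fun z => f z = i)).Nonempty := by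
    intro i
    rcases hfin2 (f w) with h | h <;> rcases hfin2 (f u) with h' | h'
    · exact absurd (h.trans h'.symm) (hf _ _ hadj)
    · rcases hfin2 i with rfl | rfl
      · exact ⟨w, Finset.mem_filter.2 ⟨hw, h⟩⟩
      · exact ⟨u, Finset.mem_filter.2 ⟨hu, h'⟩⟩
    · rcases hfin2 i with rfl | rfl
      · exact ⟨u, Finset.mem_filter.2 ⟨hu, h'⟩⟩
      · exact ⟨w, Finset.mem_filter.2 ⟨hw, h⟩⟩
    · exact absurd (h.trans h'.symm) (hf _ _ hadj)
  unfold freeSet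
  rw [if_pos ⟨w, hw, hdeg⟩]
  split
  · assumption
  · rename_i hlt
    push_neg at hlt
    by_contra hA
    push_neg at hA
    -- both classes are singletons
    have hB1 : ((Comp G v).filter (fun z => f z = 1)).card = 1 := by
      have := (hnonempty 1).card_pos
      omega
    have hA1 : ((Comp G v).filter (fun z => f z = 0)).card = 1 := by
      have := (hnonempty 0).card_pos
      omega
    obtain ⟨y, hy⟩ := Finset.card_eq_one.1 hA1
    obtain ⟨z, hz⟩ := Finset.card_eq_one.1 hB1
    have hyz : y ≠ z := by
      intro h
      have hy' : y ∈ ((Comp G v).filter (fun z => f z = 0)) := hy ▸ Finset.mem_singleton_self y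
      have hz' : z ∈ ((Comp G v).filter (fun z => f z = 1)) := hz ▸ Finset.mem_singleton_self z
      rw [Finset.mem_filter] at hy' hz'
      rw [h] at hy'
      rw [hy'.2] at hz'
      exact absurd hz'.2 (by decide)
    have hsc : Comp G v = {y, z} := by
      ext p
      constructor
      · intro hp
        rcases hfin2 (f p) with h | h
        · have : p ∈ ((Comp G v).filter (fun q => f q = 0)) := Finset.mem_filter.2 ⟨hp, h⟩
          rw [hy] at this
          simp at this
          simp [this]
        · have : p ∈ ((Comp G v).filter (fun q => f q = 1)) := Finset.mem_filter.2 ⟨hp, h⟩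
          rw [hz] at this
          simp at this
          simp [this]
      · intro hp
        simp only [Finset.mem_insert, Finset.mem_singleton] at hp
        rcases hp with rfl | rfl
        · have : p ∈ ((Comp G v).filter (fun q => f q = 0)) := hy ▸ Finset.mem_singleton_self p
          exact (Finset.mem_filter.1 this).1
        · have : p ∈ ((Comp G v).filter (fun q => f q = 1)) := hz ▸ Finset.mem_singleton_self p
          exact (Finset.mem_filter.1 this).1
    -- y and z are adjacent
    have hwu : w ∈ ({y, z} : Finset V) := hsc ▸ hw
    have huu : u ∈ ({y, z} : Finset V) := hsc ▸ hu
    simp only [Finset.mem_insert, Finset.mem_singleton] at hwu huu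
    have hadjyz : G.Adj y z := by
      rcases hwu with rfl | rfl <;> rcases huu with rfl | rfl
      · exact absurd rfl hadj.ne
      · exact hadj
      · exact hadj.symm
      · exact absurd rfl hadj.ne'
    -- both have degree 1
    have hdeg1 : ∀ p q : V, G.Adj p q → p ∈ Comp G v → Comp G v = {p, q} → G.degree p = 1 := by
      intro p q hpq hp hcomp
      have : G.neighborFinset p = {q} := by
        ext r
        simp only [SimpleGraph.mem_neighborFinset, Finset.mem_singleton]
        constructor
        · intro hr
          have hr' : r ∈ Comp G v := mem_Comp.2 ((mem_Comp.1 hp).trans hr.reachable)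
          rw [hcomp] at hr'
          simp only [Finset.mem_insert, Finset.mem_singleton] at hr'
          rcases hr' with rfl | rfl
          · exact absurd hr (G.irrefl)
          · rfl
        · rintro rfl; exact hpq
      rw [← SimpleGraph.card_neighborFinset_eq_degree, this, Finset.card_singleton]
    have hy' : y ∈ Comp G v := by rw [hsc]; simp
    have hz' : z ∈ Comp G v := by rw [hsc]; simp
    have hdy : G.degree y = 1 := hdeg1 y z hadjyz hy' hsc
    have hdz : G.degree z = 1 := by
      apply hdeg1 z y hadjyz.symm hz'
      rw [hsc]
      ext p
      simp only [Finset.mem_insert, Finset.mem_singleton]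
      tauto
    exact hnice ⟨y, z, hadjyz, hdy, hdz⟩

lemma targets (hf : ∀ u v, G.Adj u v → f u ≠ f v) (hnice : Nice' G) :
    ∃ t : V → ZMod 3,
      (∀ v, ∑ w ∈ Comp G v, sgn f w * t w = 0) ∧
      (∀ u v, G.Adj u v → t u ≠ t v) := by
  classical
  obtain ⟨t, htdef⟩ : ∃ t : V → ZMod 3, ∀ v, t v = (if v ∈ twoSet G f (Comp G v) then 2
      else if v ∈ freeSet G f (Comp G v) then 1 else 0) := ⟨_, fun _ => rfl⟩
  have htzero : ∀ w, w ∉ freeSet G f (Comp G w) → t w = 0 := by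
    intro w hw
    rw [htdef, if_neg (fun h => hw (twoSet_subset G f _ h)), if_neg hw]
  have htne : ∀ w, w ∈ freeSet G f (Comp G w) → t w ≠ 0 := by
    intro w hw
    rw [htdef]
    by_cases h2 : w ∈ twoSet G f (Comp G w)
    · rw [if_pos h2]; decide
    · rw [if_neg h2, if_pos hw]; decide
  refine ⟨t, ?_, ?_⟩
  · intro v
    have hcongr : ∀ w ∈ Comp G v, Comp G w = Comp G v := fun w hw => Comp_congr (mem_Comp.1 hw)
    by_cases hedge : ∃ w ∈ Comp G v, 0 < G.degree w
    case neg =>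
      apply Finset.sum_eq_zero
      intro w hw
      rw [htzero w (by rw [hcongr w hw, freeSet_of_no_edge G f _ hedge]; exact Finset.notMem_empty w), mul_zero]
    obtain ⟨i, hi⟩ := freeSet_of_edge G f (Comp G v) hedge
    have hk2 : 2 ≤ (freeSet G f (Comp G v)).card := freeSet_card_two G f hf hnice v hedge
    set k := (freeSet G f (Comp G v)).card with hk
    have hrle : (3 - k % 3) % 3 ≤ k := by omega
    have htc : (twoSet G f (Comp G v)).card = (3 - k % 3) % 3 := twoSet_card G f _ hrle
    have hsub : freeSet G f (Comp G v) ⊆ Comp G v := by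
      rw [hi]; exact Finset.filter_subset _ _
    have hzero : ∀ w ∈ Comp G v, w ∉ freeSet G f (Comp G v) → sgn f w * t w = 0 := by
      intro w hw hnw
      rw [htzero w (by rwa [hcongr w hw]), mul_zero]
    rw [← Finset.sum_subset hsub hzero]
    have hterm : ∀ w ∈ freeSet G f (Comp G v), sgn f w * t w
        = (if i = 0 then (1:ZMod 3) else -1) * (if w ∈ twoSet G f (Comp G v) then 2 else 1) := by
      intro w hw
      have hfw : f w = i := by
        rw [hi, Finset.mem_filter] at hw; exact hw.2
      have hsgnw : sgn f w = (if i = 0 then (1:ZMod 3) else -1) := by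
        unfold sgn; rw [hfw]
      rw [hsgnw, htdef, hcongr w (hsub hw)]
      by_cases h2 : w ∈ twoSet G f (Comp G v)
      · rw [if_pos h2, if_pos h2]
      · rw [if_neg h2, if_neg h2, if_pos hw]
    rw [Finset.sum_congr rfl hterm, ← Finset.mul_sum]
    have hsum2 : ∑ w ∈ freeSet G f (Comp G v), (if w ∈ twoSet G f (Comp G v) then (2:ZMod 3) else 1)
        = (k : ZMod 3) + ((3 - k % 3) % 3 : ℕ) := by
      have hpt : ∀ w, (if w ∈ twoSet G f (Comp G v) then (2:ZMod 3) else 1)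
          = 1 + (if w ∈ twoSet G f (Comp G v) then 1 else 0) := by
        intro w; split <;> norm_num
      rw [Finset.sum_congr rfl (fun w _ => hpt w), Finset.sum_add_distrib, Finset.sum_const,
        Finset.sum_ite_mem, Finset.inter_eq_right.2 (twoSet_subset G f _), Finset.sum_const,
        htc]
      push_cast
      ring
    rw [hsum2]
    have hzero3 : ((k : ZMod 3) + ((3 - k % 3) % 3 : ℕ)) = 0 := by
      have hd : (3:ℕ) ∣ (k + (3 - k % 3) % 3) := by omega
      have := (ZMod.natCast_eq_zero_iff (k + (3 - k % 3) % 3) 3).2 hd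
      push_cast at this
      linear_combination this
    rw [hzero3, mul_zero]
  · intro u v hadj
    have hcv : Comp G v = Comp G u := Comp_congr hadj.reachable
    have hcu : Comp G u = Comp G u := rfl
    have hedge : ∃ w ∈ Comp G u, 0 < G.degree w :=
      ⟨u, self_mem_Comp u, (G.degree_pos_iff_exists_adj u).2 ⟨v, hadj⟩⟩
    obtain ⟨i, hi⟩ := freeSet_of_edge G f (Comp G u) hedge
    have hvmem : v ∈ Comp G u := mem_Comp.2 hadj.reachable
    have hmemiff : ∀ w ∈ Comp G u, (w ∈ freeSet G f (Comp G w) ↔ f w = i) := by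
      intro w hw
      rw [Comp_congr (mem_Comp.1 hw), hi, Finset.mem_filter]
      exact ⟨fun h => h.2, fun h => ⟨hw, h⟩⟩
    by_cases hfu : f u = i
    · have hfv : f v ≠ i := fun h => hf u v hadj (hfu.trans h.symm)
      have h1 : t u ≠ 0 := htne u ((hmemiff u (self_mem_Comp u)).2 hfu)
      have h2 : t v = 0 := htzero v (fun h => hfv ((hmemiff v hvmem).1 h))
      rw [h2]; exact h1
    · by_cases hfv : f v = i
      · have h1 : t u = 0 := htzero u (fun h => hfu ((hmemiff u (self_mem_Comp u)).1 h))
        have h2 : t v ≠ 0 := htne v ((hmemiff v hvmem).2 hfv)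
        rw [h1]; exact fun h => h2 h.symm
      · exfalso
        exact hf u v hadj ((by decide : ∀ p q r : Fin 2, p ≠ r → q ≠ r → p = q) (f u) (f v) i hfu hfv)

end Part2


section Part3

variable (G : SimpleGraph V) [DecidableRel G.Adj] (f : V → Fin 2)

noncomputable def nl (v : V) : List V := (G.neighborFinset v).toList

lemma nl_nodup (v : V) : (nl G v).Nodup := Finset.nodup_toList _

lemma mem_nl {v u : V} : u ∈ nl G v ↔ G.Adj v u := by
  simp [nl, Finset.mem_toList, SimpleGraph.mem_neighborFinset]

def pairedAt (v u w : V) : Prop :=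
  ∃ (j : ℕ) (h : 2*j+1 < (nl G v).length),
    (((nl G v)[2*j]'(by omega) = u ∧ (nl G v)[2*j+1]'h = w) ∨
     ((nl G v)[2*j]'(by omega) = w ∧ (nl G v)[2*j+1]'h = u))

lemma pairedAt_symm {v u w : V} (h : pairedAt G v u w) : pairedAt G v w u := by
  obtain ⟨j, hj, h⟩ := h
  exact ⟨j, hj, h.symm⟩

lemma pairedAt_adj {v u w : V} (h : pairedAt G v u w) : G.Adj v u ∧ G.Adj v w := by
  obtain ⟨j, hj, h⟩ := h
  rcases h with ⟨h1, h2⟩ | ⟨h1, h2⟩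
  · exact ⟨(mem_nl G).1 (h1 ▸ List.getElem_mem _), (mem_nl G).1 (h2 ▸ List.getElem_mem _)⟩
  · exact ⟨(mem_nl G).1 (h2 ▸ List.getElem_mem _), (mem_nl G).1 (h1 ▸ List.getElem_mem _)⟩

lemma pairedAt_ne {v u w : V} (h : pairedAt G v u w) : u ≠ w := by
  obtain ⟨j, hj, h⟩ := h
  have hnd := nl_nodup G v
  rcases h with ⟨h1, h2⟩ | ⟨h1, h2⟩ <;> rw [← h1, ← h2] <;> intro hc
  · have := (hnd.getElem_inj_iff).1 hc
    omega
  · have := (hnd.getElem_inj_iff).1 hc.symm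
    omega

lemma pairedAt_unique {v u w w' : V} (h : pairedAt G v u w) (h' : pairedAt G v u w') : w = w' := by
  obtain ⟨j, hj, h⟩ := h
  obtain ⟨j', hj', h'⟩ := h'
  have hnd := nl_nodup G v
  rcases h with ⟨h1, h2⟩ | ⟨h1, h2⟩ <;> rcases h' with ⟨h1', h2'⟩ | ⟨h1', h2'⟩
  · have : 2*j = 2*j' := (hnd.getElem_inj_iff).1 (h1.trans h1'.symm)
    have : j = j' := by omega
    subst this
    rw [← h2, ← h2']
  · have : 2*j = 2*j'+1 := (hnd.getElem_inj_iff).1 (h1.trans h2'.symm)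
    omega
  · have : 2*j+1 = 2*j' := (hnd.getElem_inj_iff).1 (h2.trans h1'.symm)
    omega
  · have : 2*j+1 = 2*j'+1 := (hnd.getElem_inj_iff).1 (h2.trans h2'.symm)
    have : j = j' := by omega
    subst this
    rw [← h1, ← h1']

def AuxRel (e e' : Sym2 V) : Prop := ∃ v u w, pairedAt G v u w ∧ e = s(v,u) ∧ e' = s(v,w)

lemma auxRel_symm {e e' : Sym2 V} (h : AuxRel G e e') : AuxRel G e' e := by
  obtain ⟨v, u, w, hp, h1, h2⟩ := h
  exact ⟨v, w, u, pairedAt_symm G hp, h2, h1⟩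

def Aux : SimpleGraph (Sym2 V) := SimpleGraph.fromRel (AuxRel G)

lemma aux_adj_iff {e e' : Sym2 V} : (Aux G).Adj e e' ↔ e ≠ e' ∧ AuxRel G e e' := by
  rw [Aux, SimpleGraph.fromRel_adj]
  constructor
  · rintro ⟨hne, h | h⟩
    · exact ⟨hne, h⟩
    · exact ⟨hne, auxRel_symm G h⟩
  · rintro ⟨hne, h⟩
    exact ⟨hne, Or.inl h⟩

def StepData (v : V) (e e' : Sym2 V) : Prop :=
  ∃ a b, pairedAt G v a b ∧ e = s(v,a) ∧ e' = s(v,b)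

lemma step_of_adj {e e' : Sym2 V} (h : (Aux G).Adj e e') : ∃ v, StepData G v e e' := by
  obtain ⟨-, v, u, w, hp, h1, h2⟩ := (aux_adj_iff G).1 h
  exact ⟨v, u, w, hp, h1, h2⟩

lemma step_ne {v v' : V} {e₀ e₁ e₂ : Sym2 V} (s1 : StepData G v e₀ e₁)
    (s2 : StepData G v' e₁ e₂) (hne : e₀ ≠ e₂) : v ≠ v' := by
  rintro rfl
  obtain ⟨a, b, hp, he0, he1⟩ := s1
  obtain ⟨a', b', hp', he1', he2⟩ := s2
  have hb : b = a' := Sym2.congr_right.1 (he1.symm.trans he1')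
  subst hb
  have : a = b' := pairedAt_unique G (pairedAt_symm G hp) hp'
  exact hne (he0.trans (this ▸ he2.symm))

lemma step_adj {v v' : V} {e₀ e₁ e₂ : Sym2 V} (s1 : StepData G v e₀ e₁)
    (s2 : StepData G v' e₁ e₂) (hne : v ≠ v') : G.Adj v v' ∧ e₁ = s(v, v') := by
  obtain ⟨a, b, hp, he0, he1⟩ := s1
  obtain ⟨a', b', hp', he1', he2⟩ := s2
  have heq : s(v,b) = s(v',a') := he1.symm.trans he1'
  rw [Sym2.eq_iff] at heq
  rcases heq with ⟨h1, h2⟩ | ⟨h1, h2⟩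
  · exact absurd h1 hne
  · subst h2
    exact ⟨(pairedAt_adj G hp).2, he1⟩

/-- There is no odd closed walk in the auxiliary graph (as a list of `Sym2 V`). -/
lemma no_bad_list (hf : ∀ u v, G.Adj u v → f u ≠ f v) :
    ∀ n : ℕ, ∀ l : List (Sym2 V), l.length = n → 2 ≤ n → Even n →
      l.Chain' (Aux G).Adj → l.head? = l.getLast? → False := by
  intro n
  induction n using Nat.strong_induction_on with
  | _ n ih =>
  intro l hlen h2 heven hchain hclosed
  subst hlen
  have hget : ∀ i (hi : i + 1 < l.length), (Aux G).Adj (l[i]'(by omega)) (l[i+1]'(by omega)) := by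
    intro i hi
    have := List.isChain_iff_getElem.1 hchain i (by omega)
    simpa [List.get_eq_getElem] using this
  have hNpos : 0 < l.length := by omega
  have hclosed' : l[0]'(by omega) = l[l.length - 1]'(by omega) := by
    rw [List.head?_eq_getElem?, List.getLast?_eq_getElem?,
      List.getElem?_eq_getElem (by omega), List.getElem?_eq_getElem (by omega)] at hclosed
    exact Option.some_injective _ hclosed
  by_cases hN2 : l.length = 2
  · have hadj := hget 0 (by omega)
    have := hclosed'
    simp only [hN2] at hadj this
    exact (Aux G).irrefl (this ▸ hadj)
  have hN4 : 4 ≤ l.length := by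
    rcases heven with ⟨r, hr⟩
    omega
  by_cases hsplice : ∃ i, i + 2 < l.length ∧ l[i]? = l[i+2]?
  · obtain ⟨i, hi, heq'⟩ := hsplice
    rw [List.getElem?_eq_getElem (show i < l.length by omega), List.getElem?_eq_getElem hi] at heq'
    have heq : l[i]'(by omega) = l[i+2]'hi := Option.some_injective _ heq' 
    set l' := l.take (i+1) ++ l.drop (i+3) with hl'
    have hlen' : l'.length = l.length - 2 := by
      rw [hl', List.length_append, List.length_take, List.length_drop]
      omega
    have hchain' : l'.Chain' (Aux G).Adj := by
      rw [hl']; refine List.isChain_append.2 ?_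
      refine ⟨hchain.take _, hchain.drop _, ?_⟩
      intro x hx y hy
      by_cases hi3 : i + 3 < l.length
      · have hx' : l[i] = x := by
          rw [List.getLast?_take] at hx
          simp only [Nat.add_sub_cancel, List.getElem?_eq_getElem (show i < l.length by omega)] at hx
          simpa using hx
        have hy' : l[i+3] = y := by
          rw [List.head?_drop, List.getElem?_eq_getElem hi3] at hy
          simpa using hy
        rw [← hx', ← hy', heq]
        exact hget (i+2) (by omega)
      · exfalso
        rw [List.head?_drop, List.getElem?_eq_none (by omega)] at hy
        simp at hy
    have hhead' : l'.head? = some (l[0]'(by omega)) := by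
      rw [List.head?_eq_getElem?, hl', List.getElem?_append_left (by
        rw [List.length_take]; omega)]
      rw [List.getElem?_take_of_lt (by omega), List.getElem?_eq_getElem (by omega)]
    have hlast' : l'.getLast? = some (l[l.length - 1]'(by omega)) := by
      rw [List.getLast?_eq_getElem?, hlen']
      by_cases hi3 : i + 3 < l.length
      · rw [hl', List.getElem?_append_right (by rw [List.length_take]; omega)]
        rw [List.length_take]
        rw [List.getElem?_drop]
        have harith : i + 3 + (l.length - 2 - 1 - min (i + 1) l.length) = l.length - 1 := by
          omega
        rw [harith, List.getElem?_eq_getElem (by omega)]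
      · have hi3' : i + 3 = l.length := by omega
        have hdrop : l.drop (i+3) = [] := by
          apply List.drop_eq_nil_of_le
          omega
        rw [hl', hdrop, List.append_nil, List.getElem?_take_of_lt (by omega),
          List.getElem?_eq_getElem (show l.length - 2 - 1 < l.length by omega)]
        have : l[l.length - 2 - 1]'(by omega) = l[i]'(by omega) := by
          congr 1
          omega
        have hfin : l[i+2]'hi = l[l.length - 1]'(by omega) := by
          congr 1
          omega
        rw [this, heq, hfin]
    have hclosed'' : l'.head? = l'.getLast? := by
      rw [hhead', hlast', hclosed']
    exact ih (l.length - 2) (by omega) l' hlen' (by omega)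
      (by rcases heven with ⟨r, hr⟩; exact ⟨r - 1, by omega⟩) hchain' hclosed''
  by_cases hwrap : l[1]'(by omega) = l[l.length - 2]'(by omega)
  · have hlen' : ((l.drop 1).dropLast).length = l.length - 2 := by
      rw [List.length_dropLast, List.length_drop]
      omega
    have hchain' : ((l.drop 1).dropLast).Chain' (Aux G).Adj := (hchain.drop 1).dropLast
    have hgetl' : ∀ (j) (hj : j < l.length - 2),
        ((l.drop 1).dropLast)[j]'(by omega) = l[j+1]'(by omega) := by
      intro j hj
      simp only [List.getElem_dropLast, List.getElem_drop]
      congr 1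
      omega
    have hhead' : ((l.drop 1).dropLast).head? = some (l[1]'(by omega)) := by
      rw [List.head?_eq_getElem?, List.getElem?_eq_getElem (by omega : 0 < ((l.drop 1).dropLast).length)]
      rw [hgetl' 0 (by omega)]
    have hfin : l[l.length - 3 + 1]'(by omega) = l[l.length - 2]'(by omega) := by
      congr 1 <;> omega
    have hlast' : ((l.drop 1).dropLast).getLast? = some (l[l.length - 2]'(by omega)) := by
      rw [List.getLast?_eq_getElem?, List.getElem?_eq_getElem
        (by omega : ((l.drop 1).dropLast).length - 1 < ((l.drop 1).dropLast).length)]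
      have hval : ((l.drop 1).dropLast)[((l.drop 1).dropLast).length - 1]'(by omega)
          = ((l.drop 1).dropLast)[l.length - 3]'(by omega) := by congr 1 <;> omega
      rw [hval, hgetl' (l.length - 3) (by omega), hfin]
    exact ih (l.length - 2) (by omega) ((l.drop 1).dropLast) hlen' (by omega)
      (by rcases heven with ⟨r, hr⟩; exact ⟨r - 1, by omega⟩) hchain'
      (by rw [hhead', hlast', hwrap])
  -- no splice point: build an odd closed walk in G and contradict 2-colorability
  obtain ⟨vdef, -⟩ := step_of_adj G (hget 0 (by omega))
  set vc : ℕ → V := fun i => if h : i + 1 < l.length then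
      (step_of_adj G (hget i h)).choose else vdef with hvc
  have hvcspec : ∀ i (h : i + 1 < l.length), StepData G (vc i) (l[i]'(by omega)) (l[i+1]'h) := by
    intro i h
    rw [hvc]
    simp only [dif_pos h]
    exact (step_of_adj G (hget i h)).choose_spec
  have hstep : ∀ i, i + 2 < l.length → f (vc i) ≠ f (vc (i+1)) := by
    intro i hi
    have s1 := hvcspec i (by omega)
    have s2 := hvcspec (i+1) (by omega)
    have hne02 : l[i]'(by omega) ≠ l[i+2]'(by omega) := by
      intro hc
      exact hsplice ⟨i, by omega, by
        rw [List.getElem?_eq_getElem (show i < l.length by omega),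
          List.getElem?_eq_getElem (show i + 2 < l.length by omega), hc]⟩
    have hvne := step_ne G s1 s2 hne02
    exact hf _ _ (step_adj G s1 s2 hvne).1
  have hwrapstep : f (vc (l.length - 2)) ≠ f (vc 0) := by
    have s1 := hvcspec (l.length - 2) (by omega)
    have hidx : l[l.length - 2 + 1]'(by omega) = l[l.length - 1]'(by omega) := by
      congr 1
      omega
    rw [hidx, ← hclosed'] at s1
    have s2 := hvcspec 0 (by omega)
    have hne : l[l.length - 2]'(by omega) ≠ l[1]'(by omega) := fun h => hwrap h.symm
    have hvne := step_ne G s1 s2 hne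
    exact hf _ _ (step_adj G s1 s2 hvne).1
  -- parity contradiction
  have flip : ∀ a b : Fin 2, a ≠ b →
      ((if b = 0 then (0 : ZMod 2) else 1) = (if a = 0 then (0:ZMod 2) else 1) + 1) := by decide
  set F : ℕ → ZMod 2 := fun i => if f (vc i) = 0 then 0 else 1 with hF
  have hclaim : ∀ i, i ≤ l.length - 2 → F i = F 0 + (i : ZMod 2) := by
    intro i
    induction i with
    | zero => intro _; simp
    | succ i ihi =>
      intro hle
      have hFi := ihi (by omega)
      have hflip : F (i+1) = F i + 1 := by
        rw [hF]
        exact flip _ _ (hstep i (by omega))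
      rw [hflip, hFi]
      push_cast
      ring
  have h1 : F (l.length - 2) = F 0 + ((l.length - 2 : ℕ) : ZMod 2) := hclaim _ le_rfl
  have h2 : ((l.length - 2 : ℕ) : ZMod 2) = 0 := by
    rw [ZMod.natCast_eq_zero_iff]
    rcases heven with ⟨r, hr⟩
    omega
  have h3 : F 0 = F (l.length - 2) + 1 := by
    rw [hF]
    exact flip _ _ hwrapstep
  rw [h2, add_zero] at h1
  rw [h1] at h3
  have : (0 : ZMod 2) = 1 := by linear_combination h3
  exact absurd this (by decide)

lemma even_closed (hf : ∀ u v, G.Adj u v → f u ≠ f v) (e : Sym2 V)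
    (w : (Aux G).Walk e e) : Even w.length := by
  by_contra hodd
  rw [Nat.not_even_iff_odd] at hodd
  have hlen := w.length_support
  refine no_bad_list G f hf (w.length + 1) w.support hlen ?_ ?_ w.isChain_adj_support ?_
  · rcases hodd with ⟨r, hr⟩; omega
  · rcases hodd with ⟨r, hr⟩; exact ⟨r + 1, by omega⟩
  · rw [List.head?_eq_head (w.support_ne_nil), List.getLast?_eq_getLast (w.support_ne_nil),
      w.head_support, w.getLast_support]

lemma walk_parity (hf : ∀ u v, G.Adj u v → f u ≠ f v) {a b : Sym2 V}
    (p q : (Aux G).Walk a b) : (Odd p.length ↔ Odd q.length) := by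
  have := even_closed G f hf a (p.append q.reverse)
  rw [SimpleGraph.Walk.length_append, SimpleGraph.Walk.length_reverse] at this
  rcases this with ⟨r, hr⟩
  constructor <;> intro ⟨s, hs⟩ <;> exact ⟨r - s - 1, by omega⟩

noncomputable def pick {β : Type*} (S : Finset β) (h : S.Nonempty) : β := h.choose

lemma pick_mem {β : Type*} (S : Finset β) (h : S.Nonempty) : pick S h ∈ S := h.choose_spec

lemma pick_congr {β : Type*} {S S' : Finset β} (hSS : S = S') (h : S.Nonempty) (h' : S'.Nonempty) :
    pick S h = pick S' h' := by subst hSS; rfl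

noncomputable def repC (e : Sym2 V) : Sym2 V :=
  pick (Comp (Aux G) e) ⟨e, self_mem_Comp e⟩

lemma repC_reachable (e : Sym2 V) : (Aux G).Reachable (repC G e) e := by
  have := pick_mem (Comp (Aux G) e) ⟨e, self_mem_Comp e⟩
  exact (mem_Comp.1 this).symm

lemma repC_congr {e e' : Sym2 V} (h : (Aux G).Reachable e e') : repC G e = repC G e' := by
  unfold repC
  exact pick_congr (Comp_congr h).symm _ _

open Classical in
noncomputable def EH (e : Sym2 V) : Bool :=
  decide (∃ p : (Aux G).Walk (repC G e) e, Odd p.length)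

lemma EH_ne (hf : ∀ u v, G.Adj u v → f u ≠ f v) {e e' : Sym2 V}
    (h : (Aux G).Adj e e') : EH G e ≠ EH G e' := by
  have hrep : repC G e' = repC G e := (repC_congr G h.reachable).symm
  have hiff : (∃ p : (Aux G).Walk (repC G e) e, Odd p.length) ↔
      ¬ (∃ q : (Aux G).Walk (repC G e') e', Odd q.length) := by
    rw [hrep]
    constructor
    · rintro ⟨p, hp⟩ ⟨q, hq⟩
      have := walk_parity G f hf (p.concat h) q
      rw [SimpleGraph.Walk.length_concat] at this
      rcases hp with ⟨s, hs⟩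
      rcases this.2 hq with ⟨u, hu⟩
      omega
    · intro hq
      obtain ⟨q0⟩ := (repC_reachable G e).trans h.reachable
      have hq0 : ¬ Odd q0.length := fun hc => hq ⟨q0, hc⟩
      refine ⟨q0.concat h.symm, ?_⟩
      rw [SimpleGraph.Walk.length_concat]
      rw [Nat.not_odd_iff_even] at hq0
      exact hq0.add_one
  have hgen : ∀ (A B : Prop) (iA : Decidable A) (iB : Decidable B), (A ↔ ¬ B) →
      (@decide A iA) ≠ (@decide B iB) := by
    intro A B iA iB hAB
    by_cases hA : A <;> by_cases hB : B <;> simp_all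
  unfold EH
  exact hgen _ _ _ _ hiff

lemma alt_countP {β : Type*} : ∀ (L : List β) (p : β → Bool),
    (∀ j (h : 2*j+1 < L.length), p (L[2*j]'(by omega)) ≠ p (L[2*j+1]'h)) →
    2 * L.countP p ≤ L.length + 1
  | [], p, _ => by simp
  | [a], p, _ => by
    rw [List.countP_cons, List.countP_nil]
    split <;> simp
  | a :: b :: L, p, h => by
    have hab : p a ≠ p b := by simpa using h 0 (by simp)
    have ih := alt_countP L p (fun j hj => by
      have hlt : 2*(j+1)+1 < (a :: b :: L).length := by simp only [List.length_cons]; omega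
      have hth := h (j+1) hlt
      simp only [show 2*(j+1) = 2*j+1+1 from by ring, show 2*j+1+1+1 = 2*j+1+1+1 from rfl,
        List.getElem_cons_succ] at hth
      exact hth)
    rw [List.countP_cons, List.countP_cons]
    simp only [List.length_cons]
    by_cases hpa : p a = true
    · have hpb : ¬ (p b = true) := fun hc => hab (hpa.trans hc.symm)
      rw [if_pos hpa, if_neg hpb]
      omega
    · have hpb : p b = true := by
        cases hb : p b
        · exact absurd (by rw [hb]; cases ha : p a; rfl; exact absurd ha hpa) hab
        · rfl
      rw [if_neg hpa, if_pos hpb]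
      omega

lemma balanced (hf : ∀ u v, G.Adj u v → f u ≠ f v) :
    ∃ h : V → V → Bool, (∀ u v, h u v = h v u) ∧
      ∀ (v : V) (b : Bool),
        ((G.neighborFinset v).filter (fun u => h v u = b)).card ≤ (G.degree v + 1) / 2 := by
  classical
  refine ⟨fun u v => EH G s(u,v), fun u v => by dsimp only; rw [Sym2.eq_swap], ?_⟩
  intro v b
  show ((G.neighborFinset v).filter (fun u => EH G s(v,u) = b)).card ≤ (G.degree v + 1) / 2
  have hcount : ((G.neighborFinset v).filter (fun u => EH G s(v,u) = b)).card
      = (nl G v).countP (fun u => decide (EH G s(v,u) = b)) := by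
    rw [Finset.card_def, Finset.filter_val]
    rw [show (G.neighborFinset v).val = ((nl G v) : Multiset V) from (Finset.coe_toList _).symm]
    rw [Multiset.filter_coe, Multiset.coe_card, ← List.countP_eq_length_filter]
  have halt : ∀ j (h : 2*j+1 < (nl G v).length),
      (fun u => decide (EH G s(v,u) = b)) ((nl G v)[2*j]'(by omega))
        ≠ (fun u => decide (EH G s(v,u) = b)) ((nl G v)[2*j+1]'h) := by
    intro j hj
    have hpaired : pairedAt G v ((nl G v)[2*j]'(by omega)) ((nl G v)[2*j+1]'hj) :=
      ⟨j, hj, Or.inl ⟨rfl, rfl⟩⟩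
    have huw := pairedAt_ne G hpaired
    have hne : s(v, (nl G v)[2*j]'(by omega)) ≠ s(v, (nl G v)[2*j+1]'hj) :=
      fun hc => huw (Sym2.congr_right.1 hc)
    have hadj : (Aux G).Adj s(v,(nl G v)[2*j]'(by omega)) s(v,(nl G v)[2*j+1]'hj) :=
      (aux_adj_iff G).2 ⟨hne, v, _, _, hpaired, rfl, rfl⟩
    have hEH := EH_ne G f hf hadj
    dsimp only
    revert hEH
    cases (EH G s(v,(nl G v)[2*j]'(by omega))) <;> cases (EH G s(v,(nl G v)[2*j+1]'hj)) <;>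
      cases b <;> simp
  have hbound := alt_countP (nl G v) (fun u => decide (EH G s(v,u) = b)) halt
  have hdeg : (nl G v).length = G.degree v := by
    unfold nl
    rw [Finset.length_toList]
    rfl
  rw [hcount]
  omega

end Part3


theorem bipartite_qmnsd_six' (G : SimpleGraph V) [DecidableRel G.Adj]
    (hnice : Nice' G) (hbip : G.Colorable 2) :
    (∃ c : V → V → ℕ, ((∀ u v, c u v = c v u) ∧ ∀ u v, G.Adj u v → 1 ≤ c u v ∧ c u v ≤ 6) ∧
      (∀ v α, ((G.neighborFinset v).filter fun u => c v u = α).card ≤ (G.degree v + 1) / 2) ∧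
      (∀ u v, G.Adj u v → (∑ u' ∈ G.neighborFinset u, c u u') ≠ (∑ v' ∈ G.neighborFinset v, c v v'))) := by
  classical
  obtain ⟨col⟩ := hbip
  set f : V → Fin 2 := fun v => col v with hfdef
  have hf : ∀ u v, G.Adj u v → f u ≠ f v := fun u v h => col.valid h
  obtain ⟨t, htcomp, htne⟩ := targets G f hf hnice
  obtain ⟨x, hxsymm, hxsum⟩ := lemA f (ESize G) G le_rfl hf t htcomp
  obtain ⟨h, hhsymm, hhcount⟩ := balanced G f hf
  obtain ⟨c, hcdef⟩ : ∃ c : V → V → ℕ, c = fun u v =>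
      (if x u v = 0 then 3 else (x u v).val) + (if h u v then 3 else 0) := ⟨_, rfl⟩
  have hc1 : ∀ u v, 1 ≤ c u v := by
    intro u v
    rw [hcdef]
    dsimp only
    by_cases hx : x u v = 0
    · rw [if_pos hx]; omega
    · rw [if_neg hx]
      have : (x u v).val ≠ 0 := fun hc => hx ((ZMod.val_eq_zero _).1 hc)
      omega
  have hclow : ∀ u v, (if x u v = 0 then 3 else (x u v).val) ≤ 3 := by
    intro u v
    by_cases hx : x u v = 0
    · rw [if_pos hx]
    · rw [if_neg hx]
      have := ZMod.val_lt (x u v)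
      omega
  have hc6 : ∀ u v, c u v ≤ 6 := by
    intro u v
    rw [hcdef]
    dsimp only
    have := hclow u v
    by_cases hh : h u v = true
    · rw [if_pos hh]; omega
    · rw [if_neg hh]; omega
  have hcsymm : ∀ u v, c u v = c v u := by
    intro u v
    rw [hcdef]
    dsimp only
    rw [hxsymm u v, hhsymm u v]
  -- the mod 3 property of sums
  have hcast : ∀ u v, ((c u v : ℕ) : ZMod 3) = x u v := by
    intro u v
    rw [hcdef]
    dsimp only
    have h30 : ((3:ℕ) : ZMod 3) = 0 := by decide
    have hval : (((x u v).val : ℕ) : ZMod 3) = x u v := by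
      rw [ZMod.natCast_val, ZMod.cast_id]
    by_cases hx : x u v = 0 <;> by_cases hh : h u v = true
    · rw [if_pos hx, if_pos hh, Nat.cast_add, h30, hx]; simp
    · rw [if_pos hx, if_neg hh, Nat.cast_add, h30, hx]; simp
    · rw [if_neg hx, if_pos hh, Nat.cast_add, h30, hval]; simp
    · rw [if_neg hx, if_neg hh, Nat.cast_add, hval]; simp
  have hmod : ∀ v, ((∑ u ∈ G.neighborFinset v, c v u : ℕ) : ZMod 3) = t v := by
    intro v
    rw [Nat.cast_sum]
    have hnbr : G.neighborFinset v = Nbr G v := by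
      ext u
      rw [mem_Nbr, SimpleGraph.mem_neighborFinset]
    rw [hnbr, ← hxsum v]
    exact Finset.sum_congr rfl (fun u _ => hcast v u)
  refine ⟨c, ⟨hcsymm, fun u v _ => ⟨hc1 u v, hc6 u v⟩⟩, ?_, ?_⟩
  · -- quasi majority
    intro v α
    have hsubset : (G.neighborFinset v).filter (fun u => c v u = α)
        ⊆ (G.neighborFinset v).filter (fun u => h v u = (if 4 ≤ α then true else false)) := by
      intro u hu
      rw [Finset.mem_filter] at hu ⊢
      refine ⟨hu.1, ?_⟩
      have hcu := hu.2
      rw [hcdef] at hcu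
      dsimp only at hcu
      have hlow := hclow v u
      cases hh : h v u
      · rw [hh, if_neg (by decide : ¬(false = true))] at hcu
        have hle : α ≤ 3 := by omega
        rw [if_neg (by omega : ¬ 4 ≤ α)]
      · rw [hh, if_pos rfl] at hcu
        have hne0 : 1 ≤ (if x v u = 0 then 3 else (x v u).val) := by
          by_cases hx : x v u = 0
          · rw [if_pos hx]; omega
          · rw [if_neg hx]
            have : (x v u).val ≠ 0 := fun hc => hx ((ZMod.val_eq_zero _).1 hc)
            omega
        have hge : 4 ≤ α := by omega
        rw [if_pos hge]
    calc ((G.neighborFinset v).filter (fun u => c v u = α)).card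
        ≤ ((G.neighborFinset v).filter (fun u => h v u = (if 4 ≤ α then true else false))).card :=
          Finset.card_le_card hsubset
      _ ≤ (G.degree v + 1) / 2 := hhcount v _
  · -- NSD
    intro u v hadj heq
    have h1 := hmod u
    have h2 := hmod v
    rw [heq, h2] at h1
    exact htne u v hadj h1.symm


end QMNSD

theorem bipartite_qmnsd_six (G : SimpleGraph V) [DecidableRel G.Adj]
    (hnice : Nice G) (hbip : G.Colorable 2) :
    ∃ c : V → V → ℕ, EdgeColoring G 6 c ∧ QuasiMajority G c ∧ NSD G c := by
  have hnice' : QMNSD.Nice' G := hnice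
  obtain ⟨c, h1, h2, h3⟩ := QMNSD.bipartite_qmnsd_six' G hnice' hbip
  exact ⟨c, h1, h2, h3⟩
end

section
/- For the complete bipartite graph K_{n,m} with n,m ≥ 1, nice and different from K_{2,2}: if n ≠ m then qmnsdi(K_{n,m}) = 2, and if n = m ≥ 2 then qmnsdi(K_{n,n}) = 3. -/
open Finset

variable {V : Type*} [Fintype V] [DecidableEq V]

section Helpers

/-- generic bipartite coloring from a matrix -/
def bipC (n m : ℕ) (F : ℕ → ℕ → ℕ) : (Fin n ⊕ Fin m) → (Fin n ⊕ Fin m) → ℕ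
  | Sum.inl i, Sum.inr j => F i j
  | Sum.inr j, Sum.inl i => F i j
  | _, _ => 0

lemma bipC_symm (n m : ℕ) (F : ℕ → ℕ → ℕ) (u v : Fin n ⊕ Fin m) :
    bipC n m F u v = bipC n m F v u := by
  cases u <;> cases v <;> rfl

lemma range_filter_lt' (k X : ℕ) : ((range k).filter fun j => j < X) = range (min X k) := by
  ext x; simp; omega

lemma range_filter_not_lt' (k X : ℕ) : ((range k).filter fun j => ¬ j < X) = Ico X k := by
  ext x; simp; omega

lemma sum_ite_lt (k X a b : ℕ) (h : X ≤ k) :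
    (∑ j ∈ range k, if j < X then a else b) = X * a + (k - X) * b := by
  rw [Finset.sum_ite, range_filter_lt', range_filter_not_lt', sum_const, sum_const,
    card_range, Nat.card_Ico, min_eq_left h, smul_eq_mul, smul_eq_mul]

lemma cnt_ite_lt (k X a b α : ℕ) (h : X ≤ k) :
    (((range k).filter fun j => (if j < X then a else b) = α)).card
      = (if a = α then X else 0) + (if b = α then k - X else 0) := by
  rw [card_filter]
  have hpt : ∀ j, (if (if j < X then a else b) = α then (1:ℕ) else 0)
      = if j < X then (if a = α then 1 else 0) else (if b = α then 1 else 0) := by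
    intro j; split_ifs <;> simp_all
  simp only [hpt, sum_ite_lt k X _ _ h]
  split_ifs <;> simp

lemma parity_cnt (a k : ℕ) :
    (((range k).filter fun j => (a + j) % 2 = 1)).card = (k + a % 2) / 2 := by
  induction k with
  | zero => simp
  | succ k ih =>
    rw [range_add_one, filter_insert]
    by_cases h : (a + k) % 2 = 1
    · rw [if_pos h, card_insert_of_notMem (by simp)]
      omega
    · rw [if_neg h]; omega

lemma parity_sum (a k : ℕ) : (∑ j ∈ range k, (1 + (a + j) % 2)) = k + (k + a % 2) / 2 := by
  induction k with
  | zero => simp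
  | succ k ih => rw [sum_range_succ, ih]; omega

lemma sum_peel (N t g0 g1 g2 g3 : ℕ) (ht : 1 ≤ t) (ht2 : t + 2 ≤ N) :
    (∑ i ∈ range N, if i = 0 then g0 else if i = N - 1 then g1 else if i < t then g2 else g3)
      = g0 + g1 + (t - 1) * g2 + (N - 1 - t) * g3 := by
  obtain ⟨k, rfl⟩ : ∃ k, N = k + 1 := ⟨N - 1, by omega⟩
  rw [sum_range_succ]
  simp only [Nat.add_sub_cancel]
  rw [if_neg (by omega)]; rw [if_pos trivial]
  have hc : (∑ i ∈ range k, if i = 0 then g0 else if i = k then g1 else if i < t then g2 else g3)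
      = ∑ i ∈ range k, (if i = 0 then g0 else if i + 1 < t + 1 then g2 else g3) := by
    refine Finset.sum_congr rfl (fun i hi => ?_)
    simp only [mem_range] at hi
    by_cases h0 : i = 0
    · rw [if_pos h0, if_pos h0]
    · rw [if_neg h0, if_neg h0, if_neg (by omega)]
      by_cases h : i < t
      · rw [if_pos h, if_pos (by omega)]
      · rw [if_neg h, if_neg (by omega)]
  rw [hc]
  obtain ⟨k', rfl⟩ : ∃ k', k = k' + 1 := ⟨k - 1, by omega⟩
  rw [Finset.sum_range_succ']
  have h1 : ∀ i, (if i + 1 = 0 then g0 else if i + 1 + 1 < t + 1 then g2 else g3)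
      = (if i < t - 1 then g2 else g3) := by
    intro i; rw [if_neg (by omega)]
    by_cases h : i < t - 1
    · rw [if_pos (by omega), if_pos h]
    · rw [if_neg (by omega), if_neg h]
  simp only [h1, eq_self_iff_true, if_true, sum_ite_lt k' (t-1) g2 g3 (by omega)]
  have h2 : k' - (t - 1) = k' + 1 - t := by omega
  rw [h2]; ring

lemma cnt_peel (N t g0 g1 g2 g3 α : ℕ) (ht : 1 ≤ t) (ht2 : t + 2 ≤ N) :
    (((range N).filter fun i =>
        (if i = 0 then g0 else if i = N - 1 then g1 else if i < t then g2 else g3) = α)).card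
      = (if g0 = α then 1 else 0) + (if g1 = α then 1 else 0)
        + (t - 1) * (if g2 = α then 1 else 0) + (N - 1 - t) * (if g3 = α then 1 else 0) := by
  rw [card_filter]
  have hpt : ∀ i, (if (if i = 0 then g0 else if i = N - 1 then g1 else if i < t then g2 else g3)
        = α then (1:ℕ) else 0)
      = if i = 0 then (if g0 = α then 1 else 0) else if i = N - 1 then (if g1 = α then 1 else 0)
        else if i < t then (if g2 = α then 1 else 0) else (if g3 = α then 1 else 0) := by
    intro i; split_ifs <;> simp_all
  simp only [hpt]
  exact sum_peel N t _ _ _ _ ht ht2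

lemma finCard (k : ℕ) (p : ℕ → Prop) [DecidablePred p] :
    (univ.filter fun j : Fin k => p j.val).card = ((range k).filter p).card := by
  rw [card_filter, card_filter]
  exact Fin.sum_univ_eq_sum_range (fun j => if p j then 1 else 0) k

section Graph

variable {n m : ℕ} [inst : DecidableRel (completeBipartiteGraph (Fin n) (Fin m)).Adj]

lemma nbrL (i : Fin n) : (completeBipartiteGraph (Fin n) (Fin m)).neighborFinset (Sum.inl i)
    = univ.map ⟨Sum.inr, Sum.inr_injective⟩ := by
  ext u
  cases u <;> simp [SimpleGraph.mem_neighborFinset]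

lemma nbrR (j : Fin m) : (completeBipartiteGraph (Fin n) (Fin m)).neighborFinset (Sum.inr j)
    = univ.map ⟨Sum.inl, Sum.inl_injective⟩ := by
  ext u
  cases u <;> simp [SimpleGraph.mem_neighborFinset]

lemma degL (i : Fin n) : (completeBipartiteGraph (Fin n) (Fin m)).degree (Sum.inl i) = m := by
  rw [← SimpleGraph.card_neighborFinset_eq_degree, nbrL, card_map, card_univ, Fintype.card_fin]

lemma degR (j : Fin m) : (completeBipartiteGraph (Fin n) (Fin m)).degree (Sum.inr j) = n := by
  rw [← SimpleGraph.card_neighborFinset_eq_degree, nbrR, card_map, card_univ, Fintype.card_fin]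

end Graph
end Helpers

section Main

variable {n m : ℕ} [inst : DecidableRel (completeBipartiteGraph (Fin n) (Fin m)).Adj]

lemma adjLR (i : Fin n) (j : Fin m) :
    (completeBipartiteGraph (Fin n) (Fin m)).Adj (Sum.inl i) (Sum.inr j) := by simp

lemma sigmaL (c : (Fin n ⊕ Fin m) → (Fin n ⊕ Fin m) → ℕ) (i : Fin n) :
    sigmaSum (completeBipartiteGraph (Fin n) (Fin m)) c (Sum.inl i)
      = ∑ j : Fin m, c (Sum.inl i) (Sum.inr j) := by
  rw [sigmaSum, nbrL, Finset.sum_map]; rfl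

lemma sigmaR (c : (Fin n ⊕ Fin m) → (Fin n ⊕ Fin m) → ℕ) (j : Fin m) :
    sigmaSum (completeBipartiteGraph (Fin n) (Fin m)) c (Sum.inr j)
      = ∑ i : Fin n, c (Sum.inr j) (Sum.inl i) := by
  rw [sigmaSum, nbrR, Finset.sum_map]; rfl

lemma ccL (c : (Fin n ⊕ Fin m) → (Fin n ⊕ Fin m) → ℕ) (i : Fin n) (α : ℕ) :
    colorCount (completeBipartiteGraph (Fin n) (Fin m)) c (Sum.inl i) α
      = (univ.filter fun j : Fin m => c (Sum.inl i) (Sum.inr j) = α).card := by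
  rw [colorCount, nbrL, Finset.filter_map, card_map]; rfl

lemma ccR (c : (Fin n ⊕ Fin m) → (Fin n ⊕ Fin m) → ℕ) (j : Fin m) (α : ℕ) :
    colorCount (completeBipartiteGraph (Fin n) (Fin m)) c (Sum.inr j) α
      = (univ.filter fun i : Fin n => c (Sum.inr j) (Sum.inl i) = α).card := by
  rw [colorCount, nbrR, Finset.filter_map, card_map]; rfl

lemma sigmaL_bip (F : ℕ → ℕ → ℕ) (i : Fin n) :
    sigmaSum (completeBipartiteGraph (Fin n) (Fin m)) (bipC n m F) (Sum.inl i)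
      = ∑ j ∈ range m, F i.val j := by
  rw [sigmaL]
  exact Fin.sum_univ_eq_sum_range (fun j => F i.val j) m

lemma sigmaR_bip (F : ℕ → ℕ → ℕ) (j : Fin m) :
    sigmaSum (completeBipartiteGraph (Fin n) (Fin m)) (bipC n m F) (Sum.inr j)
      = ∑ i ∈ range n, F i j.val := by
  rw [sigmaR]
  exact Fin.sum_univ_eq_sum_range (fun i => F i j.val) n

lemma ccL_bip (F : ℕ → ℕ → ℕ) (i : Fin n) (α : ℕ) :
    colorCount (completeBipartiteGraph (Fin n) (Fin m)) (bipC n m F) (Sum.inl i) α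
      = ((range m).filter fun j => F i.val j = α).card := by
  rw [ccL]
  exact finCard m (fun j => F i.val j = α)

lemma ccR_bip (F : ℕ → ℕ → ℕ) (j : Fin m) (α : ℕ) :
    colorCount (completeBipartiteGraph (Fin n) (Fin m)) (bipC n m F) (Sum.inr j) α
      = ((range n).filter fun i => F i j.val = α).card := by
  rw [ccR]
  exact finCard n (fun i => F i j.val = α)

/-- every coloring needs at least 2 colors -/
lemma lb_two (hn : 1 ≤ n) (hm : 1 ≤ m) (h2 : 2 ≤ n ∨ 2 ≤ m) (k : ℕ)
    (c : (Fin n ⊕ Fin m) → (Fin n ⊕ Fin m) → ℕ)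
    (hE : EdgeColoring (completeBipartiteGraph (Fin n) (Fin m)) k c)
    (hQ : QuasiMajority (completeBipartiteGraph (Fin n) (Fin m)) c) : 2 ≤ k := by
  by_contra hk
  push_neg at hk
  have hbd := hE.2 _ _ (adjLR ⟨0, hn⟩ ⟨0, hm⟩)
  have hk1 : k = 1 := by omega
  subst hk1
  rcases h2 with h2 | h2
  · have hq := hQ (Sum.inr (⟨0, hm⟩ : Fin m)) 1
    rw [ccR, degR] at hq
    have hall : (univ.filter fun i : Fin n => c (Sum.inr ⟨0, hm⟩) (Sum.inl i) = 1) = univ := by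
      refine filter_true_of_mem fun i _ => ?_
      have := hE.2 _ _ ((adjLR i ⟨0, hm⟩).symm)
      omega
    rw [hall, card_univ, Fintype.card_fin] at hq
    omega
  · have hq := hQ (Sum.inl (⟨0, hn⟩ : Fin n)) 1
    rw [ccL, degL] at hq
    have hall : (univ.filter fun j : Fin m => c (Sum.inl ⟨0, hn⟩) (Sum.inr j) = 1) = univ := by
      refine filter_true_of_mem fun j _ => ?_
      have := hE.2 _ _ (adjLR ⟨0, hn⟩ j)
      omega
    rw [hall, card_univ, Fintype.card_fin] at hq
    omega

lemma cnt2_le (a k α : ℕ) :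
    (((range k).filter fun x => 1 + (a + x) % 2 = α)).card ≤ (k + 1) / 2 := by
  by_cases h1 : α = 1
  · subst h1
    have heq : ((range k).filter fun x => 1 + (a + x) % 2 = 1)
        = ((range k).filter fun x => (a + 1 + x) % 2 = 1) := by
      ext x; simp; omega
    rw [heq, parity_cnt]; omega
  · by_cases h2 : α = 2
    · subst h2
      have heq : ((range k).filter fun x => 1 + (a + x) % 2 = 2)
          = ((range k).filter fun x => (a + x) % 2 = 1) := by
        ext x; simp; omega
      rw [heq, parity_cnt]; omega
    · have heq : ((range k).filter fun x => 1 + (a + x) % 2 = α) = ∅ := by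
        ext x; simp; omega
      rw [heq]; simp

lemma parity_sum' (a k : ℕ) : (∑ x ∈ range k, (1 + (x + a) % 2)) = k + (k + a % 2) / 2 := by
  rw [Finset.sum_congr rfl fun x _ => by rw [Nat.add_comm x a]]
  exact parity_sum a k

/-- the three-color matrix for `K_{n,n}` -/
def F3 (N t T : ℕ) : ℕ → ℕ → ℕ := fun i j =>
  if i = 0 then (if j < t then 2 else 1)
  else if i = N - 1 then (if j < T then 3 else 2)
  else if i < t then (if j < T then 1 else 2)
  else (if j < t then 2 else 3)

lemma F3_rowsum (N t T i : ℕ) (hN : N = t + T) (ht : 1 ≤ t) (htT : t ≤ T) (hT : T ≤ t + 1)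
    (hT2 : 2 ≤ T) :
    (∑ j ∈ range N, F3 N t T i j) = 2*t + T ∨ (∑ j ∈ range N, F3 N t T i j) = 2*t + 3*T := by
  by_cases h0 : i = 0
  · left
    rw [Finset.sum_congr rfl fun j _ =>
      show F3 N t T i j = (if j < t then 2 else 1) from by simp [F3, h0],
      sum_ite_lt N t 2 1 (by omega)]
    omega
  · by_cases h1 : i = N - 1
    · right
      rw [Finset.sum_congr rfl fun j _ =>
        show F3 N t T i j = (if j < T then 3 else 2) from by
          have hne : ¬ (N - 1 = 0) := by omega
          simp [F3, h1, hne],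
        sum_ite_lt N T 3 2 (by omega)]
      omega
    · by_cases h2 : i < t
      · left
        rw [Finset.sum_congr rfl fun j _ =>
          show F3 N t T i j = (if j < T then 1 else 2) from by simp [F3, h0, h1, h2],
          sum_ite_lt N T 1 2 (by omega)]
        omega
      · right
        rw [Finset.sum_congr rfl fun j _ =>
          show F3 N t T i j = (if j < t then 2 else 3) from by simp [F3, h0, h1, h2],
          sum_ite_lt N t 2 3 (by omega)]
        omega

lemma F3_colsum (N t T j : ℕ) (ht : 1 ≤ t) (ht2 : t + 2 ≤ N) :
    (∑ i ∈ range N, F3 N t T i j)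
      = (if j < t then 2 else 1) + (if j < T then 3 else 2)
        + (t-1) * (if j < T then 1 else 2) + (N-1-t) * (if j < t then 2 else 3) := by
  simp only [F3]
  exact sum_peel N t _ _ _ _ ht ht2

lemma cnt_row_le (k X a b α : ℕ) (hX : X ≤ k) (h1 : X ≤ (k+1)/2) (h2 : k - X ≤ (k+1)/2)
    (hab : a ≠ b) :
    (((range k).filter fun j => (if j < X then a else b) = α)).card ≤ (k+1)/2 := by
  rw [cnt_ite_lt k X a b α hX]
  split_ifs <;> omega


lemma lb_three {n : ℕ} [inst : DecidableRel (completeBipartiteGraph (Fin n) (Fin n)).Adj]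
    (hn : 1 ≤ n) (c : (Fin n ⊕ Fin n) → (Fin n ⊕ Fin n) → ℕ)
    (hE : EdgeColoring (completeBipartiteGraph (Fin n) (Fin n)) 2 c)
    (hQ : QuasiMajority (completeBipartiteGraph (Fin n) (Fin n)) c)
    (hN : NSD (completeBipartiteGraph (Fin n) (Fin n)) c) : False := by
  have hcube : ∀ (u v : Fin n ⊕ Fin n), (completeBipartiteGraph (Fin n) (Fin n)).Adj u v →
      c u v = 1 ∨ c u v = 2 := fun u v h => by
    have := hE.2 u v h; omega
  have hpartL : ∀ i : Fin n, colorCount (completeBipartiteGraph (Fin n) (Fin n)) c (Sum.inl i) 1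
      + colorCount (completeBipartiteGraph (Fin n) (Fin n)) c (Sum.inl i) 2 = n := by
    intro i
    rw [ccL, ccL, card_filter, card_filter, ← Finset.sum_add_distrib]
    rw [Finset.sum_congr rfl (fun j _ =>
      show ((if c (Sum.inl i) (Sum.inr j) = 1 then (1:ℕ) else 0)
        + (if c (Sum.inl i) (Sum.inr j) = 2 then 1 else 0)) = 1 from by
      rcases hcube _ _ (adjLR i j) with h | h <;> simp [h])]
    rw [Finset.sum_const, card_univ, Fintype.card_fin, smul_eq_mul, mul_one]
  have hpartR : ∀ j : Fin n, colorCount (completeBipartiteGraph (Fin n) (Fin n)) c (Sum.inr j) 1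
      + colorCount (completeBipartiteGraph (Fin n) (Fin n)) c (Sum.inr j) 2 = n := by
    intro j
    rw [ccR, ccR, card_filter, card_filter, ← Finset.sum_add_distrib]
    rw [Finset.sum_congr rfl (fun i _ =>
      show ((if c (Sum.inr j) (Sum.inl i) = 1 then (1:ℕ) else 0)
        + (if c (Sum.inr j) (Sum.inl i) = 2 then 1 else 0)) = 1 from by
      rcases hcube _ _ (adjLR i j).symm with h | h <;> simp [h])]
    rw [Finset.sum_const, card_univ, Fintype.card_fin, smul_eq_mul, mul_one]
  have hsigL : ∀ i : Fin n, sigmaSum (completeBipartiteGraph (Fin n) (Fin n)) c (Sum.inl i)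
      = n + colorCount (completeBipartiteGraph (Fin n) (Fin n)) c (Sum.inl i) 2 := by
    intro i
    rw [sigmaL, ccL, card_filter]
    rw [Finset.sum_congr rfl (fun j _ =>
      show c (Sum.inl i) (Sum.inr j) = 1 + (if c (Sum.inl i) (Sum.inr j) = 2 then 1 else 0) from by
      rcases hcube _ _ (adjLR i j) with h | h <;> simp [h])]
    rw [Finset.sum_add_distrib, Finset.sum_const, card_univ, Fintype.card_fin,
      smul_eq_mul, mul_one]
  have hsigR : ∀ j : Fin n, sigmaSum (completeBipartiteGraph (Fin n) (Fin n)) c (Sum.inr j)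
      = n + colorCount (completeBipartiteGraph (Fin n) (Fin n)) c (Sum.inr j) 2 := by
    intro j
    rw [sigmaR, ccR, card_filter]
    rw [Finset.sum_congr rfl (fun i _ =>
      show c (Sum.inr j) (Sum.inl i) = 1 + (if c (Sum.inr j) (Sum.inl i) = 2 then 1 else 0) from by
      rcases hcube _ _ (adjLR i j).symm with h | h <;> simp [h])]
    rw [Finset.sum_add_distrib, Finset.sum_const, card_univ, Fintype.card_fin,
      smul_eq_mul, mul_one]
  have hQL : ∀ (i : Fin n) α, colorCount (completeBipartiteGraph (Fin n) (Fin n)) c (Sum.inl i) α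
      ≤ (n+1)/2 := fun i α => by have := hQ (Sum.inl i) α; rwa [degL] at this
  have hQR : ∀ (j : Fin n) α, colorCount (completeBipartiteGraph (Fin n) (Fin n)) c (Sum.inr j) α
      ≤ (n+1)/2 := fun j α => by have := hQ (Sum.inr j) α; rwa [degR] at this
  have hneLR : ∀ i j : Fin n, colorCount (completeBipartiteGraph (Fin n) (Fin n)) c (Sum.inl i) 2
      ≠ colorCount (completeBipartiteGraph (Fin n) (Fin n)) c (Sum.inr j) 2 := by
    intro i j heq
    exact hN _ _ (adjLR i j) (by rw [hsigL, hsigR, heq])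
  let z : Fin n := ⟨0, hn⟩
  have hLconst : ∀ i : Fin n, colorCount (completeBipartiteGraph (Fin n) (Fin n)) c (Sum.inl i) 2
      = colorCount (completeBipartiteGraph (Fin n) (Fin n)) c (Sum.inl z) 2 := by
    intro i
    have b1 := hQL i 1; have b2 := hQL i 2; have b3 := hQL z 1; have b4 := hQL z 2
    have b5 := hQR z 1; have b6 := hQR z 2
    have p1 := hpartL i; have p2 := hpartL z; have p3 := hpartR z
    have d1 := hneLR i z; have d2 := hneLR z z
    omega
  have hRconst : ∀ j : Fin n, colorCount (completeBipartiteGraph (Fin n) (Fin n)) c (Sum.inr j) 2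
      = colorCount (completeBipartiteGraph (Fin n) (Fin n)) c (Sum.inr z) 2 := by
    intro j
    have b1 := hQR j 1; have b2 := hQR j 2; have b3 := hQR z 1; have b4 := hQR z 2
    have b5 := hQL z 1; have b6 := hQL z 2
    have p1 := hpartR j; have p2 := hpartR z; have p3 := hpartL z
    have d1 := hneLR z j; have d2 := hneLR z z
    omega
  have hdc : (∑ i : Fin n, colorCount (completeBipartiteGraph (Fin n) (Fin n)) c (Sum.inl i) 2)
      = ∑ j : Fin n, colorCount (completeBipartiteGraph (Fin n) (Fin n)) c (Sum.inr j) 2 := by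
    simp only [ccL, ccR, card_filter]
    rw [Finset.sum_comm]
    exact Finset.sum_congr rfl fun j _ => Finset.sum_congr rfl fun i _ => by rw [hE.1]
  rw [Finset.sum_congr rfl (fun i _ => hLconst i), Finset.sum_congr rfl (fun j _ => hRconst j),
    Finset.sum_const, Finset.sum_const, card_univ, Fintype.card_fin, smul_eq_mul,
    smul_eq_mul] at hdc
  exact hneLR z z (Nat.eq_of_mul_eq_mul_left hn hdc)

end Main

theorem qmnsdi_complete_bipartite (n m : ℕ) (hn : 1 ≤ n) (hm : 1 ≤ m)
    (hnice : ¬ (n = 1 ∧ m = 1)) (hK22 : ¬ (n = 2 ∧ m = 2))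
    [DecidableRel (completeBipartiteGraph (Fin n) (Fin m)).Adj] :
    (n ≠ m → IsLeast {k : ℕ | ∃ c : (Fin n ⊕ Fin m) → (Fin n ⊕ Fin m) → ℕ,
      EdgeColoring (completeBipartiteGraph (Fin n) (Fin m)) k c ∧
      QuasiMajority (completeBipartiteGraph (Fin n) (Fin m)) c ∧
      NSD (completeBipartiteGraph (Fin n) (Fin m)) c} 2) ∧
    (n = m → IsLeast {k : ℕ | ∃ c : (Fin n ⊕ Fin m) → (Fin n ⊕ Fin m) → ℕ,
      EdgeColoring (completeBipartiteGraph (Fin n) (Fin m)) k c ∧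
      QuasiMajority (completeBipartiteGraph (Fin n) (Fin m)) c ∧
      NSD (completeBipartiteGraph (Fin n) (Fin m)) c} 3) := by
  constructor
  · intro hnm
    constructor
    · refine ⟨bipC n m (fun i j => 1 + (i + j) % 2), ⟨bipC_symm _ _ _, ?_⟩, ?_, ?_⟩
      · intro u v h
        cases u with
        | inl i =>
          cases v with
          | inl i' => simp at h
          | inr j =>
            show 1 ≤ 1 + (i.val + j.val) % 2 ∧ 1 + (i.val + j.val) % 2 ≤ 2
            omega
        | inr j =>
          cases v with
          | inl i =>
            show 1 ≤ 1 + (i.val + j.val) % 2 ∧ 1 + (i.val + j.val) % 2 ≤ 2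
            omega
          | inr j' => simp at h
      · intro v α
        cases v with
        | inl i =>
          rw [ccL_bip, degL]
          exact cnt2_le i.val m α
        | inr j =>
          rw [ccR_bip, degR]
          have heq : ((range n).filter fun i => 1 + (i + j.val) % 2 = α)
              = ((range n).filter fun i => 1 + (j.val + i) % 2 = α) := by
            ext x; simp; omega
          rw [heq]
          exact cnt2_le j.val n α
      · intro u v h
        cases u with
        | inl i =>
          cases v with
          | inl i' => simp at h
          | inr j =>
            rw [sigmaL_bip, sigmaR_bip, parity_sum, parity_sum']
            omega
        | inr j =>
          cases v with
          | inl i =>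
            rw [sigmaR_bip, sigmaL_bip, parity_sum, parity_sum']
            omega
          | inr j' => simp at h
    · rintro k ⟨c, hE, hQ, hNc⟩
      exact lb_two hn hm (by omega) k c hE hQ
  · intro heq
    subst heq
    have hn3 : 3 ≤ n := by omega
    have ht1 : 1 ≤ n / 2 := by omega
    have hnTt : n = n / 2 + (n - n / 2) := by omega
    have htT : n / 2 ≤ n - n / 2 := by omega
    have hTt1 : n - n / 2 ≤ n / 2 + 1 := by omega
    have hT2 : 2 ≤ n - n / 2 := by omega
    constructor
    · refine ⟨bipC n n (F3 n (n / 2) (n - n / 2)), ⟨bipC_symm _ _ _, ?_⟩, ?_, ?_⟩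
      · intro u v h
        have hval : ∀ i j : ℕ, 1 ≤ F3 n (n / 2) (n - n / 2) i j
            ∧ F3 n (n / 2) (n - n / 2) i j ≤ 3 := by
          intro i j; unfold F3; split_ifs <;> omega
        cases u with
        | inl i =>
          cases v with
          | inl i' => simp at h
          | inr j => exact hval i.val j.val
        | inr j =>
          cases v with
          | inl i => exact hval i.val j.val
          | inr j' => simp at h
      · intro v α
        cases v with
        | inl i =>
          rw [ccL_bip, degL]
          by_cases h0 : i.val = 0
          · have heq : ((range n).filter fun j => F3 n (n / 2) (n - n / 2) i.val j = α)
                = ((range n).filter fun j => (if j < n / 2 then 2 else 1) = α) :=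
              filter_congr fun j _ => by simp [F3, h0]
            rw [heq]
            exact cnt_row_le n (n / 2) 2 1 α (by omega) (by omega) (by omega) (by omega)
          · by_cases h1 : i.val = n - 1
            · have heq : ((range n).filter fun j => F3 n (n / 2) (n - n / 2) i.val j = α)
                  = ((range n).filter fun j => (if j < n - n / 2 then 3 else 2) = α) :=
                filter_congr fun j _ => by
                  have hne : ¬ (n - 1 = 0) := by omega
                  simp [F3, h1, hne]
              rw [heq]
              exact cnt_row_le n (n - n / 2) 3 2 α (by omega) (by omega) (by omega) (by omega)
            · by_cases h2 : i.val < n / 2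
              · have heq : ((range n).filter fun j => F3 n (n / 2) (n - n / 2) i.val j = α)
                    = ((range n).filter fun j => (if j < n - n / 2 then 1 else 2) = α) :=
                  filter_congr fun j _ => by simp [F3, h0, h1, h2]
                rw [heq]
                exact cnt_row_le n (n - n / 2) 1 2 α (by omega) (by omega) (by omega) (by omega)
              · have heq : ((range n).filter fun j => F3 n (n / 2) (n - n / 2) i.val j = α)
                    = ((range n).filter fun j => (if j < n / 2 then 2 else 3) = α) :=
                  filter_congr fun j _ => by simp [F3, h0, h1, h2]
                rw [heq]
                exact cnt_row_le n (n / 2) 2 3 α (by omega) (by omega) (by omega) (by omega)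
        | inr j =>
          rw [ccR_bip, degR]
          simp only [F3]
          erw [cnt_peel n (n / 2) _ _ _ _ α ht1 (by omega)]
          split_ifs <;> omega
      · have key : ∀ i j : Fin n,
            sigmaSum (completeBipartiteGraph (Fin n) (Fin n))
              (bipC n n (F3 n (n / 2) (n - n / 2))) (Sum.inl i)
            ≠ sigmaSum (completeBipartiteGraph (Fin n) (Fin n))
              (bipC n n (F3 n (n / 2) (n - n / 2))) (Sum.inr j) := by
          intro i j
          rw [sigmaL_bip, sigmaR_bip]
          have hr := F3_rowsum n (n / 2) (n - n / 2) i.val hnTt ht1 htT hTt1 hT2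
          have hc := F3_colsum n (n / 2) (n - n / 2) j.val ht1 (by omega)
          rw [hc]
          rcases hr with hr | hr <;> rw [hr] <;> split_ifs <;> omega
        intro u v h
        cases u with
        | inl i =>
          cases v with
          | inl i' => simp at h
          | inr j => exact key i j
        | inr j =>
          cases v with
          | inl i => exact (key i j).symm
          | inr j' => simp at h
    · rintro k ⟨c, hE, hQ, hNc⟩
      by_contra hlt
      push_neg at hlt
      have h2 : 2 ≤ k := lb_two hn hn (by omega) k c hE hQ
      have hk2 : k = 2 := by omega
      subst hk2
      exact absurd (lb_three hn c hE hQ hNc) (by simp)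
end
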